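/- arXiv:2306.00384 — 8 statements merged into one kernel-verified Lean document; each statement's English description precedes it below -/
import Mathlib

section
/- Let α ≥ 1 be a real number and let F be a finite family of r-element sets with |F| > α^r. Then F contains a flower with threshold α, i.e., a subfamily S with core Y = ⋂_{S∈S} S such that the family of petals {S \ Y : S ∈ S} has no transversal of size at most α (every set of at most α vertices misses some petal). -/
open Finset

def FamIntersecting (F : Finset (Finset ℕ)) : Prop :=
  ∀ A ∈ F, ∀ B ∈ F, (A ∩ B).Nonempty

def maxDeg (F : Finset (Finset ℕ)) : ℕ :=
  (F.biUnion id).sup fun x => (F.filter fun E => x ∈ E).card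

def IsFlower (α : ℝ) (S : Finset (Finset ℕ)) (Y : Finset ℕ) : Prop :=
  S.Nonempty ∧ (∀ A ∈ S, Y ⊆ A) ∧ (∀ x, (∀ A ∈ S, x ∈ A) → x ∈ Y) ∧
    ∀ T : Finset ℕ, (T.card : ℝ) ≤ α → ∃ A ∈ S, (A \ Y) ∩ T = ∅

def IsFlowerCore (α : ℝ) (F : Finset (Finset ℕ)) (Y : Finset ℕ) : Prop :=
  Y.Nonempty ∧ ∃ S ⊆ F, IsFlower α S Y

open scoped Classical in
noncomputable def flowerBase (α : ℝ) (F : Finset (Finset ℕ)) : Finset (Finset ℕ) :=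
  (F.biUnion Finset.powerset).filter fun B =>
    (IsFlowerCore α F B ∨ B ∈ F) ∧
    ∀ B', (IsFlowerCore α F B' ∨ B' ∈ F) → B' ⊆ B → B' = B

noncomputable def tau (F : Finset (Finset ℕ)) : ℕ :=
  sInf {k | ∃ T : Finset ℕ, T.card = k ∧ ∀ A ∈ F, (A ∩ T).Nonempty}

theorem stmt2 (α : ℝ) (hα : 1 ≤ α) (r : ℕ) (F : Finset (Finset ℕ))
    (hr : ∀ A ∈ F, A.card = r) (hcard : α ^ r < (F.card : ℝ)) :
    ∃ S ⊆ F, ∃ Y : Finset ℕ, IsFlower α S Y := by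
  classical
  induction r generalizing F with
  | zero =>
    exfalso
    have hsub : F ⊆ {∅} := fun A hA => by
      simp [Finset.card_eq_zero.mp (hr A hA)]
    have h1 : F.card ≤ 1 := by
      simpa using Finset.card_le_card hsub
    have : (F.card : ℝ) ≤ 1 := by exact_mod_cast h1
    simp at hcard; linarith
  | succ r ih =>
    have hαpos : (0:ℝ) < α := lt_of_lt_of_le one_pos hα
    have hpowpos : (0:ℝ) < α ^ r := pow_pos hαpos r
    have hF : F.Nonempty := by
      rcases F.eq_empty_or_nonempty with h | h
      · exfalso; subst h; simp at hcard
        nlinarith [pow_pos hαpos (r+1)]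
      · exact h
    obtain ⟨A₀, hA₀⟩ := hF
    set Y : Finset ℕ := A₀.filter (fun x => ∀ A ∈ F, x ∈ A) with hYdef
    by_cases hfl : ∀ T : Finset ℕ, (T.card : ℝ) ≤ α → ∃ A ∈ F, (A \ Y) ∩ T = ∅
    · refine ⟨F, subset_rfl, Y, ⟨A₀, hA₀⟩, ?_, ?_, hfl⟩
      · intro A hA x hx
        exact (Finset.mem_filter.mp hx).2 A hA
      · intro x hx
        exact Finset.mem_filter.mpr ⟨hx A₀ hA₀, hx⟩
    · push_neg at hfl
      obtain ⟨T, hTcard, hT⟩ := hfl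
      -- every A ∈ F meets T
      have hmeet : ∀ A ∈ F, ∃ x ∈ T, x ∈ A := by
        intro A hA
        have := hT A hA
        obtain ⟨x, hx⟩ := this
        simp only [Finset.mem_inter, Finset.mem_sdiff] at hx
        exact ⟨x, hx.2, hx.1.1⟩
      -- pigeonhole
      have hsub : F ⊆ T.biUnion (fun x => F.filter (fun A => x ∈ A)) := by
        intro A hA
        obtain ⟨x, hxT, hxA⟩ := hmeet A hA
        exact Finset.mem_biUnion.mpr ⟨x, hxT, Finset.mem_filter.mpr ⟨hA, hxA⟩⟩
      have hcardle : F.card ≤ ∑ x ∈ T, (F.filter (fun A => x ∈ A)).card :=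
        le_trans (Finset.card_le_card hsub) (Finset.card_biUnion_le)
      have hx : ∃ x ∈ T, α ^ r < ((F.filter (fun A => x ∈ A)).card : ℝ) := by
        by_contra hcon
        push_neg at hcon
        have hsum : ((∑ x ∈ T, (F.filter (fun A => x ∈ A)).card : ℕ) : ℝ)
            ≤ (T.card : ℝ) * α ^ r := by
          push_cast
          calc (∑ x ∈ T, ((F.filter (fun A => x ∈ A)).card : ℝ))
              ≤ ∑ _x ∈ T, α ^ r := Finset.sum_le_sum (fun x hx => hcon x hx)
            _ = (T.card : ℝ) * α ^ r := by rw [Finset.sum_const, nsmul_eq_mul]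
        have h1 : ((F.card : ℕ) : ℝ) ≤ (T.card : ℝ) * α ^ r := by
          refine le_trans ?_ hsum
          exact_mod_cast hcardle
        have h2 : (T.card : ℝ) * α ^ r ≤ α * α ^ r :=
          mul_le_mul_of_nonneg_right hTcard (le_of_lt hpowpos)
        have : (F.card : ℝ) ≤ α ^ (r+1) := by
          rw [pow_succ']
          exact le_trans h1 h2
        linarith
      obtain ⟨x, _hxT, hxbig⟩ := hx
      set Fx := F.filter (fun A => x ∈ A) with hFxdef
      set F' := Fx.image (fun A => A.erase x) with hF'def
      have hinj : Set.InjOn (fun A : Finset ℕ => A.erase x) ↑Fx := by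
        intro A hA B hB hAB
        have hxA : x ∈ A := (Finset.mem_filter.mp hA).2
        have hxB : x ∈ B := (Finset.mem_filter.mp hB).2
        have : insert x (A.erase x) = insert x (B.erase x) := by simp only at hAB; rw [hAB]
        rwa [Finset.insert_erase hxA, Finset.insert_erase hxB] at this
      have hF'card : F'.card = Fx.card := Finset.card_image_of_injOn hinj
      have hF'r : ∀ B ∈ F', B.card = r := by
        intro B hB
        obtain ⟨A, hA, rfl⟩ := Finset.mem_image.mp hB
        have hxA : x ∈ A := (Finset.mem_filter.mp hA).2
        have : A.card = r + 1 := hr A (Finset.mem_filter.mp hA).1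
        rw [Finset.card_erase_of_mem hxA, this]; omega
      have hF'big : α ^ r < (F'.card : ℝ) := by rw [hF'card]; exact hxbig
      obtain ⟨S', hS'F', Y', hS'ne, hS'sub, hS'core, hS'pet⟩ := ih F' hF'r hF'big
      -- lift
      refine ⟨S'.image (insert x), ?_, insert x Y', ?_, ?_, ?_, ?_⟩
      · intro A hA
        obtain ⟨B, hB, rfl⟩ := Finset.mem_image.mp hA
        obtain ⟨C, hC, rfl⟩ := Finset.mem_image.mp (hS'F' hB)
        have hxC : x ∈ C := (Finset.mem_filter.mp hC).2
        rw [Finset.insert_erase hxC]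
        exact (Finset.mem_filter.mp hC).1
      · obtain ⟨B, hB⟩ := hS'ne
        exact ⟨insert x B, Finset.mem_image_of_mem _ hB⟩
      · intro A hA
        obtain ⟨B, hB, rfl⟩ := Finset.mem_image.mp hA
        exact Finset.insert_subset_insert x (hS'sub B hB)
      · intro y hy
        by_cases hyx : y = x
        · subst hyx; exact Finset.mem_insert_self _ _
        · refine Finset.mem_insert_of_mem (hS'core y ?_)
          intro B hB
          have := hy (insert x B) (Finset.mem_image_of_mem _ hB)
          rcases Finset.mem_insert.mp this with h | h
          · exact absurd h hyx
          · exact h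
      · intro T' hT'
        obtain ⟨B, hB, hBpet⟩ := hS'pet T' hT'
        refine ⟨insert x B, Finset.mem_image_of_mem _ hB, ?_⟩
        have hxB : x ∉ B := by
          obtain ⟨C, hC, rfl⟩ := Finset.mem_image.mp (hS'F' hB)
          exact Finset.notMem_erase x C
        have : insert x B \ insert x Y' = B \ Y' := by
          ext y
          simp only [Finset.mem_sdiff, Finset.mem_insert]
          constructor
          · rintro ⟨h1, h2⟩
            push_neg at h2
            rcases h1 with h | h
            · exact absurd h h2.1
            · exact ⟨h, fun hy => h2.2 hy⟩
          · rintro ⟨h1, h2⟩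
            refine ⟨Or.inr h1, ?_⟩
            push_neg
            exact ⟨fun h => hxB (h ▸ h1), h2⟩
        rw [this]
        exact hBpet
end

section
/- Let F ⊆ 2^[n] be an intersecting family of r-sets and let BF be its flower base with threshold α ≥ r. Then BF is intersecting, and moreover every member B of BF is a transversal of F (every edge of F intersects B). -/
open Finset

theorem stmt4 (n r : ℕ) (α : ℝ) (hα : (r : ℝ) ≤ α) (F : Finset (Finset ℕ))
    (hF : ∀ E ∈ F, E ⊆ Finset.range n ∧ E.card = r) (hint : FamIntersecting F) :
    FamIntersecting (flowerBase α F) ∧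
    ∀ B ∈ flowerBase α F, ∀ E ∈ F, (E ∩ B).Nonempty := by
  classical
  have trans : ∀ B, (IsFlowerCore α F B ∨ B ∈ F) → ∀ E ∈ F, (E ∩ B).Nonempty := by
    rintro B (⟨hBne, S, hSF, hSne, hYsub, hxY, hfl⟩ | hBF) E hE
    · obtain ⟨A, hA, hAE⟩ := hfl E (by rw [(hF E hE).2]; exact hα)
      obtain ⟨x, hx⟩ := hint A (hSF hA) E hE
      rw [mem_inter] at hx
      refine ⟨x, mem_inter.2 ⟨hx.2, ?_⟩⟩
      by_contra hxB
      have hmem : x ∈ (A \ B) ∩ E := mem_inter.2 ⟨mem_sdiff.2 ⟨hx.1, hxB⟩, hx.2⟩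
      rw [hAE] at hmem
      exact absurd hmem (notMem_empty x)
    · exact hint E hE B hBF
  constructor
  · intro B1 h1 B2 h2
    simp only [flowerBase, mem_filter, mem_biUnion, mem_powerset] at h1 h2
    obtain ⟨⟨E1, hE1, hB1E1⟩, h1core, _⟩ := h1
    obtain ⟨⟨E2, hE2, hB2E2⟩, h2core, _⟩ := h2
    have hcard : (B1.card : ℝ) ≤ α := by
      have hle := card_le_card hB1E1
      have hr := (hF E1 hE1).2
      calc (B1.card : ℝ) ≤ E1.card := by exact_mod_cast hle
        _ = r := by rw [hr]
        _ ≤ α := hα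
    rcases h2core with ⟨hBne, S, hSF, hSne, hYsub, hxY, hfl⟩ | h2F
    · obtain ⟨A, hA, hAB⟩ := hfl B1 hcard
      obtain ⟨x, hx⟩ := trans B1 h1core A (hSF hA)
      rw [mem_inter] at hx
      refine ⟨x, mem_inter.2 ⟨hx.2, ?_⟩⟩
      by_contra hxB
      have hmem : x ∈ (A \ B2) ∩ B1 := mem_inter.2 ⟨mem_sdiff.2 ⟨hx.1, hxB⟩, hx.2⟩
      rw [hAB] at hmem
      exact absurd hmem (notMem_empty x)
    · obtain ⟨x, hx⟩ := trans B1 h1core B2 h2F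
      rw [mem_inter] at hx
      exact ⟨x, mem_inter.2 ⟨hx.2, hx.1⟩⟩
  · intro B hB E hE
    simp only [flowerBase, mem_filter] at hB
    exact trans B hB.2.1 E hE
end

section
/- Let F ⊆ 2^[n] be a family of r-sets and BF its flower base with threshold α ≥ r ≥ τ(F). Then the minimum transversal size of the flower base equals that of the family: τ(BF) = τ(F). -/
open Finset

lemma exists_base_subset (α : ℝ) (F : Finset (Finset ℕ)) {A : Finset ℕ} (hA : A ∈ F) :
    ∃ B ∈ flowerBase α F, B ⊆ A := by
  classical
  set G := (F.biUnion Finset.powerset).filter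
    (fun B => (IsFlowerCore α F B ∨ B ∈ F) ∧ B ⊆ A) with hG
  have hAG : A ∈ G := by
    rw [hG, Finset.mem_filter]
    exact ⟨Finset.mem_biUnion.2 ⟨A, hA, Finset.mem_powerset.2 subset_rfl⟩,
      Or.inr hA, subset_rfl⟩
  obtain ⟨B, hBG, hmin⟩ := G.exists_min_image Finset.card ⟨A, hAG⟩
  rw [hG, Finset.mem_filter] at hBG
  refine ⟨B, ?_, hBG.2.2⟩
  rw [flowerBase, Finset.mem_filter]
  refine ⟨hBG.1, hBG.2.1, ?_⟩
  intro B' hB' hsub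
  have hB'G : B' ∈ G := by
    rw [hG, Finset.mem_filter]
    refine ⟨?_, hB', hsub.trans hBG.2.2⟩
    rcases hB' with h | h
    · obtain ⟨_, S, hS, hne, hsubs, _⟩ := h
      obtain ⟨A0, hA0⟩ := hne
      exact Finset.mem_biUnion.2 ⟨A0, hS hA0, Finset.mem_powerset.2 (hsubs A0 hA0)⟩
    · exact Finset.mem_biUnion.2 ⟨B', h, Finset.mem_powerset.2 subset_rfl⟩
  exact Finset.eq_of_subset_of_card_le hsub (hmin B' hB'G)

lemma transversal_base (α : ℝ) (F : Finset (Finset ℕ)) {T : Finset ℕ}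
    (hcard : (T.card : ℝ) ≤ α) (hT : ∀ A ∈ F, (A ∩ T).Nonempty) :
    ∀ B ∈ flowerBase α F, (B ∩ T).Nonempty := by
  classical
  intro B hB
  rw [flowerBase, Finset.mem_filter] at hB
  rcases hB.2.1 with h | h
  · obtain ⟨hBne, S, hSF, hne, hsubs, hcap, hpet⟩ := h
    obtain ⟨A, hAS, hempty⟩ := hpet T hcard
    obtain ⟨x, hx⟩ := hT A (hSF hAS)
    rw [Finset.mem_inter] at hx
    have hxB : x ∈ B := by
      by_contra hxB
      have : x ∈ (A \ B) ∩ T := Finset.mem_inter.2 ⟨Finset.mem_sdiff.2 ⟨hx.1, hxB⟩, hx.2⟩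
      rw [hempty] at this
      exact absurd this (Finset.notMem_empty x)
    exact ⟨x, Finset.mem_inter.2 ⟨hxB, hx.2⟩⟩
  · exact hT B h

theorem stmt5 (n r : ℕ) (α : ℝ) (F : Finset (Finset ℕ))
    (hF : ∀ E ∈ F, E ⊆ Finset.range n ∧ E.card = r)
    (hα : (r : ℝ) ≤ α) (hτ : tau F ≤ r) :
    tau (flowerBase α F) = tau F := by
  classical
  by_cases h0 : ∅ ∈ F
  · have h0B : ∅ ∈ flowerBase α F := by
      rw [flowerBase, Finset.mem_filter]
      refine ⟨Finset.mem_biUnion.2 ⟨∅, h0, Finset.mem_powerset.2 subset_rfl⟩,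
        Or.inr h0, fun B' _ hsub => Finset.subset_empty.1 hsub⟩
    have e1 : {k | ∃ T : Finset ℕ, T.card = k ∧ ∀ A ∈ F, (A ∩ T).Nonempty} = ∅ := by
      ext k; simp only [Set.mem_setOf_eq, Set.mem_empty_iff_false, iff_false]
      rintro ⟨T, _, hT⟩
      simpa using hT ∅ h0
    have e2 : {k | ∃ T : Finset ℕ, T.card = k ∧ ∀ A ∈ flowerBase α F, (A ∩ T).Nonempty} = ∅ := by
      ext k; simp only [Set.mem_setOf_eq, Set.mem_empty_iff_false, iff_false]
      rintro ⟨T, _, hT⟩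
      simpa using hT ∅ h0B
    rw [tau, tau, e1, e2]
  · have hne : {k | ∃ T : Finset ℕ, T.card = k ∧ ∀ A ∈ F, (A ∩ T).Nonempty}.Nonempty := by
      refine ⟨(F.biUnion id).card, F.biUnion id, rfl, fun A hA => ?_⟩
      have hA' : A.Nonempty := Finset.nonempty_iff_ne_empty.2 (fun h => h0 (h ▸ hA))
      obtain ⟨x, hx⟩ := hA'
      exact ⟨x, Finset.mem_inter.2 ⟨hx, Finset.mem_biUnion.2 ⟨A, hA, hx⟩⟩⟩
    obtain ⟨T, hTcard, hT⟩ := Nat.sInf_mem hne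
    have hTα : (T.card : ℝ) ≤ α := by
      rw [hTcard]
      exact le_trans (by exact_mod_cast hτ) hα
    have hTB := transversal_base α F hTα hT
    have le1 : tau (flowerBase α F) ≤ tau F :=
      Nat.sInf_le ⟨T, hTcard, hTB⟩
    have hneB : {k | ∃ T : Finset ℕ, T.card = k ∧
        ∀ A ∈ flowerBase α F, (A ∩ T).Nonempty}.Nonempty := ⟨_, T, hTcard, hTB⟩
    obtain ⟨T', hT'card, hT'⟩ := Nat.sInf_mem hneB
    have le2 : tau F ≤ tau (flowerBase α F) := by
      refine Nat.sInf_le ⟨T', hT'card, fun A hA => ?_⟩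
      obtain ⟨B, hB, hBA⟩ := exists_base_subset α F hA
      obtain ⟨x, hx⟩ := hT' B hB
      rw [Finset.mem_inter] at hx
      exact ⟨x, Finset.mem_inter.2 ⟨hBA hx.1, hx.2⟩⟩
    exact le_antisymm le1 le2
end

section
/- Every edge of a family F of r-subsets of [n] contains some member of its flower base BF; consequently |F| ≤ Σ_{B ∈ BF} binom(n - |B|, r - |B|). -/
open Finset

theorem stmt7 (n r : ℕ) (α : ℝ) (F : Finset (Finset ℕ))
    (hF : ∀ E ∈ F, E ⊆ Finset.range n ∧ E.card = r)
    (hα : (tau F : ℝ) ≤ α) :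
    (∀ E ∈ F, ∃ B ∈ flowerBase α F, B ⊆ E) ∧
    F.card ≤ ∑ B ∈ flowerBase α F, Nat.choose (n - B.card) (r - B.card) := by
  classical
  have key : ∀ E ∈ F, ∃ B ∈ flowerBase α F, B ⊆ E := by
    intro E hE
    set s := E.powerset.filter (fun B => IsFlowerCore α F B ∨ B ∈ F) with hs
    have hEs : E ∈ s := by simp [hs, hE]
    obtain ⟨B, hBs, hBmin⟩ := s.exists_min_image Finset.card ⟨E, hEs⟩
    simp only [hs, Finset.mem_filter, Finset.mem_powerset] at hBs
    refine ⟨B, ?_, hBs.1⟩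
    simp only [flowerBase, Finset.mem_filter, Finset.mem_biUnion, Finset.mem_powerset]
    refine ⟨⟨E, hE, hBs.1⟩, hBs.2, ?_⟩
    intro B' hB' hsub
    have hB's : B' ∈ s := by
      simp only [hs, Finset.mem_filter, Finset.mem_powerset]
      exact ⟨hsub.trans hBs.1, hB'⟩
    exact Finset.eq_of_subset_of_card_le hsub (hBmin B' hB's)
  refine ⟨key, ?_⟩
  set f : Finset ℕ → Finset ℕ := fun E =>
    if h : E ∈ F then (key E h).choose else ∅ with hf
  have hf1 : ∀ E ∈ F, f E ∈ flowerBase α F := by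
    intro E hE; simp only [hf, dif_pos hE]; exact (key E hE).choose_spec.1
  have hf2 : ∀ E ∈ F, f E ⊆ E := by
    intro E hE; simp only [hf, dif_pos hE]; exact (key E hE).choose_spec.2
  rw [Finset.card_eq_sum_card_fiberwise hf1]
  refine Finset.sum_le_sum ?_
  intro B hB
  rcases (F.filter fun E => f E = B).eq_empty_or_nonempty with h | ⟨E0, hE0⟩
  · simp [h]
  simp only [Finset.mem_filter] at hE0
  have hBsub : B ⊆ Finset.range n := hE0.2 ▸ (hf2 E0 hE0.1).trans (hF E0 hE0.1).1
  have hcard : ((Finset.range n \ B).powersetCard (r - B.card)).card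
      = Nat.choose (n - B.card) (r - B.card) := by
    rw [Finset.card_powersetCard, Finset.card_sdiff_of_subset hBsub, Finset.card_range]
  rw [← hcard]
  refine Finset.card_le_card_of_injOn (fun E => E \ B) ?_ ?_
  · intro E hE
    simp only [Finset.mem_coe, Finset.mem_filter] at hE
    have hBE : B ⊆ E := hE.2 ▸ hf2 E hE.1
    rw [Finset.mem_coe, Finset.mem_powersetCard]
    exact ⟨Finset.sdiff_subset_sdiff (hF E hE.1).1 le_rfl,
      by rw [Finset.card_sdiff_of_subset hBE, (hF E hE.1).2]⟩
  · intro E1 h1 E2 h2 heq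
    simp only [Finset.coe_filter, Set.mem_setOf_eq] at h1 h2
    have hB1 : B ⊆ E1 := h1.2 ▸ hf2 E1 h1.1
    have hB2 : B ⊆ E2 := h2.2 ▸ hf2 E2 h2.1
    change E1 \ B = E2 \ B at heq
    rw [← Finset.sdiff_union_of_subset hB1, ← Finset.sdiff_union_of_subset hB2, heq]
end

section
/- If B is an intersecting 3-uniform family whose minimum transversal size is 3, then |B| ≤ 10 and B spans at most 7 vertices. -/
open Finset

lemma exists_third {E : Finset ℕ} (h3 : E.card = 3) {a b : ℕ} (ha : a ∈ E) (hb : b ∈ E)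
    (hab : a ≠ b) : ∃ c, c ≠ a ∧ c ≠ b ∧ E = {a, b, c} := by
  have h1 : ((E.erase a).erase b).card = 1 := by
    rw [card_erase_of_mem (mem_erase.2 ⟨Ne.symm hab, hb⟩), card_erase_of_mem ha, h3]
  obtain ⟨c, hc⟩ := card_eq_one.1 h1
  have hcE : c ∈ (E.erase a).erase b := by rw [hc]; exact mem_singleton_self c
  have hca : c ≠ a := (mem_erase.1 (mem_erase.1 hcE).2).1
  have hcb : c ≠ b := (mem_erase.1 hcE).1
  refine ⟨c, hca, hcb, ?_⟩
  have hsub : ({a, b, c} : Finset ℕ) ⊆ E := by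
    intro v hv
    simp only [mem_insert, mem_singleton] at hv
    rcases hv with rfl|rfl|rfl
    · exact ha
    · exact hb
    · exact (mem_of_mem_erase (mem_of_mem_erase hcE))
  have hcard : ({a, b, c} : Finset ℕ).card = 3 := by
    rw [card_insert_of_notMem (by simp [hab, hca.symm]),
      card_insert_of_notMem (by simp [hcb.symm])]
    rfl
  exact (eq_of_subset_of_card_le hsub (by rw [h3, hcard])).symm

lemma mem_pin {E : Finset ℕ} {a b c v : ℕ} (hE : E = {a, b, c}) (hv : v ∈ E) :
    v = a ∨ v = b ∨ v = c := by subst hE; simpa using hv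

lemma eq3 {E : Finset ℕ} (h3 : E.card = 3) {a b c : ℕ} (ha : a ∈ E) (hb : b ∈ E) (hc : c ∈ E)
    (hab : a ≠ b) (hac : a ≠ c) (hbc : b ≠ c) : E = {a, b, c} := by
  obtain ⟨d, hda, hdb, hd⟩ := exists_third h3 ha hb hab
  rcases mem_pin hd hc with rfl|rfl|rfl
  · exact absurd rfl hac
  · exact absurd rfl hbc
  · exact hd

lemma split3 {E : Finset ℕ} (h3 : E.card = 3) {z : ℕ} (hz : z ∈ E) :
    ∃ p q, p ≠ q ∧ p ≠ z ∧ q ≠ z ∧ E = {z, p, q} := by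
  have h2 : (E.erase z).card = 2 := by rw [card_erase_of_mem hz, h3]
  obtain ⟨p, q, hpq, hpair⟩ := card_eq_two.1 h2
  have hp : p ∈ E.erase z := by rw [hpair]; simp
  have hq : q ∈ E.erase z := by rw [hpair]; simp
  exact ⟨p, q, hpq, (mem_erase.1 hp).1, (mem_erase.1 hq).1,
    eq3 h3 hz (mem_of_mem_erase hp) (mem_of_mem_erase hq)
      (Ne.symm (mem_erase.1 hp).1) (Ne.symm (mem_erase.1 hq).1) hpq⟩

lemma hit3 {B : Finset (Finset ℕ)} (hint : FamIntersecting B) {E F : Finset ℕ} {a b c : ℕ}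
    (hE : E ∈ B) (hF : F ∈ B) (hFeq : F = {a, b, c}) : a ∈ E ∨ b ∈ E ∨ c ∈ E := by
  obtain ⟨v, hv⟩ := hint E hE F hF
  rw [mem_inter] at hv
  rcases mem_pin hFeq hv.2 with rfl|rfl|rfl
  · exact Or.inl hv.1
  · exact Or.inr (Or.inl hv.1)
  · exact Or.inr (Or.inr hv.1)

lemma partner_bound {B : Finset (Finset ℕ)} (hint : FamIntersecting B) {E N : Finset ℕ}
    {z m x y : ℕ} (hE : E ∈ B) (h3E : E.card = 3) (hzE : z ∈ E) (hmE : m ∈ E) (hzm : z ≠ m)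
    (hxE : x ∉ E) (hyE : y ∉ E) (hN : N ∈ B) (hNz : z ∉ N) (hNm : m ∉ N) :
    ∃ t, t ∈ N ∧ t ≠ x ∧ t ≠ y ∧ E = {z, m, t} := by
  obtain ⟨t, htz, htm, hEeq⟩ := exists_third h3E hzE hmE hzm
  have htE : t ∈ E := by rw [hEeq]; simp
  obtain ⟨v, hv⟩ := hint E hE N hN
  rw [mem_inter] at hv
  rcases mem_pin hEeq hv.1 with h|h|h
  · exact absurd (h ▸ hv.2) hNz
  · exact absurd (h ▸ hv.2) hNm
  · exact ⟨t, h ▸ hv.2, fun h2 => hxE (h2 ▸ htE), fun h2 => hyE (h2 ▸ htE), hEeq⟩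

set_option maxHeartbeats 2000000 in
lemma key (B : Finset (Finset ℕ)) (h3 : ∀ E ∈ B, E.card = 3) (hint : FamIntersecting B)
    (havoid : ∀ u v : ℕ, ∃ E ∈ B, u ∉ E ∧ v ∉ E)
    (x y z : ℕ) (htr : ∀ E ∈ B, x ∈ E ∨ y ∈ E ∨ z ∈ E)
    (hxy : x ≠ y) (hxz : x ≠ z) (hyz : y ≠ z) :
    ∃ C1 C2 C3 : Finset ℕ, ∀ E ∈ B, ((z ∈ E ∧ x ∉ E ∧ y ∉ E) ∨ (x ∈ E ∧ y ∈ E ∧ z ∉ E)) →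
      E = C1 ∨ E = C2 ∨ E = C3 := by
  obtain ⟨W, hWB, hWx, hWy⟩ := havoid x y
  have hzW : z ∈ W := by rcases htr W hWB with h|h|h; exacts [absurd h hWx, absurd h hWy, h]
  obtain ⟨p, q, hpq, hpz, hqz, hWeq⟩ := split3 (h3 W hWB) hzW
  have hpW : p ∈ W := by rw [hWeq]; simp
  have hqW : q ∈ W := by rw [hWeq]; simp
  have hpx : p ≠ x := fun h => hWx (h ▸ hpW)
  have hpy : p ≠ y := fun h => hWy (h ▸ hpW)
  have hqx : q ≠ x := fun h => hWx (h ▸ hqW)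
  have hqy : q ≠ y := fun h => hWy (h ▸ hqW)
  have pairCase : ∀ E ∈ B, x ∈ E → y ∈ E → z ∉ E → E = {x, y, p} ∨ E = {x, y, q} := by
    intro E hE hxE hyE hzE
    obtain ⟨v, hv⟩ := hint E hE W hWB
    rw [mem_inter] at hv
    rcases mem_pin hWeq hv.2 with h|h|h
    · exact absurd (h ▸ hv.1) hzE
    · exact Or.inl (eq3 (h3 E hE) hxE hyE (h ▸ hv.1) hxy (Ne.symm hpx) (Ne.symm hpy))
    · exact Or.inr (eq3 (h3 E hE) hxE hyE (h ▸ hv.1) hxy (Ne.symm hqx) (Ne.symm hqy))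
  by_cases hP : ({x, y, p} : Finset ℕ) ∈ B <;> by_cases hQ : ({x, y, q} : Finset ℕ) ∈ B
  · -- s2 : both pair edges present
    refine ⟨{z, p, q}, {x, y, p}, {x, y, q}, ?_⟩
    rintro E hE (⟨hzE, hxE, hyE⟩ | ⟨hxE, hyE, hzE⟩)
    · have hpE : p ∈ E := by
        rcases hit3 hint hE hP rfl with h|h|h; exacts [absurd h hxE, absurd h hyE, h]
      have hqE : q ∈ E := by
        rcases hit3 hint hE hQ rfl with h|h|h; exacts [absurd h hxE, absurd h hyE, h]
      exact Or.inl (eq3 (h3 E hE) hzE hpE hqE (Ne.symm hpz) (Ne.symm hqz) hpq)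
    · rcases pairCase E hE hxE hyE hzE with h|h
      exacts [Or.inr (Or.inl h), Or.inr (Or.inr h)]
  · -- s1 with m = p
    obtain ⟨N, hNB, hNz, hNp⟩ := havoid z p
    have hθ : x ∈ N ∨ y ∈ N := by
      rcases htr N hNB with h|h|h; exacts [Or.inl h, Or.inr h, absurd h hNz]
    have classz : ∀ E ∈ B, z ∈ E → x ∉ E → y ∉ E → ∃ t, t ∈ N ∧ t ≠ x ∧ t ≠ y ∧ E = {z, p, t} := by
      intro E hE hzE hxE hyE
      have hpE : p ∈ E := by
        rcases hit3 hint hE hP rfl with h|h|h; exacts [absurd h hxE, absurd h hyE, h]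
      exact partner_bound hint hE (h3 E hE) hzE hpE (Ne.symm hpz) hxE hyE hNB hNz hNp
    have pairP : ∀ E ∈ B, x ∈ E → y ∈ E → z ∉ E → E = {x, y, p} := by
      intro E hE hxE hyE hzE
      rcases pairCase E hE hxE hyE hzE with h|h
      · exact h
      · exact absurd (h ▸ hE) hQ
    rcases hθ with hθN | hθN
    · obtain ⟨k1, k2, hk12, hk1, hk2, hNeq⟩ := split3 (h3 N hNB) hθN
      refine ⟨{z, p, k1}, {z, p, k2}, {x, y, p}, ?_⟩
      rintro E hE (⟨hzE, hxE, hyE⟩ | ⟨hxE, hyE, hzE⟩)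
      · obtain ⟨t, htN, htx, hty, hEeq⟩ := classz E hE hzE hxE hyE
        rcases mem_pin hNeq htN with h|h|h
        · exact absurd h htx
        · exact Or.inl (by rw [hEeq, h])
        · exact Or.inr (Or.inl (by rw [hEeq, h]))
      · exact Or.inr (Or.inr (pairP E hE hxE hyE hzE))
    · obtain ⟨k1, k2, hk12, hk1, hk2, hNeq⟩ := split3 (h3 N hNB) hθN
      refine ⟨{z, p, k1}, {z, p, k2}, {x, y, p}, ?_⟩
      rintro E hE (⟨hzE, hxE, hyE⟩ | ⟨hxE, hyE, hzE⟩)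
      · obtain ⟨t, htN, htx, hty, hEeq⟩ := classz E hE hzE hxE hyE
        rcases mem_pin hNeq htN with h|h|h
        · exact absurd h hty
        · exact Or.inl (by rw [hEeq, h])
        · exact Or.inr (Or.inl (by rw [hEeq, h]))
      · exact Or.inr (Or.inr (pairP E hE hxE hyE hzE))
  · -- s1 with m = q
    obtain ⟨N, hNB, hNz, hNq⟩ := havoid z q
    have hθ : x ∈ N ∨ y ∈ N := by
      rcases htr N hNB with h|h|h; exacts [Or.inl h, Or.inr h, absurd h hNz]
    have classz : ∀ E ∈ B, z ∈ E → x ∉ E → y ∉ E → ∃ t, t ∈ N ∧ t ≠ x ∧ t ≠ y ∧ E = {z, q, t} := by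
      intro E hE hzE hxE hyE
      have hqE : q ∈ E := by
        rcases hit3 hint hE hQ rfl with h|h|h; exacts [absurd h hxE, absurd h hyE, h]
      exact partner_bound hint hE (h3 E hE) hzE hqE (Ne.symm hqz) hxE hyE hNB hNz hNq
    have pairP : ∀ E ∈ B, x ∈ E → y ∈ E → z ∉ E → E = {x, y, q} := by
      intro E hE hxE hyE hzE
      rcases pairCase E hE hxE hyE hzE with h|h
      · exact absurd (h ▸ hE) hP
      · exact h
    rcases hθ with hθN | hθN
    · obtain ⟨k1, k2, hk12, hk1, hk2, hNeq⟩ := split3 (h3 N hNB) hθN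
      refine ⟨{z, q, k1}, {z, q, k2}, {x, y, q}, ?_⟩
      rintro E hE (⟨hzE, hxE, hyE⟩ | ⟨hxE, hyE, hzE⟩)
      · obtain ⟨t, htN, htx, hty, hEeq⟩ := classz E hE hzE hxE hyE
        rcases mem_pin hNeq htN with h|h|h
        · exact absurd h htx
        · exact Or.inl (by rw [hEeq, h])
        · exact Or.inr (Or.inl (by rw [hEeq, h]))
      · exact Or.inr (Or.inr (pairP E hE hxE hyE hzE))
    · obtain ⟨k1, k2, hk12, hk1, hk2, hNeq⟩ := split3 (h3 N hNB) hθN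
      refine ⟨{z, q, k1}, {z, q, k2}, {x, y, q}, ?_⟩
      rintro E hE (⟨hzE, hxE, hyE⟩ | ⟨hxE, hyE, hzE⟩)
      · obtain ⟨t, htN, htx, hty, hEeq⟩ := classz E hE hzE hxE hyE
        rcases mem_pin hNeq htN with h|h|h
        · exact absurd h hty
        · exact Or.inl (by rw [hEeq, h])
        · exact Or.inr (Or.inl (by rw [hEeq, h]))
      · exact Or.inr (Or.inr (pairP E hE hxE hyE hzE))
  · -- s0
    have pairNone : ∀ E ∈ B, x ∈ E → y ∈ E → z ∉ E → False := by
      intro E hE hxE hyE hzE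
      rcases pairCase E hE hxE hyE hzE with h|h
      · exact hP (h ▸ hE)
      · exact hQ (h ▸ hE)
    obtain ⟨G, hGB, hGx, hGz⟩ := havoid x z
    have hyG : y ∈ G := by rcases htr G hGB with h|h|h; exacts [absurd h hGx, h, absurd h hGz]
    obtain ⟨g1, g2, hg12, hg1y, hg2y, hGeq⟩ := split3 (h3 G hGB) hyG
    have hg1G : g1 ∈ G := by rw [hGeq]; simp
    have hg2G : g2 ∈ G := by rw [hGeq]; simp
    have hg1x : g1 ≠ x := fun h => hGx (h ▸ hg1G)
    have hg2x : g2 ≠ x := fun h => hGx (h ▸ hg2G)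
    have hg1z : g1 ≠ z := fun h => hGz (h ▸ hg1G)
    have hg2z : g2 ≠ z := fun h => hGz (h ▸ hg2G)
    obtain ⟨H, hHB, hHy, hHz⟩ := havoid y z
    have hxH : x ∈ H := by rcases htr H hHB with h|h|h; exacts [h, absurd h hHy, absurd h hHz]
    obtain ⟨h1, h2, hh12, hh1x, hh2x, hHeq⟩ := split3 (h3 H hHB) hxH
    have hh1H : h1 ∈ H := by rw [hHeq]; simp
    have hh2H : h2 ∈ H := by rw [hHeq]; simp
    have hh1y : h1 ≠ y := fun h => hHy (h ▸ hh1H)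
    have hh2y : h2 ≠ y := fun h => hHy (h ▸ hh2H)
    have hh1z : h1 ≠ z := fun h => hHz (h ▸ hh1H)
    have hh2z : h2 ≠ z := fun h => hHz (h ▸ hh2H)
    have hitG : ∀ E ∈ B, x ∉ E → y ∉ E → g1 ∈ E ∨ g2 ∈ E := by
      intro E hE hxE hyE
      rcases hit3 hint hE hGB hGeq with h|h|h; exacts [absurd h hyE, Or.inl h, Or.inr h]
    have hitH : ∀ E ∈ B, x ∉ E → y ∉ E → h1 ∈ E ∨ h2 ∈ E := by
      intro E hE hxE hyE
      rcases hit3 hint hE hHB hHeq with h|h|h; exacts [absurd h hxE, Or.inl h, Or.inr h]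
    by_cases c1 : g1 = h1 ∨ g1 = h2 <;> by_cases c2 : g2 = h1 ∨ g2 = h2
    · -- two common : {h1,h2} = {g1,g2}
      have hHg : H = {x, g1, g2} := by
        rcases c1 with e1|e1 <;> rcases c2 with e2|e2
        · exact absurd (e1.trans e2.symm) hg12
        · rw [hHeq, ← e1, ← e2]
        · rw [hHeq, ← e1, ← e2, Finset.pair_comm g2 g1]
        · exact absurd (e1.trans e2.symm) hg12
      obtain ⟨K, hKB, hKz, hKg1⟩ := havoid z g1
      obtain ⟨K', hK'B, hK'z, hK'g2⟩ := havoid z g2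
      have swap321 : ({z, g2, g1} : Finset ℕ) = {z, g1, g2} := by rw [Finset.pair_comm g2 g1]
      by_cases hg2K : g2 ∈ K
      · have hθ : ∃ θ, θ ∈ K ∧ (θ = x ∨ θ = y) := by
          rcases htr K hKB with h|h|h
          exacts [⟨x, h, Or.inl rfl⟩, ⟨y, h, Or.inr rfl⟩, absurd h hKz]
        obtain ⟨θ, hθK, hθxy⟩ := hθ
        have hg2θ : g2 ≠ θ := by rcases hθxy with rfl|rfl; exacts [hg2x, hg2y]
        obtain ⟨r, hrg2, hrθ, hKeq⟩ := exists_third (h3 K hKB) hg2K hθK hg2θ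
        have tK : ∀ t, t ∈ K → t ≠ x → t ≠ y → t = g2 ∨ t = r := by
          intro t htK htx hty
          rcases mem_pin hKeq htK with h|h|h
          · exact Or.inl h
          · rcases hθxy with e|e; exacts [absurd (h.trans e) htx, absurd (h.trans e) hty]
          · exact Or.inr h
        by_cases hg1K' : g1 ∈ K'
        · have hθ' : ∃ θ', θ' ∈ K' ∧ (θ' = x ∨ θ' = y) := by
            rcases htr K' hK'B with h|h|h
            exacts [⟨x, h, Or.inl rfl⟩, ⟨y, h, Or.inr rfl⟩, absurd h hK'z]
          obtain ⟨θ', hθ'K, hθ'xy⟩ := hθ'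
          have hg1θ' : g1 ≠ θ' := by rcases hθ'xy with rfl|rfl; exacts [hg1x, hg1y]
          obtain ⟨r', hr'g1, hr'θ, hK'eq⟩ := exists_third (h3 K' hK'B) hg1K' hθ'K hg1θ'
          refine ⟨{z, g1, g2}, {z, g1, r}, {z, g2, r'}, ?_⟩
          rintro E hE (⟨hzE, hxE, hyE⟩ | ⟨hxE, hyE, hzE⟩)
          swap
          · exact (pairNone E hE hxE hyE hzE).elim
          rcases hitG E hE hxE hyE with hg | hg
          · obtain ⟨t, htK, htx, hty, hEeq⟩ :=
              partner_bound hint hE (h3 E hE) hzE hg (Ne.symm hg1z) hxE hyE hKB hKz hKg1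
            rcases tK t htK htx hty with h|h
            · exact Or.inl (by rw [hEeq, h])
            · exact Or.inr (Or.inl (by rw [hEeq, h]))
          · obtain ⟨t, htK, htx, hty, hEeq⟩ :=
              partner_bound hint hE (h3 E hE) hzE hg (Ne.symm hg2z) hxE hyE hK'B hK'z hK'g2
            rcases mem_pin hK'eq htK with h|h|h
            · exact Or.inl (by rw [hEeq, h, swap321])
            · rcases hθ'xy with e|e; exacts [absurd (h.trans e) htx, absurd (h.trans e) hty]
            · exact Or.inr (Or.inr (by rw [hEeq, h]))
        · -- g1 ∉ K' : K' = {x, y, r'}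
          have hyK' : y ∈ K' := by
            rcases hit3 hint hK'B hGB hGeq with h|h|h
            exacts [h, absurd h hg1K', absurd h hK'g2]
          have hxK' : x ∈ K' := by
            rcases hit3 hint hK'B hHB hHg with h|h|h
            exacts [h, absurd h hg1K', absurd h hK'g2]
          obtain ⟨r', hr'x, hr'y, hK'eq⟩ := exists_third (h3 K' hK'B) hxK' hyK' hxy
          refine ⟨{z, g1, g2}, {z, g1, r}, {z, g2, r'}, ?_⟩
          rintro E hE (⟨hzE, hxE, hyE⟩ | ⟨hxE, hyE, hzE⟩)
          swap
          · exact (pairNone E hE hxE hyE hzE).elim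
          rcases hitG E hE hxE hyE with hg | hg
          · obtain ⟨t, htK, htx, hty, hEeq⟩ :=
              partner_bound hint hE (h3 E hE) hzE hg (Ne.symm hg1z) hxE hyE hKB hKz hKg1
            rcases tK t htK htx hty with h|h
            · exact Or.inl (by rw [hEeq, h])
            · exact Or.inr (Or.inl (by rw [hEeq, h]))
          · obtain ⟨t, htK, htx, hty, hEeq⟩ :=
              partner_bound hint hE (h3 E hE) hzE hg (Ne.symm hg2z) hxE hyE hK'B hK'z hK'g2
            rcases mem_pin hK'eq htK with h|h|h
            · exact absurd h htx
            · exact absurd h hty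
            · exact Or.inr (Or.inr (by rw [hEeq, h]))
      · -- g2 ∉ K : K = {x, y, r}
        have hyK : y ∈ K := by
          rcases hit3 hint hKB hGB hGeq with h|h|h
          exacts [h, absurd h hKg1, absurd h hg2K]
        have hxK : x ∈ K := by
          rcases hit3 hint hKB hHB hHg with h|h|h
          exacts [h, absurd h hKg1, absurd h hg2K]
        obtain ⟨r, hrx, hry, hKeq⟩ := exists_third (h3 K hKB) hxK hyK hxy
        by_cases hg1K' : g1 ∈ K'
        · have hθ' : ∃ θ', θ' ∈ K' ∧ (θ' = x ∨ θ' = y) := by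
            rcases htr K' hK'B with h|h|h
            exacts [⟨x, h, Or.inl rfl⟩, ⟨y, h, Or.inr rfl⟩, absurd h hK'z]
          obtain ⟨θ', hθ'K, hθ'xy⟩ := hθ'
          have hg1θ' : g1 ≠ θ' := by rcases hθ'xy with rfl|rfl; exacts [hg1x, hg1y]
          obtain ⟨r', hr'g1, hr'θ, hK'eq⟩ := exists_third (h3 K' hK'B) hg1K' hθ'K hg1θ'
          refine ⟨{z, g1, r}, {z, g1, g2}, {z, g2, r'}, ?_⟩
          rintro E hE (⟨hzE, hxE, hyE⟩ | ⟨hxE, hyE, hzE⟩)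
          swap
          · exact (pairNone E hE hxE hyE hzE).elim
          rcases hitG E hE hxE hyE with hg | hg
          · obtain ⟨t, htK, htx, hty, hEeq⟩ :=
              partner_bound hint hE (h3 E hE) hzE hg (Ne.symm hg1z) hxE hyE hKB hKz hKg1
            rcases mem_pin hKeq htK with h|h|h
            · exact absurd h htx
            · exact absurd h hty
            · exact Or.inl (by rw [hEeq, h])
          · obtain ⟨t, htK, htx, hty, hEeq⟩ :=
              partner_bound hint hE (h3 E hE) hzE hg (Ne.symm hg2z) hxE hyE hK'B hK'z hK'g2
            rcases mem_pin hK'eq htK with h|h|h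
            · exact Or.inr (Or.inl (by rw [hEeq, h, swap321]))
            · rcases hθ'xy with e|e; exacts [absurd (h.trans e) htx, absurd (h.trans e) hty]
            · exact Or.inr (Or.inr (by rw [hEeq, h]))
        · have hyK' : y ∈ K' := by
            rcases hit3 hint hK'B hGB hGeq with h|h|h
            exacts [h, absurd h hg1K', absurd h hK'g2]
          have hxK' : x ∈ K' := by
            rcases hit3 hint hK'B hHB hHg with h|h|h
            exacts [h, absurd h hg1K', absurd h hK'g2]
          obtain ⟨r', hr'x, hr'y, hK'eq⟩ := exists_third (h3 K' hK'B) hxK' hyK' hxy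
          refine ⟨{z, g1, r}, {z, g2, r'}, {z, g2, r'}, ?_⟩
          rintro E hE (⟨hzE, hxE, hyE⟩ | ⟨hxE, hyE, hzE⟩)
          swap
          · exact (pairNone E hE hxE hyE hzE).elim
          rcases hitG E hE hxE hyE with hg | hg
          · obtain ⟨t, htK, htx, hty, hEeq⟩ :=
              partner_bound hint hE (h3 E hE) hzE hg (Ne.symm hg1z) hxE hyE hKB hKz hKg1
            rcases mem_pin hKeq htK with h|h|h
            · exact absurd h htx
            · exact absurd h hty
            · exact Or.inl (by rw [hEeq, h])
          · obtain ⟨t, htK, htx, hty, hEeq⟩ :=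
              partner_bound hint hE (h3 E hE) hzE hg (Ne.symm hg2z) hxE hyE hK'B hK'z hK'g2
            rcases mem_pin hK'eq htK with h|h|h
            · exact absurd h htx
            · exact absurd h hty
            · exact Or.inr (Or.inl (by rw [hEeq, h]))
    · -- one common, w = g1
      push_neg at c2
      obtain ⟨h', hh'g1, hg2h', hh'x, hh'y, hh'z, hHw⟩ :
          ∃ h', h' ≠ g1 ∧ g2 ≠ h' ∧ h' ≠ x ∧ h' ≠ y ∧ h' ≠ z ∧ H = {x, g1, h'} := by
        rcases c1 with e|e
        · exact ⟨h2, by rw [e]; exact Ne.symm hh12, c2.2, hh2x, hh2y, hh2z,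
            by rw [e]; exact hHeq⟩
        · exact ⟨h1, by rw [e]; exact hh12, c2.1, hh1x, hh1y, hh1z,
            by rw [e, Finset.pair_comm h2 h1]; exact hHeq⟩
      obtain ⟨K, hKB, hKz, hKw⟩ := havoid z g1
      have hθ : ∃ θ, θ ∈ K ∧ (θ = x ∨ θ = y) := by
        rcases htr K hKB with h|h|h
        exacts [⟨x, h, Or.inl rfl⟩, ⟨y, h, Or.inr rfl⟩, absurd h hKz]
      obtain ⟨θ, hθK, hθxy⟩ := hθ
      obtain ⟨k1, k2, hk12, hk1θ, hk2θ, hKeq⟩ := split3 (h3 K hKB) hθK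
      refine ⟨{z, g1, k1}, {z, g1, k2}, {z, g2, h'}, ?_⟩
      rintro E hE (⟨hzE, hxE, hyE⟩ | ⟨hxE, hyE, hzE⟩)
      swap
      · exact (pairNone E hE hxE hyE hzE).elim
      by_cases hg1E : g1 ∈ E
      · obtain ⟨t, htK, htx, hty, hEeq⟩ :=
          partner_bound hint hE (h3 E hE) hzE hg1E (Ne.symm hg1z) hxE hyE hKB hKz hKw
        rcases mem_pin hKeq htK with h|h|h
        · rcases hθxy with e|e; exacts [absurd (h.trans e) htx, absurd (h.trans e) hty]
        · exact Or.inl (by rw [hEeq, h])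
        · exact Or.inr (Or.inl (by rw [hEeq, h]))
      · have hg2E : g2 ∈ E := by
          rcases hitG E hE hxE hyE with h|h; exacts [absurd h hg1E, h]
        have hh'E : h' ∈ E := by
          rcases hit3 hint hE hHB hHw with h|h|h; exacts [absurd h hxE, absurd h hg1E, h]
        exact Or.inr (Or.inr (eq3 (h3 E hE) hzE hg2E hh'E (Ne.symm hg2z) (Ne.symm hh'z) hg2h'))
    · -- one common, w = g2
      push_neg at c1
      obtain ⟨h', hh'g2, hg1h', hh'x, hh'y, hh'z, hHw⟩ :
          ∃ h', h' ≠ g2 ∧ g1 ≠ h' ∧ h' ≠ x ∧ h' ≠ y ∧ h' ≠ z ∧ H = {x, g2, h'} := by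
        rcases c2 with e|e
        · exact ⟨h2, by rw [e]; exact Ne.symm hh12, c1.2, hh2x, hh2y, hh2z,
            by rw [e]; exact hHeq⟩
        · exact ⟨h1, by rw [e]; exact hh12, c1.1, hh1x, hh1y, hh1z,
            by rw [e, Finset.pair_comm h2 h1]; exact hHeq⟩
      obtain ⟨K, hKB, hKz, hKw⟩ := havoid z g2
      have hθ : ∃ θ, θ ∈ K ∧ (θ = x ∨ θ = y) := by
        rcases htr K hKB with h|h|h
        exacts [⟨x, h, Or.inl rfl⟩, ⟨y, h, Or.inr rfl⟩, absurd h hKz]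
      obtain ⟨θ, hθK, hθxy⟩ := hθ
      obtain ⟨k1, k2, hk12, hk1θ, hk2θ, hKeq⟩ := split3 (h3 K hKB) hθK
      refine ⟨{z, g2, k1}, {z, g2, k2}, {z, g1, h'}, ?_⟩
      rintro E hE (⟨hzE, hxE, hyE⟩ | ⟨hxE, hyE, hzE⟩)
      swap
      · exact (pairNone E hE hxE hyE hzE).elim
      by_cases hg2E : g2 ∈ E
      · obtain ⟨t, htK, htx, hty, hEeq⟩ :=
          partner_bound hint hE (h3 E hE) hzE hg2E (Ne.symm hg2z) hxE hyE hKB hKz hKw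
        rcases mem_pin hKeq htK with h|h|h
        · rcases hθxy with e|e; exacts [absurd (h.trans e) htx, absurd (h.trans e) hty]
        · exact Or.inl (by rw [hEeq, h])
        · exact Or.inr (Or.inl (by rw [hEeq, h]))
      · have hg1E : g1 ∈ E := by
          rcases hitG E hE hxE hyE with h|h; exacts [h, absurd h hg2E]
        have hh'E : h' ∈ E := by
          rcases hit3 hint hE hHB hHw with h|h|h; exacts [absurd h hxE, absurd h hg2E, h]
        exact Or.inr (Or.inr (eq3 (h3 E hE) hzE hg1E hh'E (Ne.symm hg1z) (Ne.symm hh'z) hg1h'))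
    · -- grid
      push_neg at c1; push_neg at c2
      have gridify : ∀ E ∈ B, z ∈ E → x ∉ E → y ∉ E →
          E = {z, g1, h1} ∨ E = {z, g1, h2} ∨ E = {z, g2, h1} ∨ E = {z, g2, h2} := by
        intro E hE hzE hxE hyE
        rcases hitG E hE hxE hyE with hg|hg <;> rcases hitH E hE hxE hyE with hh|hh
        · exact Or.inl (eq3 (h3 E hE) hzE hg hh (Ne.symm hg1z) (Ne.symm hh1z) c1.1)
        · exact Or.inr (Or.inl (eq3 (h3 E hE) hzE hg hh (Ne.symm hg1z) (Ne.symm hh2z) c1.2))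
        · exact Or.inr (Or.inr (Or.inl (eq3 (h3 E hE) hzE hg hh (Ne.symm hg2z) (Ne.symm hh1z) c2.1)))
        · exact Or.inr (Or.inr (Or.inr (eq3 (h3 E hE) hzE hg hh (Ne.symm hg2z) (Ne.symm hh2z) c2.2)))
      have noGrid : ¬ (({z, g1, h1} : Finset ℕ) ∈ B ∧ ({z, g1, h2} : Finset ℕ) ∈ B ∧
          ({z, g2, h1} : Finset ℕ) ∈ B ∧ ({z, g2, h2} : Finset ℕ) ∈ B) := by
        rintro ⟨hF11, hF12, hF21, hF22⟩
        obtain ⟨K, hKB, hKz, hKg1⟩ := havoid z g1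
        have hh1K : h1 ∈ K := by
          rcases hit3 hint hKB hF11 rfl with h|h|h; exacts [absurd h hKz, absurd h hKg1, h]
        have hh2K : h2 ∈ K := by
          rcases hit3 hint hKB hF12 rfl with h|h|h; exacts [absurd h hKz, absurd h hKg1, h]
        obtain ⟨r, hrh1, hrh2, hKeq⟩ := exists_third (h3 K hKB) hh1K hh2K hh12
        have hyK : y ∈ K := by
          rcases hit3 hint hKB hGB hGeq with h|h|h
          · exact h
          · exact absurd h hKg1
          · rcases mem_pin hKeq h with e|e|e
            · exact absurd e c2.1
            · exact absurd e c2.2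
            · exfalso
              rcases htr K hKB with h'|h'|h'
              · rcases mem_pin hKeq h' with e'|e'|e'
                exacts [absurd e'.symm hh1x, absurd e'.symm hh2x,
                  absurd (e ▸ e') (Ne.symm hg2x)]
              · rcases mem_pin hKeq h' with e'|e'|e'
                exacts [absurd e' (Ne.symm hh1y), absurd e' (Ne.symm hh2y),
                  absurd (e ▸ e') (Ne.symm hg2y)]
              · exact hKz h'
        have hKfull : K = {h1, h2, y} := by
          rcases mem_pin hKeq hyK with e|e|e
          · exact absurd e (Ne.symm hh1y)
          · exact absurd e (Ne.symm hh2y)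
          · rw [hKeq, e]
        obtain ⟨K', hK'B, hK'z, hK'h1⟩ := havoid z h1
        have hg1K' : g1 ∈ K' := by
          rcases hit3 hint hK'B hF11 rfl with h|h|h; exacts [absurd h hK'z, h, absurd h hK'h1]
        have hg2K' : g2 ∈ K' := by
          rcases hit3 hint hK'B hF21 rfl with h|h|h; exacts [absurd h hK'z, h, absurd h hK'h1]
        obtain ⟨r', hr'g1, hr'g2, hK'eq⟩ := exists_third (h3 K' hK'B) hg1K' hg2K' hg12
        have hxK' : x ∈ K' := by
          rcases hit3 hint hK'B hHB hHeq with h|h|h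
          · exact h
          · exact absurd h hK'h1
          · rcases mem_pin hK'eq h with e|e|e
            · exact absurd e.symm c1.2
            · exact absurd e.symm c2.2
            · exfalso
              rcases htr K' hK'B with h'|h'|h'
              · rcases mem_pin hK'eq h' with e'|e'|e'
                exacts [absurd e'.symm hg1x, absurd e'.symm hg2x,
                  absurd (e ▸ e') (Ne.symm hh2x)]
              · rcases mem_pin hK'eq h' with e'|e'|e'
                exacts [absurd e' (Ne.symm hg1y), absurd e' (Ne.symm hg2y),
                  absurd (e ▸ e') (Ne.symm hh2y)]
              · exact hK'z h'
        have hK'full : K' = {g1, g2, x} := by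
          rcases mem_pin hK'eq hxK' with e|e|e
          · exact absurd e.symm hg1x
          · exact absurd e.symm hg2x
          · rw [hK'eq, e]
        obtain ⟨v, hv⟩ := hint K hKB K' hK'B
        rw [mem_inter] at hv
        have hvK := hv.1; have hvK' := hv.2
        rw [hKfull] at hvK; rw [hK'full] at hvK'
        simp only [mem_insert, mem_singleton] at hvK hvK'
        rcases hvK with e|e|e <;> rcases hvK' with e'|e'|e'
        · exact c1.1 (e'.symm.trans e)
        · exact c2.1 (e'.symm.trans e)
        · exact hh1x (e.symm.trans e')
        · exact c1.2 (e'.symm.trans e)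
        · exact c2.2 (e'.symm.trans e)
        · exact hh2x (e.symm.trans e')
        · exact hg1y (e'.symm.trans e)
        · exact hg2y (e'.symm.trans e)
        · exact hxy (e'.symm.trans e)
      by_cases hF11 : ({z, g1, h1} : Finset ℕ) ∈ B
      · by_cases hF12 : ({z, g1, h2} : Finset ℕ) ∈ B
        · by_cases hF21 : ({z, g2, h1} : Finset ℕ) ∈ B
          · refine ⟨{z, g1, h1}, {z, g1, h2}, {z, g2, h1}, ?_⟩
            rintro E hE (⟨hzE, hxE, hyE⟩ | ⟨hxE, hyE, hzE⟩)
            swap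
            · exact (pairNone E hE hxE hyE hzE).elim
            rcases gridify E hE hzE hxE hyE with h|h|h|h
            · exact Or.inl h
            · exact Or.inr (Or.inl h)
            · exact Or.inr (Or.inr h)
            · exact absurd (h ▸ hE) (fun hh => noGrid ⟨hF11, hF12, hF21, hh⟩)
          · refine ⟨{z, g1, h1}, {z, g1, h2}, {z, g2, h2}, ?_⟩
            rintro E hE (⟨hzE, hxE, hyE⟩ | ⟨hxE, hyE, hzE⟩)
            swap
            · exact (pairNone E hE hxE hyE hzE).elim
            rcases gridify E hE hzE hxE hyE with h|h|h|h
            · exact Or.inl h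
            · exact Or.inr (Or.inl h)
            · exact absurd (h ▸ hE) hF21
            · exact Or.inr (Or.inr h)
        · refine ⟨{z, g1, h1}, {z, g2, h1}, {z, g2, h2}, ?_⟩
          rintro E hE (⟨hzE, hxE, hyE⟩ | ⟨hxE, hyE, hzE⟩)
          swap
          · exact (pairNone E hE hxE hyE hzE).elim
          rcases gridify E hE hzE hxE hyE with h|h|h|h
          · exact Or.inl h
          · exact absurd (h ▸ hE) hF12
          · exact Or.inr (Or.inl h)
          · exact Or.inr (Or.inr h)
      · refine ⟨{z, g1, h2}, {z, g2, h1}, {z, g2, h2}, ?_⟩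
        rintro E hE (⟨hzE, hxE, hyE⟩ | ⟨hxE, hyE, hzE⟩)
        swap
        · exact (pairNone E hE hxE hyE hzE).elim
        rcases gridify E hE hzE hxE hyE with h|h|h|h
        · exact absurd (h ▸ hE) hF11
        · exact Or.inl h
        · exact Or.inr (Or.inl h)
        · exact Or.inr (Or.inr h)

lemma sub3 {a b c : ℕ} {E S : Finset ℕ} (hEeq : E = {a, b, c}) (ha : a ∈ S) (hb : b ∈ S)
    (hc : c ∈ S) : E ⊆ S := by
  rw [hEeq]
  intro v hv
  simp only [mem_insert, mem_singleton] at hv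
  rcases hv with rfl|rfl|rfl <;> assumption

lemma card_ten (B : Finset (Finset ℕ)) (h3 : ∀ E ∈ B, E.card = 3) (hint : FamIntersecting B)
    (havoid : ∀ u v : ℕ, ∃ E ∈ B, u ∉ E ∧ v ∉ E)
    (x y z : ℕ) (htr : ∀ E ∈ B, x ∈ E ∨ y ∈ E ∨ z ∈ E)
    (hxy : x ≠ y) (hxz : x ≠ z) (hyz : y ≠ z) : B.card ≤ 10 := by
  obtain ⟨C1, C2, C3, hC⟩ := key B h3 hint havoid x y z htr hxy hxz hyz
  have htrD : ∀ E ∈ B, y ∈ E ∨ z ∈ E ∨ x ∈ E := by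
    intro E hE; rcases htr E hE with h|h|h; exacts [Or.inr (Or.inr h), Or.inl h, Or.inr (Or.inl h)]
  obtain ⟨D1, D2, D3, hD⟩ := key B h3 hint havoid y z x htrD hyz (Ne.symm hxy) (Ne.symm hxz)
  have htrF : ∀ E ∈ B, z ∈ E ∨ x ∈ E ∨ y ∈ E := by
    intro E hE; rcases htr E hE with h|h|h; exacts [Or.inr (Or.inl h), Or.inr (Or.inr h), Or.inl h]
  obtain ⟨F1, F2, F3, hF⟩ := key B h3 hint havoid z x y htrF (Ne.symm hxz) (Ne.symm hyz) hxy
  have hsub : B ⊆ {({x, y, z} : Finset ℕ), C1, C2, C3, D1, D2, D3, F1, F2, F3} := by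
    intro E hE
    simp only [mem_insert, mem_singleton]
    by_cases hx : x ∈ E <;> by_cases hy : y ∈ E <;> by_cases hz : z ∈ E
    · exact Or.inl (eq3 (h3 E hE) hx hy hz hxy hxz hyz)
    · rcases hC E hE (Or.inr ⟨hx, hy, hz⟩) with h|h|h <;> simp [h]
    · rcases hF E hE (Or.inr ⟨hz, hx, hy⟩) with h|h|h <;> simp [h]
    · rcases hD E hE (Or.inl ⟨hx, hy, hz⟩) with h|h|h <;> simp [h]
    · rcases hD E hE (Or.inr ⟨hy, hz, hx⟩) with h|h|h <;> simp [h]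
    · rcases hF E hE (Or.inl ⟨hy, hz, hx⟩) with h|h|h <;> simp [h]
    · rcases hC E hE (Or.inl ⟨hz, hx, hy⟩) with h|h|h <;> simp [h]
    · rcases htr E hE with h|h|h <;> [exact absurd h hx; exact absurd h hy; exact absurd h hz]
  refine le_trans (card_le_card hsub) ?_
  refine le_trans (card_insert_le _ _) (Nat.add_le_add_right ?_ 1)
  refine le_trans (card_insert_le _ _) (Nat.add_le_add_right ?_ 1)
  refine le_trans (card_insert_le _ _) (Nat.add_le_add_right ?_ 1)
  refine le_trans (card_insert_le _ _) (Nat.add_le_add_right ?_ 1)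
  refine le_trans (card_insert_le _ _) (Nat.add_le_add_right ?_ 1)
  refine le_trans (card_insert_le _ _) (Nat.add_le_add_right ?_ 1)
  refine le_trans (card_insert_le _ _) (Nat.add_le_add_right ?_ 1)
  refine le_trans (card_insert_le _ _) (Nat.add_le_add_right ?_ 1)
  refine le_trans (card_insert_le _ _) (Nat.add_le_add_right ?_ 1)
  simp

-- If K (card 3) contains μ and hits {p1,q1} and {p2,q2} which are disjoint and avoid μ,
-- then any element of K other than p1,q1,p2,q2 equals μ.
lemma KboundD {K : Finset ℕ} (h3K : K.card = 3) {μ p1 q1 p2 q2 : ℕ} (hμ : μ ∈ K)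
    (con1 : p1 ∈ K ∨ q1 ∈ K) (con2 : p2 ∈ K ∨ q2 ∈ K)
    (hμ1 : μ ≠ p1) (hμ2 : μ ≠ q1) (hμ3 : μ ≠ p2) (hμ4 : μ ≠ q2)
    (h12 : p1 ≠ p2) (h13 : p1 ≠ q2) (h14 : q1 ≠ p2) (h15 : q1 ≠ q2) :
    ∀ t ∈ K, t ≠ p1 → t ≠ q1 → t ≠ p2 → t ≠ q2 → t = μ := by
  intro t htK ht1 ht2 ht3 ht4
  by_contra htμ
  obtain ⟨ρ, hρμ, hρt, hKeq⟩ := exists_third h3K hμ htK (fun h => htμ h.symm)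
  have e1 : ρ = p1 ∨ ρ = q1 := by
    rcases con1 with h|h <;> rcases mem_pin hKeq h with e|e|e
    · exact absurd e.symm hμ1
    · exact absurd e.symm ht1
    · exact Or.inl e.symm
    · exact absurd e.symm hμ2
    · exact absurd e.symm ht2
    · exact Or.inr e.symm
  have e2 : ρ = p2 ∨ ρ = q2 := by
    rcases con2 with h|h <;> rcases mem_pin hKeq h with e|e|e
    · exact absurd e.symm hμ3
    · exact absurd e.symm ht3
    · exact Or.inl e.symm
    · exact absurd e.symm hμ4
    · exact absurd e.symm ht4
    · exact Or.inr e.symm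
  rcases e1 with e|e <;> rcases e2 with e'|e'
  · exact h12 (e.symm.trans e')
  · exact h13 (e.symm.trans e')
  · exact h14 (e.symm.trans e')
  · exact h15 (e.symm.trans e')

-- strong 2-equal variant: K ∋ μ, hits {p1,q} and {p2,q} and {p1,p2}
lemma Kbound2 {K : Finset ℕ} (h3K : K.card = 3) {μ p1 p2 q : ℕ} (hμ : μ ∈ K)
    (con1 : p1 ∈ K ∨ q ∈ K) (con2 : p2 ∈ K ∨ q ∈ K) (con3 : p1 ∈ K ∨ p2 ∈ K)
    (hμ1 : μ ≠ p1) (hμ2 : μ ≠ p2) (hμq : μ ≠ q)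
    (hq1 : q ≠ p1) (hq2 : q ≠ p2) (h12 : p1 ≠ p2) :
    ∀ t ∈ K, t ≠ p1 → t ≠ p2 → t = μ ∨ t = q := by
  intro t htK ht1 ht2
  by_cases htq : t = q
  · exact Or.inr htq
  by_cases htμ : t = μ
  · exact Or.inl htμ
  exfalso
  obtain ⟨ρ, hρμ, hρt, hKeq⟩ := exists_third h3K hμ htK (fun h => htμ h.symm)
  have e3 : ρ = p1 ∨ ρ = p2 := by
    rcases con3 with h|h <;> rcases mem_pin hKeq h with e|e|e
    · exact absurd e.symm hμ1
    · exact absurd e.symm ht1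
    · exact Or.inl e.symm
    · exact absurd e.symm hμ2
    · exact absurd e.symm ht2
    · exact Or.inr e.symm
  rcases e3 with e|e
  · rcases con2 with h|h <;> rcases mem_pin hKeq h with e'|e'|e' <;> omega
  · rcases con1 with h|h <;> rcases mem_pin hKeq h with e'|e'|e' <;> omega

lemma commonDistinct (B : Finset (Finset ℕ)) (h3 : ∀ E ∈ B, E.card = 3)
    (hint : FamIntersecting B) (havoid : ∀ u v : ℕ, ∃ E ∈ B, u ∉ E ∧ v ∉ E)
    (x y z w a b c : ℕ) (htr : ∀ E ∈ B, x ∈ E ∨ y ∈ E ∨ z ∈ E)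
    (hxy : x ≠ y) (hxz : x ≠ z) (hyz : y ≠ z)
    (hwx : w ≠ x) (hwy : w ≠ y) (hwz : w ≠ z)
    (hax : a ≠ x) (hay : a ≠ y) (haz : a ≠ z)
    (hbx : b ≠ x) (hby : b ≠ y) (hbz : b ≠ z)
    (hcx : c ≠ x) (hcy : c ≠ y) (hcz : c ≠ z)
    (hwa : w ≠ a) (hwb : w ≠ b) (hwc : w ≠ c)
    (hab : a ≠ b) (hac : a ≠ c) (hbc : b ≠ c)
    (hGx : ({x, w, a} : Finset ℕ) ∈ B) (hGy : ({y, w, b} : Finset ℕ) ∈ B)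
    (hGz : ({z, w, c} : Finset ℕ) ∈ B) :
    ∀ E ∈ B, E ⊆ ({x, y, z, w, a, b, c} : Finset ℕ) := by
  obtain ⟨Kz, hKzB, hKz1, hKz2⟩ := havoid z w
  have hcKz : c ∈ Kz := by
    rcases hit3 hint hKzB hGz rfl with h|h|h; exacts [absurd h hKz1, absurd h hKz2, h]
  have con1z : x ∈ Kz ∨ a ∈ Kz := by
    rcases hit3 hint hKzB hGx rfl with h|h|h; exacts [Or.inl h, absurd h hKz2, Or.inr h]
  have con2z : y ∈ Kz ∨ b ∈ Kz := by
    rcases hit3 hint hKzB hGy rfl with h|h|h; exacts [Or.inl h, absurd h hKz2, Or.inr h]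
  obtain ⟨Kx, hKxB, hKx1, hKx2⟩ := havoid x w
  have haKx : a ∈ Kx := by
    rcases hit3 hint hKxB hGx rfl with h|h|h; exacts [absurd h hKx1, absurd h hKx2, h]
  have con1x : y ∈ Kx ∨ b ∈ Kx := by
    rcases hit3 hint hKxB hGy rfl with h|h|h; exacts [Or.inl h, absurd h hKx2, Or.inr h]
  have con2x : z ∈ Kx ∨ c ∈ Kx := by
    rcases hit3 hint hKxB hGz rfl with h|h|h; exacts [Or.inl h, absurd h hKx2, Or.inr h]
  obtain ⟨Ky, hKyB, hKy1, hKy2⟩ := havoid y w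
  have hbKy : b ∈ Ky := by
    rcases hit3 hint hKyB hGy rfl with h|h|h; exacts [absurd h hKy1, absurd h hKy2, h]
  have con1y : x ∈ Ky ∨ a ∈ Ky := by
    rcases hit3 hint hKyB hGx rfl with h|h|h; exacts [Or.inl h, absurd h hKy2, Or.inr h]
  have con2y : z ∈ Ky ∨ c ∈ Ky := by
    rcases hit3 hint hKyB hGz rfl with h|h|h; exacts [Or.inl h, absurd h hKy2, Or.inr h]
  intro E hE
  by_cases hx : x ∈ E <;> by_cases hy : y ∈ E <;> by_cases hz : z ∈ E
  · exact sub3 (eq3 (h3 E hE) hx hy hz hxy hxz hyz) (by simp) (by simp) (by simp)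
  · obtain ⟨v, hv⟩ := hint E hE _ hGz
    rw [mem_inter] at hv
    rcases mem_pin rfl hv.2 with h|h|h
    · exact absurd (h ▸ hv.1) hz
    · exact sub3 (eq3 (h3 E hE) hx hy (h ▸ hv.1) hxy (Ne.symm hwx) (Ne.symm hwy))
        (by simp) (by simp) (by simp)
    · exact sub3 (eq3 (h3 E hE) hx hy (h ▸ hv.1) hxy (Ne.symm hcx) (Ne.symm hcy))
        (by simp) (by simp) (by simp)
  · obtain ⟨v, hv⟩ := hint E hE _ hGy
    rw [mem_inter] at hv
    rcases mem_pin rfl hv.2 with h|h|h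
    · exact absurd (h ▸ hv.1) hy
    · exact sub3 (eq3 (h3 E hE) hx hz (h ▸ hv.1) hxz (Ne.symm hwx) (Ne.symm hwz))
        (by simp) (by simp) (by simp)
    · exact sub3 (eq3 (h3 E hE) hx hz (h ▸ hv.1) hxz (Ne.symm hbx) (Ne.symm hbz))
        (by simp) (by simp) (by simp)
  · -- class x
    by_cases hw : w ∈ E
    · obtain ⟨t, htK, hty, htz, hEeq⟩ :=
        partner_bound hint hE (h3 E hE) hx hw (Ne.symm hwx) hy hz hKxB hKx1 hKx2
      by_cases htb : t = b
      · exact sub3 hEeq (by simp) (by simp) (by simp [htb])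
      by_cases htc : t = c
      · exact sub3 hEeq (by simp) (by simp) (by simp [htc])
      have hta : t = a := KboundD (h3 Kx hKxB) haKx con1x con2x hay hab haz hac
        hyz (Ne.symm hcy) hbz hbc t htK hty htb htz htc
      exact sub3 hEeq (by simp) (by simp) (by simp [hta])
    · have hbE : b ∈ E := by
        rcases hit3 hint hE hGy rfl with h|h|h; exacts [absurd h hy, absurd h hw, h]
      have hcE : c ∈ E := by
        rcases hit3 hint hE hGz rfl with h|h|h; exacts [absurd h hz, absurd h hw, h]
      exact sub3 (eq3 (h3 E hE) hx hbE hcE (Ne.symm hbx) (Ne.symm hcx) hbc)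
        (by simp) (by simp) (by simp)
  · obtain ⟨v, hv⟩ := hint E hE _ hGx
    rw [mem_inter] at hv
    rcases mem_pin rfl hv.2 with h|h|h
    · exact absurd (h ▸ hv.1) hx
    · exact sub3 (eq3 (h3 E hE) hy hz (h ▸ hv.1) hyz (Ne.symm hwy) (Ne.symm hwz))
        (by simp) (by simp) (by simp)
    · exact sub3 (eq3 (h3 E hE) hy hz (h ▸ hv.1) hyz (Ne.symm hay) (Ne.symm haz))
        (by simp) (by simp) (by simp)
  · -- class y
    by_cases hw : w ∈ E
    · obtain ⟨t, htK, htx, htz, hEeq⟩ :=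
        partner_bound hint hE (h3 E hE) hy hw (Ne.symm hwy) hx hz hKyB hKy1 hKy2
      by_cases hta : t = a
      · exact sub3 hEeq (by simp) (by simp) (by simp [hta])
      by_cases htc : t = c
      · exact sub3 hEeq (by simp) (by simp) (by simp [htc])
      have htb : t = b := KboundD (h3 Ky hKyB) hbKy con1y con2y hbx hab.symm hbz hbc
        hxz hcx.symm haz hac t htK htx hta htz htc
      exact sub3 hEeq (by simp) (by simp) (by simp [htb])
    · have haE : a ∈ E := by
        rcases hit3 hint hE hGx rfl with h|h|h; exacts [absurd h hx, absurd h hw, h]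
      have hcE : c ∈ E := by
        rcases hit3 hint hE hGz rfl with h|h|h; exacts [absurd h hz, absurd h hw, h]
      exact sub3 (eq3 (h3 E hE) hy haE hcE (Ne.symm hay) (Ne.symm hcy) hac)
        (by simp) (by simp) (by simp)
  · -- class z
    by_cases hw : w ∈ E
    · obtain ⟨t, htK, htx, hty, hEeq⟩ :=
        partner_bound hint hE (h3 E hE) hz hw (Ne.symm hwz) hx hy hKzB hKz1 hKz2
      by_cases hta : t = a
      · exact sub3 hEeq (by simp) (by simp) (by simp [hta])
      by_cases htb : t = b
      · exact sub3 hEeq (by simp) (by simp) (by simp [htb])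
      have htc : t = c := KboundD (h3 Kz hKzB) hcKz con1z con2z hcx hac.symm hcy hbc.symm
        hxy hbx.symm hay hab t htK htx hta hty htb
      exact sub3 hEeq (by simp) (by simp) (by simp [htc])
    · have haE : a ∈ E := by
        rcases hit3 hint hE hGx rfl with h|h|h; exacts [absurd h hx, absurd h hw, h]
      have hbE : b ∈ E := by
        rcases hit3 hint hE hGy rfl with h|h|h; exacts [absurd h hy, absurd h hw, h]
      exact sub3 (eq3 (h3 E hE) hz haE hbE (Ne.symm haz) (Ne.symm hbz) hab)
        (by simp) (by simp) (by simp)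
  · rcases htr E hE with h|h|h
    exacts [absurd h hx, absurd h hy, absurd h hz]

lemma notin6 {t x y z w a c : ℕ} (h : t ∉ ({x, y, z, w, a, c} : Finset ℕ)) :
    t ≠ x ∧ t ≠ y ∧ t ≠ z ∧ t ≠ w ∧ t ≠ a ∧ t ≠ c := by
  simp only [mem_insert, mem_singleton, not_or] at h
  exact h

set_option maxHeartbeats 1000000 in
lemma common2 (B : Finset (Finset ℕ)) (h3 : ∀ E ∈ B, E.card = 3)
    (hint : FamIntersecting B) (havoid : ∀ u v : ℕ, ∃ E ∈ B, u ∉ E ∧ v ∉ E)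
    (x y z w a c : ℕ) (htr : ∀ E ∈ B, x ∈ E ∨ y ∈ E ∨ z ∈ E)
    (hxy : x ≠ y) (hxz : x ≠ z) (hyz : y ≠ z)
    (hwx : w ≠ x) (hwy : w ≠ y) (hwz : w ≠ z)
    (hax : a ≠ x) (hay : a ≠ y) (haz : a ≠ z)
    (hcx : c ≠ x) (hcy : c ≠ y) (hcz : c ≠ z)
    (hwa : w ≠ a) (hwc : w ≠ c) (hac : a ≠ c)
    (hGx : ({x, w, a} : Finset ℕ) ∈ B) (hGy : ({y, w, a} : Finset ℕ) ∈ B)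
    (hGz : ({z, w, c} : Finset ℕ) ∈ B) :
    ∃ S : Finset ℕ, (∀ E ∈ B, E ⊆ S) ∧ S.card ≤ 7 := by
  -- class-z w-partners are forced into {a, c}
  obtain ⟨Kzw, hKzwB, hKzw1, hKzw2⟩ := havoid z w
  have hcKzw : c ∈ Kzw := by
    rcases hit3 hint hKzwB hGz rfl with h|h|h; exacts [absurd h hKzw1, absurd h hKzw2, h]
  have hzw : ∀ t, ({z, w, t} : Finset ℕ) ∈ B → t ≠ x → t ≠ y → t = a ∨ t = c := by
    intro t hEt htx hty
    have htK : t ∈ Kzw := by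
      rcases hit3 hint hKzwB hEt rfl with h|h|h; exacts [absurd h hKzw1, absurd h hKzw2, h]
    have con1 : x ∈ Kzw ∨ a ∈ Kzw := by
      rcases hit3 hint hKzwB hGx rfl with h|h|h; exacts [Or.inl h, absurd h hKzw2, Or.inr h]
    have con2 : y ∈ Kzw ∨ a ∈ Kzw := by
      rcases hit3 hint hKzwB hGy rfl with h|h|h; exacts [Or.inl h, absurd h hKzw2, Or.inr h]
    have con3 : x ∈ Kzw ∨ y ∈ Kzw := by
      rcases htr Kzw hKzwB with h|h|h; exacts [Or.inl h, Or.inr h, absurd h hKzw1]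
    rcases Kbound2 (h3 Kzw hKzwB) hcKzw con1 con2 con3 hcx hcy (Ne.symm hac) hax hay hxy
      t htK htx hty with h|h
    exacts [Or.inr h, Or.inl h]
  -- uniqueness of outside partners within each free family
  have uniqza : ∀ t t', ({z, a, t} : Finset ℕ) ∈ B → ({z, a, t'} : Finset ℕ) ∈ B →
      t ∉ ({x, y, z, w, a, c} : Finset ℕ) → t' ∉ ({x, y, z, w, a, c} : Finset ℕ) → t = t' := by
    intro t t' ht ht' hto ht'o
    obtain ⟨htx, hty, htz, htw, hta, htc⟩ := notin6 hto
    obtain ⟨ht'x, ht'y, ht'z, ht'w, ht'a, ht'c⟩ := notin6 ht'o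
    by_contra hne
    obtain ⟨K, hKB, hK1, hK2⟩ := havoid z a
    have htK : t ∈ K := by
      rcases hit3 hint hKB ht rfl with h|h|h; exacts [absurd h hK1, absurd h hK2, h]
    have ht'K : t' ∈ K := by
      rcases hit3 hint hKB ht' rfl with h|h|h; exacts [absurd h hK1, absurd h hK2, h]
    obtain ⟨ρ, hρt, hρt', hKeq⟩ := exists_third (h3 K hKB) htK ht'K hne
    have hρxy : ρ = x ∨ ρ = y := by
      rcases htr K hKB with h|h|h
      · rcases mem_pin hKeq h with e|e|e
        exacts [absurd e.symm htx, absurd e.symm ht'x, Or.inl e.symm]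
      · rcases mem_pin hKeq h with e|e|e
        exacts [absurd e.symm hty, absurd e.symm ht'y, Or.inr e.symm]
      · exact absurd h hK1
    have : w ∈ K ∨ c ∈ K := by
      rcases hit3 hint hKB hGz rfl with h|h|h; exacts [absurd h hK1, Or.inl h, Or.inr h]
    rcases this with h|h
    · rcases mem_pin hKeq h with e|e|e
      · exact htw e.symm
      · exact ht'w e.symm
      · rcases hρxy with e'|e'; exacts [hwx (e.symm ▸ e'), hwy (e.symm ▸ e')]
    · rcases mem_pin hKeq h with e|e|e
      · exact htc e.symm
      · exact ht'c e.symm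
      · rcases hρxy with e'|e'; exacts [hcx (e.symm ▸ e'), hcy (e.symm ▸ e')]
  have uniqxw : ∀ t t', ({x, w, t} : Finset ℕ) ∈ B → ({x, w, t'} : Finset ℕ) ∈ B →
      t ∉ ({x, y, z, w, a, c} : Finset ℕ) → t' ∉ ({x, y, z, w, a, c} : Finset ℕ) → t = t' := by
    intro t t' ht ht' hto ht'o
    obtain ⟨htx, hty, htz, htw, hta, htc⟩ := notin6 hto
    obtain ⟨ht'x, ht'y, ht'z, ht'w, ht'a, ht'c⟩ := notin6 ht'o
    by_contra hne
    obtain ⟨K, hKB, hK1, hK2⟩ := havoid x w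
    have htK : t ∈ K := by
      rcases hit3 hint hKB ht rfl with h|h|h; exacts [absurd h hK1, absurd h hK2, h]
    have ht'K : t' ∈ K := by
      rcases hit3 hint hKB ht' rfl with h|h|h; exacts [absurd h hK1, absurd h hK2, h]
    obtain ⟨ρ, hρt, hρt', hKeq⟩ := exists_third (h3 K hKB) htK ht'K hne
    have haK : a ∈ K := by
      rcases hit3 hint hKB hGx rfl with h|h|h; exacts [absurd h hK1, absurd h hK2, h]
    have hρa : ρ = a := by
      rcases mem_pin hKeq haK with e|e|e
      exacts [absurd e.symm hta, absurd e.symm ht'a, e.symm]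
    rcases htr K hKB with h|h|h
    · exact hK1 h
    · rcases mem_pin hKeq h with e|e|e
      exacts [hty e.symm, ht'y e.symm, hay (hρa.symm.trans e.symm)]
    · rcases mem_pin hKeq h with e|e|e
      exacts [htz e.symm, ht'z e.symm, haz (hρa.symm.trans e.symm)]
  have uniqyw : ∀ t t', ({y, w, t} : Finset ℕ) ∈ B → ({y, w, t'} : Finset ℕ) ∈ B →
      t ∉ ({x, y, z, w, a, c} : Finset ℕ) → t' ∉ ({x, y, z, w, a, c} : Finset ℕ) → t = t' := by
    intro t t' ht ht' hto ht'o
    obtain ⟨htx, hty, htz, htw, hta, htc⟩ := notin6 hto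
    obtain ⟨ht'x, ht'y, ht'z, ht'w, ht'a, ht'c⟩ := notin6 ht'o
    by_contra hne
    obtain ⟨K, hKB, hK1, hK2⟩ := havoid y w
    have htK : t ∈ K := by
      rcases hit3 hint hKB ht rfl with h|h|h; exacts [absurd h hK1, absurd h hK2, h]
    have ht'K : t' ∈ K := by
      rcases hit3 hint hKB ht' rfl with h|h|h; exacts [absurd h hK1, absurd h hK2, h]
    obtain ⟨ρ, hρt, hρt', hKeq⟩ := exists_third (h3 K hKB) htK ht'K hne
    have haK : a ∈ K := by
      rcases hit3 hint hKB hGy rfl with h|h|h; exacts [absurd h hK1, absurd h hK2, h]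
    have hρa : ρ = a := by
      rcases mem_pin hKeq haK with e|e|e
      exacts [absurd e.symm hta, absurd e.symm ht'a, e.symm]
    rcases htr K hKB with h|h|h
    · rcases mem_pin hKeq h with e|e|e
      exacts [htx e.symm, ht'x e.symm, hax (hρa.symm.trans e.symm)]
    · exact hK1 h
    · rcases mem_pin hKeq h with e|e|e
      exacts [htz e.symm, ht'z e.symm, haz (hρa.symm.trans e.symm)]
  -- cross coincidences
  have crossx : ∀ t s, ({z, a, t} : Finset ℕ) ∈ B → ({x, w, s} : Finset ℕ) ∈ B →
      t ∉ ({x, y, z, w, a, c} : Finset ℕ) → s ∉ ({x, y, z, w, a, c} : Finset ℕ) → s = t := by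
    intro t s ht hs hto hso
    obtain ⟨htx, hty, htz, htw, hta, htc⟩ := notin6 hto
    obtain ⟨hsx, hsy, hsz, hsw, hsa, hsc⟩ := notin6 hso
    obtain ⟨v, hv⟩ := hint _ ht _ hs
    rw [mem_inter] at hv
    rcases mem_pin rfl hv.1 with e|e|e <;> rcases mem_pin rfl hv.2 with e'|e'|e'
    · exact absurd (e.symm.trans e') (Ne.symm hxz)
    · exact absurd (e.symm.trans e') (Ne.symm hwz)
    · exact absurd (e.symm.trans e') (Ne.symm hsz)
    · exact absurd (e.symm.trans e') hax
    · exact absurd (e.symm.trans e') (Ne.symm hwa)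
    · exact absurd (e.symm.trans e') (Ne.symm hsa)
    · exact absurd (e.symm.trans e') htx
    · exact absurd (e.symm.trans e') htw
    · exact (e.symm.trans e').symm
  have crossy : ∀ t s, ({z, a, t} : Finset ℕ) ∈ B → ({y, w, s} : Finset ℕ) ∈ B →
      t ∉ ({x, y, z, w, a, c} : Finset ℕ) → s ∉ ({x, y, z, w, a, c} : Finset ℕ) → s = t := by
    intro t s ht hs hto hso
    obtain ⟨htx, hty, htz, htw, hta, htc⟩ := notin6 hto
    obtain ⟨hsx, hsy, hsz, hsw, hsa, hsc⟩ := notin6 hso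
    obtain ⟨v, hv⟩ := hint _ ht _ hs
    rw [mem_inter] at hv
    rcases mem_pin rfl hv.1 with e|e|e <;> rcases mem_pin rfl hv.2 with e'|e'|e'
    · exact absurd (e.symm.trans e') (Ne.symm hyz)
    · exact absurd (e.symm.trans e') (Ne.symm hwz)
    · exact absurd (e.symm.trans e') (Ne.symm hsz)
    · exact absurd (e.symm.trans e') hay
    · exact absurd (e.symm.trans e') (Ne.symm hwa)
    · exact absurd (e.symm.trans e') (Ne.symm hsa)
    · exact absurd (e.symm.trans e') hty
    · exact absurd (e.symm.trans e') htw
    · exact (e.symm.trans e').symm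
  -- F'' contradiction
  have fpp : ∀ s u, ({x, w, s} : Finset ℕ) ∈ B → ({y, w, u} : Finset ℕ) ∈ B →
      s ∉ ({x, y, z, w, a, c} : Finset ℕ) → u ∉ ({x, y, z, w, a, c} : Finset ℕ) →
      s ≠ u → False := by
    intro s u hs hu hso huo hne
    obtain ⟨hsx, hsy, hsz, hsw, hsa, hsc⟩ := notin6 hso
    obtain ⟨hux, huy, huz, huw, hua, huc⟩ := notin6 huo
    obtain ⟨F, hFB, hF1, hF2⟩ := havoid w y
    have haF : a ∈ F := by
      rcases hit3 hint hFB hGy rfl with h|h|h; exacts [absurd h hF2, absurd h hF1, h]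
    have huF : u ∈ F := by
      rcases hit3 hint hFB hu rfl with h|h|h; exacts [absurd h hF2, absurd h hF1, h]
    obtain ⟨ρ, hρa, hρu, hFeq⟩ := exists_third (h3 F hFB) haF huF (fun h => hua h.symm)
    have hρxz : ρ = x ∨ ρ = z := by
      rcases htr F hFB with h|h|h
      · rcases mem_pin hFeq h with e|e|e
        exacts [absurd e.symm hax, absurd e.symm hux, Or.inl e.symm]
      · exact absurd h hF2
      · rcases mem_pin hFeq h with e|e|e
        exacts [absurd e.symm haz, absurd e.symm huz, Or.inr e.symm]
    have hρzc : ρ = z ∨ ρ = c := by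
      rcases hit3 hint hFB hGz rfl with h|h|h
      · rcases mem_pin hFeq h with e|e|e
        exacts [absurd e.symm haz, absurd e.symm huz, Or.inl e.symm]
      · exact absurd h hF1
      · rcases mem_pin hFeq h with e|e|e
        exacts [absurd e hac.symm, absurd e (Ne.symm huc), Or.inr e.symm]
    have hρxs : ρ = x ∨ ρ = s := by
      rcases hit3 hint hFB hs rfl with h|h|h
      · rcases mem_pin hFeq h with e|e|e
        exacts [absurd e.symm hax, absurd e.symm hux, Or.inl e.symm]
      · exact absurd h hF1
      · rcases mem_pin hFeq h with e|e|e
        exacts [absurd e hsa, absurd e hne, Or.inr e.symm]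
    rcases hρxz with e|e
    · rcases hρzc with e'|e'
      · exact hxz (e.symm.trans e')
      · exact hcx (e'.symm.trans e)
    · rcases hρxs with e'|e'
      · exact hxz (e'.symm.trans e)
      · exact hsz (e'.symm.trans e)
  -- main classification
  have main : ∀ κ : ℕ,
      (∀ t, ({z, a, t} : Finset ℕ) ∈ B → t ∉ ({x, y, z, w, a, c} : Finset ℕ) → t = κ) →
      (∀ t, ({x, w, t} : Finset ℕ) ∈ B → t ∉ ({x, y, z, w, a, c} : Finset ℕ) → t = κ) →
      (∀ t, ({y, w, t} : Finset ℕ) ∈ B → t ∉ ({x, y, z, w, a, c} : Finset ℕ) → t = κ) →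
      ∀ E ∈ B, E ⊆ insert κ ({x, y, z, w, a, c} : Finset ℕ) := by
    intro κ hza hxw hyw E hE
    by_cases hx : x ∈ E <;> by_cases hy : y ∈ E <;> by_cases hz : z ∈ E
    · exact sub3 (eq3 (h3 E hE) hx hy hz hxy hxz hyz) (by simp) (by simp) (by simp)
    · obtain ⟨v, hv⟩ := hint E hE _ hGz
      rw [mem_inter] at hv
      rcases mem_pin rfl hv.2 with h|h|h
      · exact absurd (h ▸ hv.1) hz
      · exact sub3 (eq3 (h3 E hE) hx hy (h ▸ hv.1) hxy (Ne.symm hwx) (Ne.symm hwy))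
          (by simp) (by simp) (by simp)
      · exact sub3 (eq3 (h3 E hE) hx hy (h ▸ hv.1) hxy (Ne.symm hcx) (Ne.symm hcy))
          (by simp) (by simp) (by simp)
    · obtain ⟨v, hv⟩ := hint E hE _ hGy
      rw [mem_inter] at hv
      rcases mem_pin rfl hv.2 with h|h|h
      · exact absurd (h ▸ hv.1) hy
      · exact sub3 (eq3 (h3 E hE) hx hz (h ▸ hv.1) hxz (Ne.symm hwx) (Ne.symm hwz))
          (by simp) (by simp) (by simp)
      · exact sub3 (eq3 (h3 E hE) hx hz (h ▸ hv.1) hxz hax.symm haz.symm)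
          (by simp) (by simp) (by simp)
    · -- class x
      by_cases hw : w ∈ E
      · obtain ⟨t, hty, htz, hEeq⟩ := exists_third (h3 E hE) hx hw (Ne.symm hwx)
        have hEB : ({x, w, t} : Finset ℕ) ∈ B := hEeq ▸ hE
        by_cases htS : t ∈ ({x, y, z, w, a, c} : Finset ℕ)
        · exact sub3 hEeq (by simp) (by simp) (mem_insert_of_mem htS)
        · have := hxw t hEB htS
          exact sub3 hEeq (by simp) (by simp) (by simp [this])
      · have haE : a ∈ E := by
          rcases hit3 hint hE hGy rfl with h|h|h; exacts [absurd h hy, absurd h hw, h]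
        have hcE : c ∈ E := by
          rcases hit3 hint hE hGz rfl with h|h|h; exacts [absurd h hz, absurd h hw, h]
        exact sub3 (eq3 (h3 E hE) hx haE hcE hax.symm hcx.symm hac)
          (by simp) (by simp) (by simp)
    · obtain ⟨v, hv⟩ := hint E hE _ hGx
      rw [mem_inter] at hv
      rcases mem_pin rfl hv.2 with h|h|h
      · exact absurd (h ▸ hv.1) hx
      · exact sub3 (eq3 (h3 E hE) hy hz (h ▸ hv.1) hyz (Ne.symm hwy) (Ne.symm hwz))
          (by simp) (by simp) (by simp)
      · exact sub3 (eq3 (h3 E hE) hy hz (h ▸ hv.1) hyz hay.symm haz.symm)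
          (by simp) (by simp) (by simp)
    · -- class y
      by_cases hw : w ∈ E
      · obtain ⟨t, htx, htz, hEeq⟩ := exists_third (h3 E hE) hy hw (Ne.symm hwy)
        have hEB : ({y, w, t} : Finset ℕ) ∈ B := hEeq ▸ hE
        by_cases htS : t ∈ ({x, y, z, w, a, c} : Finset ℕ)
        · exact sub3 hEeq (by simp) (by simp) (mem_insert_of_mem htS)
        · have := hyw t hEB htS
          exact sub3 hEeq (by simp) (by simp) (by simp [this])
      · have haE : a ∈ E := by
          rcases hit3 hint hE hGx rfl with h|h|h; exacts [absurd h hx, absurd h hw, h]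
        have hcE : c ∈ E := by
          rcases hit3 hint hE hGz rfl with h|h|h; exacts [absurd h hz, absurd h hw, h]
        exact sub3 (eq3 (h3 E hE) hy haE hcE hay.symm hcy.symm hac)
          (by simp) (by simp) (by simp)
    · -- class z
      by_cases hw : w ∈ E
      · obtain ⟨t, htx, hty, hEeq⟩ := exists_third (h3 E hE) hz hw (Ne.symm hwz)
        have hEB : ({z, w, t} : Finset ℕ) ∈ B := hEeq ▸ hE
        have htE : t ∈ E := by rw [hEeq]; simp
        rcases hzw t hEB (fun h => hx (h ▸ htE)) (fun h => hy (h ▸ htE)) with h|h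
        · exact sub3 hEeq (by simp) (by simp) (by simp [h])
        · exact sub3 hEeq (by simp) (by simp) (by simp [h])
      · have haE : a ∈ E := by
          rcases hit3 hint hE hGx rfl with h|h|h; exacts [absurd h hx, absurd h hw, h]
        obtain ⟨t, htz, hta, hEeq⟩ := exists_third (h3 E hE) hz haE (Ne.symm haz)
        have hEB : ({z, a, t} : Finset ℕ) ∈ B := hEeq ▸ hE
        by_cases htS : t ∈ ({x, y, z, w, a, c} : Finset ℕ)
        · exact sub3 hEeq (by simp) (by simp) (mem_insert_of_mem htS)
        · have := hza t hEB htS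
          exact sub3 hEeq (by simp) (by simp) (by simp [this])
    · rcases htr E hE with h|h|h
      exacts [absurd h hx, absurd h hy, absurd h hz]
  have hcard : ∀ κ : ℕ, (insert κ ({x, y, z, w, a, c} : Finset ℕ)).card ≤ 7 := by
    intro κ
    refine le_trans (card_insert_le _ _) (Nat.add_le_add_right ?_ 1)
    refine le_trans (card_insert_le _ _) (Nat.add_le_add_right ?_ 1)
    refine le_trans (card_insert_le _ _) (Nat.add_le_add_right ?_ 1)
    refine le_trans (card_insert_le _ _) (Nat.add_le_add_right ?_ 1)
    refine le_trans (card_insert_le _ _) (Nat.add_le_add_right ?_ 1)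
    refine le_trans (card_insert_le _ _) (Nat.add_le_add_right ?_ 1)
    simp
  by_cases h1 : ∃ t, ({z, a, t} : Finset ℕ) ∈ B ∧ t ∉ ({x, y, z, w, a, c} : Finset ℕ)
  · obtain ⟨t0, ht0B, ht0o⟩ := h1
    refine ⟨_, main t0 ?_ ?_ ?_, hcard t0⟩
    · exact fun t ht hto => uniqza t t0 ht ht0B hto ht0o
    · exact fun t ht hto => crossx t0 t ht0B ht ht0o hto
    · exact fun t ht hto => crossy t0 t ht0B ht ht0o hto
  · push_neg at h1
    by_cases h2 : ∃ t, ({x, w, t} : Finset ℕ) ∈ B ∧ t ∉ ({x, y, z, w, a, c} : Finset ℕ)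
    · obtain ⟨s0, hs0B, hs0o⟩ := h2
      refine ⟨_, main s0 ?_ ?_ ?_, hcard s0⟩
      · exact fun t ht hto => absurd (h1 t ht) hto
      · exact fun t ht hto => uniqxw t s0 ht hs0B hto hs0o
      · intro t ht hto
        by_contra hne
        exact fpp s0 t hs0B ht hs0o hto (fun h => hne h.symm)
    · push_neg at h2
      by_cases h3 : ∃ t, ({y, w, t} : Finset ℕ) ∈ B ∧ t ∉ ({x, y, z, w, a, c} : Finset ℕ)
      · obtain ⟨u0, hu0B, hu0o⟩ := h3
        refine ⟨_, main u0 ?_ ?_ ?_, hcard u0⟩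
        · exact fun t ht hto => absurd (h1 t ht) hto
        · exact fun t ht hto => absurd (h2 t ht) hto
        · exact fun t ht hto => uniqyw t u0 ht hu0B hto hu0o
      · push_neg at h3
        refine ⟨_, main w ?_ ?_ ?_, hcard w⟩
        · exact fun t ht hto => absurd (h1 t ht) hto
        · exact fun t ht hto => absurd (h2 t ht) hto
        · exact fun t ht hto => absurd (h3 t ht) hto

lemma card7 (x y z w a b c : ℕ) : ({x, y, z, w, a, b, c} : Finset ℕ).card ≤ 7 := by
  refine le_trans (card_insert_le _ _) (Nat.add_le_add_right ?_ 1)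
  refine le_trans (card_insert_le _ _) (Nat.add_le_add_right ?_ 1)
  refine le_trans (card_insert_le _ _) (Nat.add_le_add_right ?_ 1)
  refine le_trans (card_insert_le _ _) (Nat.add_le_add_right ?_ 1)
  refine le_trans (card_insert_le _ _) (Nat.add_le_add_right ?_ 1)
  refine le_trans (card_insert_le _ _) (Nat.add_le_add_right ?_ 1)
  simp

set_option maxHeartbeats 1000000 in
lemma triangle (B : Finset (Finset ℕ)) (h3 : ∀ E ∈ B, E.card = 3)
    (hint : FamIntersecting B) (havoid : ∀ u v : ℕ, ∃ E ∈ B, u ∉ E ∧ v ∉ E)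
    (x y z a b c : ℕ) (htr : ∀ E ∈ B, x ∈ E ∨ y ∈ E ∨ z ∈ E)
    (hxy : x ≠ y) (hxz : x ≠ z) (hyz : y ≠ z)
    (hax : a ≠ x) (hay : a ≠ y) (haz : a ≠ z)
    (hbx : b ≠ x) (hby : b ≠ y) (hbz : b ≠ z)
    (hcx : c ≠ x) (hcy : c ≠ y) (hcz : c ≠ z)
    (hab : a ≠ b) (hac : a ≠ c) (hbc : b ≠ c)
    (hGx : ({x, a, b} : Finset ℕ) ∈ B) (hGy : ({y, b, c} : Finset ℕ) ∈ B)
    (hGz : ({z, c, a} : Finset ℕ) ∈ B) :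
    ∃ S : Finset ℕ, (∀ E ∈ B, E ⊆ S) ∧ S.card ≤ 7 := by
  have hGx' : ({x, b, a} : Finset ℕ) ∈ B := by rwa [Finset.pair_comm b a]
  have hGy' : ({y, c, b} : Finset ℕ) ∈ B := by rwa [Finset.pair_comm c b]
  have hGz' : ({z, a, c} : Finset ℕ) ∈ B := by rwa [Finset.pair_comm a c]
  by_cases hz' : ∃ t, ({z, b, t} : Finset ℕ) ∈ B ∧ t ∉ ({x, y, z, a, b, c} : Finset ℕ)
  · obtain ⟨t0, ht0B, ht0o⟩ := hz'
    obtain ⟨h1, h2, h3o, h4, h5, h6⟩ := notin6 ht0o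
    refine ⟨{x, y, z, b, a, c, t0}, ?_, card7 _ _ _ _ _ _ _⟩
    exact commonDistinct B h3 hint havoid x y z b a c t0 htr hxy hxz hyz
      hbx hby hbz hax hay haz hcx hcy hcz h1 h2 h3o
      hab.symm hbc (Ne.symm h5) hac (Ne.symm h4) (Ne.symm h6) hGx' hGy ht0B
  by_cases hx' : ∃ t, ({x, c, t} : Finset ℕ) ∈ B ∧ t ∉ ({x, y, z, a, b, c} : Finset ℕ)
  · obtain ⟨t0, ht0B, ht0o⟩ := hx'
    obtain ⟨h1, h2, h3o, h4, h5, h6⟩ := notin6 ht0o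
    refine ⟨{x, y, z, c, t0, b, a}, ?_, card7 _ _ _ _ _ _ _⟩
    exact commonDistinct B h3 hint havoid x y z c t0 b a htr hxy hxz hyz
      hcx hcy hcz h1 h2 h3o hbx hby hbz hax hay haz
      (Ne.symm h6) hbc.symm hac.symm h5 h4 hab.symm ht0B hGy' hGz
  by_cases hy' : ∃ t, ({y, a, t} : Finset ℕ) ∈ B ∧ t ∉ ({x, y, z, a, b, c} : Finset ℕ)
  · obtain ⟨t0, ht0B, ht0o⟩ := hy'
    obtain ⟨h1, h2, h3o, h4, h5, h6⟩ := notin6 ht0o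
    refine ⟨{x, y, z, a, b, t0, c}, ?_, card7 _ _ _ _ _ _ _⟩
    exact commonDistinct B h3 hint havoid x y z a b t0 c htr hxy hxz hyz
      hax hay haz hbx hby hbz h1 h2 h3o hcx hcy hcz
      hab (Ne.symm h4) hac (Ne.symm h5) hbc h6 hGx ht0B hGz'
  · push_neg at hz' hx' hy'
    refine ⟨{x, y, z, a, b, c}, ?_, by
      refine le_trans (card_insert_le _ _) (Nat.add_le_add_right ?_ 1)
      refine le_trans (card_insert_le _ _) (Nat.add_le_add_right ?_ 1)
      refine le_trans (card_insert_le _ _) (Nat.add_le_add_right ?_ 1)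
      refine le_trans (card_insert_le _ _) (Nat.add_le_add_right ?_ 1)
      refine le_trans (card_insert_le _ _) (Nat.add_le_add_right ?_ 1)
      simp⟩
    intro E hE
    by_cases hx : x ∈ E <;> by_cases hy : y ∈ E <;> by_cases hz : z ∈ E
    · exact sub3 (eq3 (h3 E hE) hx hy hz hxy hxz hyz) (by simp) (by simp) (by simp)
    · obtain ⟨v, hv⟩ := hint E hE _ hGz
      rw [mem_inter] at hv
      rcases mem_pin rfl hv.2 with h|h|h
      · exact absurd (h ▸ hv.1) hz
      · exact sub3 (eq3 (h3 E hE) hx hy (h ▸ hv.1) hxy (Ne.symm hcx) (Ne.symm hcy))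
          (by simp) (by simp) (by simp)
      · exact sub3 (eq3 (h3 E hE) hx hy (h ▸ hv.1) hxy (Ne.symm hax) (Ne.symm hay))
          (by simp) (by simp) (by simp)
    · obtain ⟨v, hv⟩ := hint E hE _ hGy
      rw [mem_inter] at hv
      rcases mem_pin rfl hv.2 with h|h|h
      · exact absurd (h ▸ hv.1) hy
      · exact sub3 (eq3 (h3 E hE) hx hz (h ▸ hv.1) hxz (Ne.symm hbx) (Ne.symm hbz))
          (by simp) (by simp) (by simp)
      · exact sub3 (eq3 (h3 E hE) hx hz (h ▸ hv.1) hxz (Ne.symm hcx) (Ne.symm hcz))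
          (by simp) (by simp) (by simp)
    · -- class x : hits Gy ⇒ b|c, hits Gz ⇒ c|a
      by_cases hc : c ∈ E
      · obtain ⟨t, ht1, ht2, hEeq⟩ := exists_third (h3 E hE) hx hc (Ne.symm hcx)
        have hEB : ({x, c, t} : Finset ℕ) ∈ B := hEeq ▸ hE
        have htS : t ∈ ({x, y, z, a, b, c} : Finset ℕ) := hx' t hEB
        exact sub3 hEeq (by simp) (by simp) htS
      · have hbE : b ∈ E := by
          rcases hit3 hint hE hGy rfl with h|h|h; exacts [absurd h hy, h, absurd h hc]
        have haE : a ∈ E := by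
          rcases hit3 hint hE hGz rfl with h|h|h; exacts [absurd h hz, absurd h hc, h]
        exact sub3 (eq3 (h3 E hE) hx hbE haE (Ne.symm hbx) (Ne.symm hax) hab.symm)
          (by simp) (by simp) (by simp)
    · obtain ⟨v, hv⟩ := hint E hE _ hGx
      rw [mem_inter] at hv
      rcases mem_pin rfl hv.2 with h|h|h
      · exact absurd (h ▸ hv.1) hx
      · exact sub3 (eq3 (h3 E hE) hy hz (h ▸ hv.1) hyz (Ne.symm hay) (Ne.symm haz))
          (by simp) (by simp) (by simp)
      · exact sub3 (eq3 (h3 E hE) hy hz (h ▸ hv.1) hyz (Ne.symm hby) (Ne.symm hbz))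
          (by simp) (by simp) (by simp)
    · -- class y : hits Gz ⇒ c|a, hits Gx ⇒ a|b
      by_cases ha : a ∈ E
      · obtain ⟨t, ht1, ht2, hEeq⟩ := exists_third (h3 E hE) hy ha (Ne.symm hay)
        have hEB : ({y, a, t} : Finset ℕ) ∈ B := hEeq ▸ hE
        have htS : t ∈ ({x, y, z, a, b, c} : Finset ℕ) := hy' t hEB
        exact sub3 hEeq (by simp) (by simp) htS
      · have hcE : c ∈ E := by
          rcases hit3 hint hE hGz rfl with h|h|h; exacts [absurd h hz, h, absurd h ha]
        have hbE : b ∈ E := by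
          rcases hit3 hint hE hGx rfl with h|h|h; exacts [absurd h hx, absurd h ha, h]
        exact sub3 (eq3 (h3 E hE) hy hcE hbE (Ne.symm hcy) (Ne.symm hby) hbc.symm)
          (by simp) (by simp) (by simp)
    · -- class z : hits Gx ⇒ a|b, hits Gy ⇒ b|c
      by_cases hb : b ∈ E
      · obtain ⟨t, ht1, ht2, hEeq⟩ := exists_third (h3 E hE) hz hb (Ne.symm hbz)
        have hEB : ({z, b, t} : Finset ℕ) ∈ B := hEeq ▸ hE
        have htS : t ∈ ({x, y, z, a, b, c} : Finset ℕ) := hz' t hEB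
        exact sub3 hEeq (by simp) (by simp) htS
      · have haE : a ∈ E := by
          rcases hit3 hint hE hGx rfl with h|h|h; exacts [absurd h hx, h, absurd h hb]
        have hcE : c ∈ E := by
          rcases hit3 hint hE hGy rfl with h|h|h; exacts [absurd h hy, absurd h hb, h]
        exact sub3 (eq3 (h3 E hE) hz haE hcE (Ne.symm haz) (Ne.symm hcz) hac)
          (by simp) (by simp) (by simp)
    · rcases htr E hE with h|h|h
      exacts [absurd h hx, absurd h hy, absurd h hz]

lemma notin5 {t x y z w a : ℕ} (h : t ∉ ({x, y, z, w, a} : Finset ℕ)) :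
    t ≠ x ∧ t ≠ y ∧ t ≠ z ∧ t ≠ w ∧ t ≠ a := by
  simp only [mem_insert, mem_singleton, not_or] at h
  exact h

set_option maxHeartbeats 2000000 in
lemma seven (B : Finset (Finset ℕ)) (h3 : ∀ E ∈ B, E.card = 3)
    (hint : FamIntersecting B) (havoid : ∀ u v : ℕ, ∃ E ∈ B, u ∉ E ∧ v ∉ E)
    (x y z : ℕ) (htr : ∀ E ∈ B, x ∈ E ∨ y ∈ E ∨ z ∈ E)
    (hxy : x ≠ y) (hxz : x ≠ z) (hyz : y ≠ z) :
    ∃ S : Finset ℕ, (∀ E ∈ B, E ⊆ S) ∧ S.card ≤ 7 := by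
  have htrYZX : ∀ E ∈ B, y ∈ E ∨ z ∈ E ∨ x ∈ E := by
    intro E hE; rcases htr E hE with h|h|h
    exacts [Or.inr (Or.inr h), Or.inl h, Or.inr (Or.inl h)]
  have htrZXY : ∀ E ∈ B, z ∈ E ∨ x ∈ E ∨ y ∈ E := by
    intro E hE; rcases htr E hE with h|h|h
    exacts [Or.inr (Or.inl h), Or.inr (Or.inr h), Or.inl h]
  have htrXZY : ∀ E ∈ B, x ∈ E ∨ z ∈ E ∨ y ∈ E := by
    intro E hE; rcases htr E hE with h|h|h
    exacts [Or.inl h, Or.inr (Or.inr h), Or.inr (Or.inl h)]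
  obtain ⟨Gx, hGxB, hGx1, hGx2⟩ := havoid y z
  have hxGx : x ∈ Gx := by
    rcases htr Gx hGxB with h|h|h; exacts [h, absurd h hGx1, absurd h hGx2]
  obtain ⟨a1, a2, ha12, ha1x, ha2x, hGxeq⟩ := split3 (h3 Gx hGxB) hxGx
  have ha1Gx : a1 ∈ Gx := by rw [hGxeq]; simp
  have ha2Gx : a2 ∈ Gx := by rw [hGxeq]; simp
  have ha1y : a1 ≠ y := fun h => hGx1 (h ▸ ha1Gx)
  have ha1z : a1 ≠ z := fun h => hGx2 (h ▸ ha1Gx)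
  have ha2y : a2 ≠ y := fun h => hGx1 (h ▸ ha2Gx)
  have ha2z : a2 ≠ z := fun h => hGx2 (h ▸ ha2Gx)
  obtain ⟨Gy, hGyB, hGy1, hGy2⟩ := havoid x z
  have hyGy : y ∈ Gy := by
    rcases htr Gy hGyB with h|h|h; exacts [absurd h hGy1, h, absurd h hGy2]
  obtain ⟨b1, b2, hb12, hb1y, hb2y, hGyeq⟩ := split3 (h3 Gy hGyB) hyGy
  have hb1Gy : b1 ∈ Gy := by rw [hGyeq]; simp
  have hb2Gy : b2 ∈ Gy := by rw [hGyeq]; simp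
  have hb1x : b1 ≠ x := fun h => hGy1 (h ▸ hb1Gy)
  have hb1z : b1 ≠ z := fun h => hGy2 (h ▸ hb1Gy)
  have hb2x : b2 ≠ x := fun h => hGy1 (h ▸ hb2Gy)
  have hb2z : b2 ≠ z := fun h => hGy2 (h ▸ hb2Gy)
  obtain ⟨Gz, hGzB, hGz1, hGz2⟩ := havoid x y
  have hzGz : z ∈ Gz := by
    rcases htr Gz hGzB with h|h|h; exacts [absurd h hGz1, absurd h hGz2, h]
  obtain ⟨c1, c2, hc12, hc1z, hc2z, hGzeq⟩ := split3 (h3 Gz hGzB) hzGz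
  have hc1Gz : c1 ∈ Gz := by rw [hGzeq]; simp
  have hc2Gz : c2 ∈ Gz := by rw [hGzeq]; simp
  have hc1x : c1 ≠ x := fun h => hGz1 (h ▸ hc1Gz)
  have hc1y : c1 ≠ y := fun h => hGz2 (h ▸ hc1Gz)
  have hc2x : c2 ≠ x := fun h => hGz1 (h ▸ hc2Gz)
  have hc2y : c2 ≠ y := fun h => hGz2 (h ▸ hc2Gz)
  have uxy : ∃ u, (u = a1 ∨ u = a2) ∧ (u = b1 ∨ u = b2) := by
    obtain ⟨v, hv⟩ := hint Gx hGxB Gy hGyB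
    rw [mem_inter] at hv
    have h1 := mem_pin hGxeq hv.1
    have h2 := mem_pin hGyeq hv.2
    rcases h1 with e|e|e
    · exact absurd (e ▸ hv.2) hGy1
    · rcases h2 with e'|e'|e'
      · exact absurd (e' ▸ hv.1) hGx1
      · exact ⟨v, Or.inl e, Or.inl e'⟩
      · exact ⟨v, Or.inl e, Or.inr e'⟩
    · rcases h2 with e'|e'|e'
      · exact absurd (e' ▸ hv.1) hGx1
      · exact ⟨v, Or.inr e, Or.inl e'⟩
      · exact ⟨v, Or.inr e, Or.inr e'⟩
  have uxz : ∃ u, (u = a1 ∨ u = a2) ∧ (u = c1 ∨ u = c2) := by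
    obtain ⟨v, hv⟩ := hint Gx hGxB Gz hGzB
    rw [mem_inter] at hv
    have h1 := mem_pin hGxeq hv.1
    have h2 := mem_pin hGzeq hv.2
    rcases h1 with e|e|e
    · exact absurd (e ▸ hv.2) hGz1
    · rcases h2 with e'|e'|e'
      · exact absurd (e' ▸ hv.1) hGx2
      · exact ⟨v, Or.inl e, Or.inl e'⟩
      · exact ⟨v, Or.inl e, Or.inr e'⟩
    · rcases h2 with e'|e'|e'
      · exact absurd (e' ▸ hv.1) hGx2
      · exact ⟨v, Or.inr e, Or.inl e'⟩
      · exact ⟨v, Or.inr e, Or.inr e'⟩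
  have uyz : ∃ u, (u = b1 ∨ u = b2) ∧ (u = c1 ∨ u = c2) := by
    obtain ⟨v, hv⟩ := hint Gy hGyB Gz hGzB
    rw [mem_inter] at hv
    have h1 := mem_pin hGyeq hv.1
    have h2 := mem_pin hGzeq hv.2
    rcases h1 with e|e|e
    · exact absurd (e ▸ hv.2) hGz2
    · rcases h2 with e'|e'|e'
      · exact absurd (e' ▸ hv.1) hGy2
      · exact ⟨v, Or.inl e, Or.inl e'⟩
      · exact ⟨v, Or.inl e, Or.inr e'⟩
    · rcases h2 with e'|e'|e'
      · exact absurd (e' ▸ hv.1) hGy2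
      · exact ⟨v, Or.inr e, Or.inl e'⟩
      · exact ⟨v, Or.inr e, Or.inr e'⟩
  by_cases hw : ∃ w, ((w = a1 ∨ w = a2) ∧ (w = b1 ∨ w = b2)) ∧ (w = c1 ∨ w = c2)
  · -- common vertex case
    obtain ⟨w, ⟨hwa, hwb⟩, hwc⟩ := hw
    have hwx : w ≠ x := by rcases hwa with e|e <;> rw [e] <;> [exact ha1x; exact ha2x]
    have hwy : w ≠ y := by rcases hwa with e|e <;> rw [e] <;> [exact ha1y; exact ha2y]
    have hwz : w ≠ z := by rcases hwa with e|e <;> rw [e] <;> [exact ha1z; exact ha2z]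
    obtain ⟨a, haw, hax, hay, haz, hGxm⟩ :
        ∃ a, a ≠ w ∧ a ≠ x ∧ a ≠ y ∧ a ≠ z ∧ ({x, w, a} : Finset ℕ) ∈ B := by
      rcases hwa with e|e
      · exact ⟨a2, by rw [e]; exact (Ne.symm ha12), ha2x, ha2y, ha2z,
          by rw [e]; exact hGxeq ▸ hGxB⟩
      · exact ⟨a1, by rw [e]; exact ha12, ha1x, ha1y, ha1z,
          by rw [e, Finset.pair_comm a2 a1]; exact hGxeq ▸ hGxB⟩
    obtain ⟨b, hbw, hbx, hby, hbz, hGym⟩ :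
        ∃ b, b ≠ w ∧ b ≠ x ∧ b ≠ y ∧ b ≠ z ∧ ({y, w, b} : Finset ℕ) ∈ B := by
      rcases hwb with e|e
      · exact ⟨b2, by rw [e]; exact (Ne.symm hb12), hb2x, hb2y, hb2z,
          by rw [e]; exact hGyeq ▸ hGyB⟩
      · exact ⟨b1, by rw [e]; exact hb12, hb1x, hb1y, hb1z,
          by rw [e, Finset.pair_comm b2 b1]; exact hGyeq ▸ hGyB⟩
    obtain ⟨c, hcw, hcx, hcy, hcz, hGzm⟩ :
        ∃ c, c ≠ w ∧ c ≠ x ∧ c ≠ y ∧ c ≠ z ∧ ({z, w, c} : Finset ℕ) ∈ B := by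
      rcases hwc with e|e
      · exact ⟨c2, by rw [e]; exact (Ne.symm hc12), hc2x, hc2y, hc2z,
          by rw [e]; exact hGzeq ▸ hGzB⟩
      · exact ⟨c1, by rw [e]; exact hc12, hc1x, hc1y, hc1z,
          by rw [e, Finset.pair_comm c2 c1]; exact hGzeq ▸ hGzB⟩
    by_cases hab2 : a = b
    · have hGym2 : ({y, w, a} : Finset ℕ) ∈ B := by rw [hab2]; exact hGym
      by_cases hac2 : a = c
      · -- all three equal
        have hGzm2 : ({z, w, a} : Finset ℕ) ∈ B := by rw [hac2]; exact hGzm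
        have hGxs : ({x, a, w} : Finset ℕ) ∈ B := by rw [Finset.pair_comm a w]; exact hGxm
        have hGys : ({y, a, w} : Finset ℕ) ∈ B := by rw [Finset.pair_comm a w]; exact hGym2
        have hGzs : ({z, a, w} : Finset ℕ) ∈ B := by rw [Finset.pair_comm a w]; exact hGzm2
        by_cases e1 : ∃ t, ({z, w, t} : Finset ℕ) ∈ B ∧ t ∉ ({x, y, z, w, a} : Finset ℕ)
        · obtain ⟨t0, ht0B, ht0o⟩ := e1
          obtain ⟨t1, t2, t3, t4, t5⟩ := notin5 ht0o
          exact common2 B h3 hint havoid x y z w a t0 htr hxy hxz hyz hwx hwy hwz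
            hax hay haz t1 t2 t3 (Ne.symm haw) (Ne.symm t4) (Ne.symm t5) hGxm hGym2 ht0B
        by_cases e2 : ∃ t, ({x, w, t} : Finset ℕ) ∈ B ∧ t ∉ ({x, y, z, w, a} : Finset ℕ)
        · obtain ⟨t0, ht0B, ht0o⟩ := e2
          obtain ⟨t1, t2, t3, t4, t5⟩ := notin5 ht0o
          exact common2 B h3 hint havoid y z x w a t0 htrYZX hyz (Ne.symm hxy) (Ne.symm hxz)
            hwy hwz hwx hay haz hax t2 t3 t1 (Ne.symm haw) (Ne.symm t4) (Ne.symm t5)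
            hGym2 hGzm2 ht0B
        by_cases e3 : ∃ t, ({y, w, t} : Finset ℕ) ∈ B ∧ t ∉ ({x, y, z, w, a} : Finset ℕ)
        · obtain ⟨t0, ht0B, ht0o⟩ := e3
          obtain ⟨t1, t2, t3, t4, t5⟩ := notin5 ht0o
          exact common2 B h3 hint havoid z x y w a t0 htrZXY (Ne.symm hxz) (Ne.symm hyz) hxy
            hwz hwx hwy haz hax hay t3 t1 t2 (Ne.symm haw) (Ne.symm t4) (Ne.symm t5)
            hGzm2 hGxm ht0B
        by_cases e4 : ∃ t, ({z, a, t} : Finset ℕ) ∈ B ∧ t ∉ ({x, y, z, w, a} : Finset ℕ)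
        · obtain ⟨t0, ht0B, ht0o⟩ := e4
          obtain ⟨t1, t2, t3, t4, t5⟩ := notin5 ht0o
          exact common2 B h3 hint havoid x y z a w t0 htr hxy hxz hyz
            hax hay haz hwx hwy hwz t1 t2 t3 haw (Ne.symm t5) (Ne.symm t4) hGxs hGys ht0B
        by_cases e5 : ∃ t, ({x, a, t} : Finset ℕ) ∈ B ∧ t ∉ ({x, y, z, w, a} : Finset ℕ)
        · obtain ⟨t0, ht0B, ht0o⟩ := e5
          obtain ⟨t1, t2, t3, t4, t5⟩ := notin5 ht0o
          exact common2 B h3 hint havoid y z x a w t0 htrYZX hyz (Ne.symm hxy) (Ne.symm hxz)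
            hay haz hax hwy hwz hwx t2 t3 t1 haw (Ne.symm t5) (Ne.symm t4) hGys hGzs ht0B
        by_cases e6 : ∃ t, ({y, a, t} : Finset ℕ) ∈ B ∧ t ∉ ({x, y, z, w, a} : Finset ℕ)
        · obtain ⟨t0, ht0B, ht0o⟩ := e6
          obtain ⟨t1, t2, t3, t4, t5⟩ := notin5 ht0o
          exact common2 B h3 hint havoid z x y a w t0 htrZXY (Ne.symm hxz) (Ne.symm hyz) hxy
            haz hax hay hwz hwx hwy t3 t1 t2 haw (Ne.symm t5) (Ne.symm t4) hGzs hGxs ht0B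
        · -- no outsiders at all
          push_neg at e1 e2 e3 e4 e5 e6
          refine ⟨{x, y, z, w, a}, ?_, by
            refine le_trans (card_insert_le _ _) (Nat.add_le_add_right ?_ 1)
            refine le_trans (card_insert_le _ _) (Nat.add_le_add_right ?_ 1)
            refine le_trans (card_insert_le _ _) (Nat.add_le_add_right ?_ 1)
            refine le_trans (card_insert_le _ _) (Nat.add_le_add_right ?_ 1)
            simp⟩
          intro E hE
          by_cases hx : x ∈ E <;> by_cases hy : y ∈ E <;> by_cases hz : z ∈ E
          · exact sub3 (eq3 (h3 E hE) hx hy hz hxy hxz hyz) (by simp) (by simp) (by simp)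
          · obtain ⟨vv, hv⟩ := hint E hE _ hGzm2
            rw [mem_inter] at hv
            rcases mem_pin rfl hv.2 with h|h|h
            · exact absurd (h ▸ hv.1) hz
            · exact sub3 (eq3 (h3 E hE) hx hy (h ▸ hv.1) hxy (Ne.symm hwx) (Ne.symm hwy))
                (by simp) (by simp) (by simp)
            · exact sub3 (eq3 (h3 E hE) hx hy (h ▸ hv.1) hxy hax.symm hay.symm)
                (by simp) (by simp) (by simp)
          · obtain ⟨vv, hv⟩ := hint E hE _ hGym2
            rw [mem_inter] at hv
            rcases mem_pin rfl hv.2 with h|h|h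
            · exact absurd (h ▸ hv.1) hy
            · exact sub3 (eq3 (h3 E hE) hx hz (h ▸ hv.1) hxz (Ne.symm hwx) (Ne.symm hwz))
                (by simp) (by simp) (by simp)
            · exact sub3 (eq3 (h3 E hE) hx hz (h ▸ hv.1) hxz hax.symm haz.symm)
                (by simp) (by simp) (by simp)
          · -- class x
            have hwa' : w ∈ E ∨ a ∈ E := by
              rcases hit3 hint hE hGym2 rfl with h|h|h
              exacts [absurd h hy, Or.inl h, Or.inr h]
            rcases hwa' with hwE | haE
            · obtain ⟨t, ht1, ht2, hEeq⟩ := exists_third (h3 E hE) hx hwE hwx.symm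
              have hEB : ({x, w, t} : Finset ℕ) ∈ B := hEeq ▸ hE
              exact sub3 hEeq (by simp) (by simp) (e2 t hEB)
            · obtain ⟨t, ht1, ht2, hEeq⟩ := exists_third (h3 E hE) hx haE hax.symm
              have hEB : ({x, a, t} : Finset ℕ) ∈ B := hEeq ▸ hE
              exact sub3 hEeq (by simp) (by simp) (e5 t hEB)
          · obtain ⟨vv, hv⟩ := hint E hE _ hGxm
            rw [mem_inter] at hv
            rcases mem_pin rfl hv.2 with h|h|h
            · exact absurd (h ▸ hv.1) hx
            · exact sub3 (eq3 (h3 E hE) hy hz (h ▸ hv.1) hyz (Ne.symm hwy) (Ne.symm hwz))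
                (by simp) (by simp) (by simp)
            · exact sub3 (eq3 (h3 E hE) hy hz (h ▸ hv.1) hyz hay.symm haz.symm)
                (by simp) (by simp) (by simp)
          · -- class y
            have hwa' : w ∈ E ∨ a ∈ E := by
              rcases hit3 hint hE hGxm rfl with h|h|h
              exacts [absurd h hx, Or.inl h, Or.inr h]
            rcases hwa' with hwE | haE
            · obtain ⟨t, ht1, ht2, hEeq⟩ := exists_third (h3 E hE) hy hwE hwy.symm
              have hEB : ({y, w, t} : Finset ℕ) ∈ B := hEeq ▸ hE
              exact sub3 hEeq (by simp) (by simp) (e3 t hEB)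
            · obtain ⟨t, ht1, ht2, hEeq⟩ := exists_third (h3 E hE) hy haE hay.symm
              have hEB : ({y, a, t} : Finset ℕ) ∈ B := hEeq ▸ hE
              exact sub3 hEeq (by simp) (by simp) (e6 t hEB)
          · -- class z
            have hwa' : w ∈ E ∨ a ∈ E := by
              rcases hit3 hint hE hGxm rfl with h|h|h
              exacts [absurd h hx, Or.inl h, Or.inr h]
            rcases hwa' with hwE | haE
            · obtain ⟨t, ht1, ht2, hEeq⟩ := exists_third (h3 E hE) hz hwE hwz.symm
              have hEB : ({z, w, t} : Finset ℕ) ∈ B := hEeq ▸ hE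
              exact sub3 hEeq (by simp) (by simp) (e1 t hEB)
            · obtain ⟨t, ht1, ht2, hEeq⟩ := exists_third (h3 E hE) hz haE haz.symm
              have hEB : ({z, a, t} : Finset ℕ) ∈ B := hEeq ▸ hE
              exact sub3 hEeq (by simp) (by simp) (e4 t hEB)
          · rcases htr E hE with h|h|h
            exacts [absurd h hx, absurd h hy, absurd h hz]
      · -- a = b ≠ c
        exact common2 B h3 hint havoid x y z w a c htr hxy hxz hyz hwx hwy hwz
          hax hay haz hcx hcy hcz (Ne.symm haw) (Ne.symm hcw) hac2 hGxm hGym2 hGzm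
    · by_cases hac2 : a = c
      · -- a = c ≠ b
        have hGzm2 : ({z, w, a} : Finset ℕ) ∈ B := by rw [hac2]; exact hGzm
        exact common2 B h3 hint havoid x z y w a b htrXZY hxz hxy (Ne.symm hyz)
          hwx hwz hwy hax haz hay hbx hbz hby (Ne.symm haw) (Ne.symm hbw) hab2
          hGxm hGzm2 hGym
      · by_cases hbc2 : b = c
        · -- b = c ≠ a
          have hGzm2 : ({z, w, b} : Finset ℕ) ∈ B := by rw [hbc2]; exact hGzm
          exact common2 B h3 hint havoid y z x w b a htrYZX hyz (Ne.symm hxy) (Ne.symm hxz)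
            hwy hwz hwx hby hbz hbx hay haz hax (Ne.symm hbw) (Ne.symm haw)
            (fun h => hab2 h.symm) hGym hGzm2 hGxm
        · -- all distinct
          exact ⟨{x, y, z, w, a, b, c},
            commonDistinct B h3 hint havoid x y z w a b c htr hxy hxz hyz
              hwx hwy hwz hax hay haz hbx hby hbz hcx hcy hcz
              (Ne.symm haw) (Ne.symm hbw) (Ne.symm hcw) hab2 hac2 hbc2 hGxm hGym hGzm,
            card7 _ _ _ _ _ _ _⟩
  · -- triangle case
    obtain ⟨u, hua, hub⟩ := uxy
    obtain ⟨v, hva, hvc⟩ := uxz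
    obtain ⟨s, hsb, hsc⟩ := uyz
    have huv : u ≠ v := fun h => hw ⟨u, ⟨hua, hub⟩, h ▸ hvc⟩
    have hus : u ≠ s := fun h => hw ⟨u, ⟨hua, h ▸ hsb⟩, h ▸ hsc⟩
    have hvs : v ≠ s := fun h => hw ⟨v, ⟨hva, h ▸ hsb⟩, hvc⟩
    have hux : u ≠ x := by rcases hua with e|e <;> rw [e] <;> [exact ha1x; exact ha2x]
    have huy : u ≠ y := by rcases hua with e|e <;> rw [e] <;> [exact ha1y; exact ha2y]
    have huz : u ≠ z := by rcases hua with e|e <;> rw [e] <;> [exact ha1z; exact ha2z]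
    have hvx : v ≠ x := by rcases hva with e|e <;> rw [e] <;> [exact ha1x; exact ha2x]
    have hvy : v ≠ y := by rcases hva with e|e <;> rw [e] <;> [exact ha1y; exact ha2y]
    have hvz : v ≠ z := by rcases hva with e|e <;> rw [e] <;> [exact ha1z; exact ha2z]
    have hsx : s ≠ x := by rcases hsb with e|e <;> rw [e] <;> [exact hb1x; exact hb2x]
    have hsy : s ≠ y := by rcases hsb with e|e <;> rw [e] <;> [exact hb1y; exact hb2y]
    have hsz : s ≠ z := by rcases hsb with e|e <;> rw [e] <;> [exact hb1z; exact hb2z]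
    have huGx : u ∈ Gx := by rcases hua with e|e <;> rw [e] <;> [exact ha1Gx; exact ha2Gx]
    have hvGx : v ∈ Gx := by rcases hva with e|e <;> rw [e] <;> [exact ha1Gx; exact ha2Gx]
    have huGy : u ∈ Gy := by rcases hub with e|e <;> rw [e] <;> [exact hb1Gy; exact hb2Gy]
    have hsGy : s ∈ Gy := by rcases hsb with e|e <;> rw [e] <;> [exact hb1Gy; exact hb2Gy]
    have hvGz : v ∈ Gz := by rcases hvc with e|e <;> rw [e] <;> [exact hc1Gz; exact hc2Gz]
    have hsGz : s ∈ Gz := by rcases hsc with e|e <;> rw [e] <;> [exact hc1Gz; exact hc2Gz]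
    have hGxm : ({x, v, u} : Finset ℕ) ∈ B :=
      (eq3 (h3 Gx hGxB) hxGx hvGx huGx (Ne.symm hvx) (Ne.symm hux) (fun h => huv h.symm)) ▸ hGxB
    have hGym : ({y, u, s} : Finset ℕ) ∈ B :=
      (eq3 (h3 Gy hGyB) hyGy huGy hsGy (Ne.symm huy) (Ne.symm hsy) hus) ▸ hGyB
    have hGzm : ({z, s, v} : Finset ℕ) ∈ B :=
      (eq3 (h3 Gz hGzB) hzGz hsGz hvGz (Ne.symm hsz) (Ne.symm hvz) (Ne.symm hvs)) ▸ hGzB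
    exact triangle B h3 hint havoid x y z v u s htr hxy hxz hyz
      hvx hvy hvz hux huy huz hsx hsy hsz (fun h => huv h.symm) hvs hus hGxm hGym hGzm


theorem stmt8 (B : Finset (Finset ℕ)) (h3 : ∀ E ∈ B, E.card = 3)
    (hint : FamIntersecting B) (hτ : tau B = 3) :
    B.card ≤ 10 ∧ (B.biUnion id).card ≤ 7 := by
  classical
  have hSne : {k | ∃ T : Finset ℕ, T.card = k ∧ ∀ A ∈ B, (A ∩ T).Nonempty}.Nonempty := by
    refine ⟨(B.biUnion id).card, B.biUnion id, rfl, fun A hA => ?_⟩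
    have hAne : A.Nonempty := card_pos.1 (by rw [h3 A hA]; norm_num)
    obtain ⟨a, ha⟩ := hAne
    exact ⟨a, mem_inter.2 ⟨ha, mem_biUnion.2 ⟨A, hA, ha⟩⟩⟩
  have h3S : 3 ∈ {k | ∃ T : Finset ℕ, T.card = k ∧ ∀ A ∈ B, (A ∩ T).Nonempty} := by
    rw [← hτ]; exact Nat.sInf_mem hSne
  obtain ⟨T, hT3, hTtr⟩ := h3S
  have havoid : ∀ u v : ℕ, ∃ E ∈ B, u ∉ E ∧ v ∉ E := by
    intro u v
    by_contra hc
    push_neg at hc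
    have hmem : ({u, v} : Finset ℕ).card ∈
        {k | ∃ T : Finset ℕ, T.card = k ∧ ∀ A ∈ B, (A ∩ T).Nonempty} := by
      refine ⟨{u, v}, rfl, fun A hA => ?_⟩
      by_cases hu : u ∈ A
      · exact ⟨u, mem_inter.2 ⟨hu, by simp⟩⟩
      · exact ⟨v, mem_inter.2 ⟨hc A hA hu, by simp⟩⟩
    have hle := Nat.sInf_le hmem
    rw [show sInf {k | ∃ T : Finset ℕ, T.card = k ∧ ∀ A ∈ B, (A ∩ T).Nonempty} = tau B
      from rfl, hτ] at hle
    have : ({u, v} : Finset ℕ).card ≤ 2 :=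
      le_trans (card_insert_le _ _) (by simp)
    omega
  obtain ⟨xx, yy, zz, hxy, hxz, hyz, hTeq⟩ := Finset.card_eq_three.1 hT3
  have htr : ∀ E ∈ B, xx ∈ E ∨ yy ∈ E ∨ zz ∈ E := by
    intro E hE
    obtain ⟨v, hv⟩ := hTtr E hE
    rw [mem_inter] at hv
    rcases mem_pin hTeq hv.2 with h|h|h
    · exact Or.inl (h ▸ hv.1)
    · exact Or.inr (Or.inl (h ▸ hv.1))
    · exact Or.inr (Or.inr (h ▸ hv.1))
  constructor
  · exact card_ten B h3 hint havoid xx yy zz htr hxy hxz hyz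
  · obtain ⟨S7, hsub, hcard⟩ := seven B h3 hint havoid xx yy zz htr hxy hxz hyz
    refine le_trans (card_le_card ?_) hcard
    intro v hv
    rw [mem_biUnion] at hv
    obtain ⟨A, hA, hvA⟩ := hv
    exact hsub A hA hvA
end

section
/- If A, B ⊆ binom([n], r) are cross-intersecting families (possibly empty) with n ≥ 2r, then |A| + |B| ≤ binom(n, r). -/
open Finset

theorem stmt9 (n r : ℕ) (hn : 2 * r ≤ n) (A B : Finset (Finset ℕ))
    (hA : A ⊆ (Finset.range n).powersetCard r)
    (hB : B ⊆ (Finset.range n).powersetCard r)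
    (hcross : ∀ a ∈ A, ∀ b ∈ B, (a ∩ b).Nonempty) :
    A.card + B.card ≤ Nat.choose n r := by
  classical
  set P := (Finset.range n).powersetCard r with hP
  set d := Nat.choose (n - r) r with hdd
  have hd0 : 0 < d := Nat.choose_pos (by omega)
  have hdS : ∀ S ∈ P, (P.filter fun T => S ∩ T = ∅).card = d := by
    intro S hS
    rw [Finset.mem_powersetCard] at hS
    have he : P.filter (fun T => S ∩ T = ∅) = (Finset.range n \ S).powersetCard r := by
      ext T
      simp only [Finset.mem_filter, Finset.mem_powersetCard, Finset.subset_sdiff, hP]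
      constructor
      · rintro ⟨⟨hT1, hT2⟩, hST⟩
        exact ⟨⟨hT1, Finset.disjoint_left.mpr fun x hx hxS => by
          have : x ∈ S ∩ T := Finset.mem_inter.mpr ⟨hxS, hx⟩
          simp [hST] at this⟩, hT2⟩
      · rintro ⟨⟨hT1, hdisj⟩, hT2⟩
        refine ⟨⟨hT1, hT2⟩, ?_⟩
        rw [Finset.inter_comm]
        exact Finset.disjoint_iff_inter_eq_empty.mp hdisj
    rw [he, Finset.card_powersetCard, Finset.card_sdiff_of_subset hS.1, Finset.card_range, hS.2]
  -- main double counting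
  have key : ∑ S ∈ P, ∑ T ∈ P, (if S ∩ T = ∅ then
      ((if S ∈ A then 1 else 0) + (if T ∈ B then 1 else 0)) else 0)
      ≤ ∑ S ∈ P, ∑ T ∈ P, (if S ∩ T = ∅ then 1 else 0 : ℕ) := by
    refine Finset.sum_le_sum fun S hS => Finset.sum_le_sum fun T hT => ?_
    by_cases h : S ∩ T = ∅
    · rw [if_pos h, if_pos h]
      by_cases hSA : S ∈ A
      · have hTB : T ∉ B := fun hTB => by
          obtain ⟨x, hx⟩ := hcross S hSA T hTB
          simp [h] at hx
        rw [if_pos hSA, if_neg hTB]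
      · rw [if_neg hSA]
        by_cases hTB : T ∈ B
        · rw [if_pos hTB]
        · rw [if_neg hTB]
          omega
    · rw [if_neg h, if_neg h]
  have rhs : ∑ S ∈ P, ∑ T ∈ P, (if S ∩ T = ∅ then 1 else 0 : ℕ) = Nat.choose n r * d := by
    have : ∀ S ∈ P, ∑ T ∈ P, (if S ∩ T = ∅ then 1 else 0 : ℕ) = d := by
      intro S hS
      rw [← hdS S hS, Finset.card_filter]
    rw [Finset.sum_congr rfl this, Finset.sum_const, smul_eq_mul]
    congr 1
    rw [hP, Finset.card_powersetCard, Finset.card_range]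
  have lhsA : ∑ S ∈ P, ∑ T ∈ P, (if S ∩ T = ∅ then (if S ∈ A then 1 else 0) else 0 : ℕ)
      = A.card * d := by
    have h1 : ∀ S ∈ P, ∑ T ∈ P, (if S ∩ T = ∅ then (if S ∈ A then 1 else 0) else 0 : ℕ)
        = if S ∈ A then d else 0 := by
      intro S hS
      by_cases hSA : S ∈ A
      · simp only [hSA, if_true]
        rw [← hdS S hS, Finset.card_filter]
      · simp [hSA]
    rw [Finset.sum_congr rfl h1, Finset.sum_ite_mem, Finset.inter_eq_right.mpr hA,
      Finset.sum_const, smul_eq_mul]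
  have lhsB : ∑ S ∈ P, ∑ T ∈ P, (if S ∩ T = ∅ then (if T ∈ B then 1 else 0) else 0 : ℕ)
      = B.card * d := by
    rw [Finset.sum_comm]
    have h1 : ∀ T ∈ P, ∑ S ∈ P, (if S ∩ T = ∅ then (if T ∈ B then 1 else 0) else 0 : ℕ)
        = if T ∈ B then d else 0 := by
      intro T hT
      by_cases hTB : T ∈ B
      · simp only [hTB, if_true]
        have : ∀ S, S ∩ T = ∅ ↔ T ∩ S = ∅ := fun S => by rw [Finset.inter_comm]
        calc ∑ S ∈ P, (if S ∩ T = ∅ then 1 else 0 : ℕ)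
            = ∑ S ∈ P, (if T ∩ S = ∅ then 1 else 0 : ℕ) := by
              exact Finset.sum_congr rfl fun S _ => if_congr (this S) rfl rfl
          _ = d := by rw [← hdS T hT, Finset.card_filter]
      · simp [hTB]
    rw [Finset.sum_congr rfl h1, Finset.sum_ite_mem, Finset.inter_eq_right.mpr hB,
      Finset.sum_const, smul_eq_mul]
  have split : ∑ S ∈ P, ∑ T ∈ P, (if S ∩ T = ∅ then
      ((if S ∈ A then 1 else 0) + (if T ∈ B then 1 else 0)) else 0 : ℕ)
      = A.card * d + B.card * d := by
    rw [← lhsA, ← lhsB, ← Finset.sum_add_distrib]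
    refine Finset.sum_congr rfl fun S _ => ?_
    rw [← Finset.sum_add_distrib]
    refine Finset.sum_congr rfl fun T _ => ?_
    split_ifs <;> simp
  rw [split, rhs] at key
  have : (A.card + B.card) * d ≤ Nat.choose n r * d := by
    rw [add_mul]; exact key
  exact Nat.le_of_mul_le_mul_right this hd0
end

section
/- Fix r ≥ 3 and 1 ≤ C < 3/2. For n sufficiently large, every intersecting family F ⊆ binom([n], r) satisfies d_C(F) ≤ (3 - 2C)·binom(n-3, r-2). -/
open Finset

open Finset

namespace Aux11

/-- degree of a vertex is at most maxDeg -/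
lemma deg_le_maxDeg (F : Finset (Finset ℕ)) (w : ℕ) :
    (F.filter fun E => w ∈ E).card ≤ (F.biUnion id).sup (fun x => (F.filter fun E => x ∈ E).card) := by
  by_cases hw : w ∈ F.biUnion id
  · exact Finset.le_sup (f := fun x => (F.filter fun E => x ∈ E).card) hw
  · have h : F.filter (fun E => w ∈ E) = ∅ := by
      rw [Finset.filter_eq_empty_iff]
      intro E hE hwE
      exact hw (Finset.mem_biUnion.2 ⟨E, hE, hwE⟩)
    simp [h]

/-- master counting lemma -/
lemma count_master {n r : ℕ} {F : Finset (Finset ℕ)}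
    (hF : F ⊆ (Finset.range n).powersetCard r)
    (G : Finset (Finset ℕ)) (hG : G ⊆ F) (S P : Finset ℕ)
    (hP : P ⊆ Finset.range n)
    (h : ∀ A ∈ G, S ⊆ A ∧ ∀ p ∈ P, p ∉ A) :
    G.card ≤ (n - (S.card + P.card)).choose (r - S.card) := by
  rcases G.eq_empty_or_nonempty with rfl | ⟨A₀, hA₀⟩
  · simp
  have hmem : ∀ A ∈ G, A ⊆ Finset.range n ∧ A.card = r := by
    intro A hA
    exact Finset.mem_powersetCard.1 (hF (hG hA))
  have hSsub : S ⊆ Finset.range n := (h A₀ hA₀).1.trans (hmem A₀ hA₀).1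
  have hd : Disjoint S P := by
    rw [Finset.disjoint_left]
    intro p hpS hpP
    exact (h A₀ hA₀).2 p hpP ((h A₀ hA₀).1 hpS)
  have hcard := Finset.card_le_card_of_injOn (f := fun A => A \ S)
    (t := (Finset.range n \ (S ∪ P)).powersetCard (r - S.card))
    (fun A hA => by
      rcases h A hA with ⟨hSA, hPA⟩
      refine Finset.mem_powersetCard.2 ⟨?_, ?_⟩
      · intro p hp
        rcases Finset.mem_sdiff.1 hp with ⟨hpA, hpS⟩
        refine Finset.mem_sdiff.2 ⟨(hmem A hA).1 hpA, ?_⟩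
        intro hmemUP
        rcases Finset.mem_union.1 hmemUP with h1 | h2
        · exact hpS h1
        · exact hPA p h2 hpA
      · rw [Finset.card_sdiff_of_subset hSA, (hmem A hA).2])
    (fun A1 hA1 A2 hA2 heq => by
      have e1 : A1 = A1 \ S ∪ S := (Finset.sdiff_union_of_subset (h A1 hA1).1).symm
      have e2 : A2 = A2 \ S ∪ S := (Finset.sdiff_union_of_subset (h A2 hA2).1).symm
      rw [e1, e2]; simp only at heq; rw [heq])
  calc G.card ≤ ((Finset.range n \ (S ∪ P)).powersetCard (r - S.card)).card := hcard
    _ = (n - (S.card + P.card)).choose (r - S.card) := by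
        rw [Finset.card_powersetCard, Finset.card_sdiff_of_subset (Finset.union_subset hSsub hP),
          Finset.card_union_of_disjoint hd, Finset.card_range]

variable {n r : ℕ} {F : Finset (Finset ℕ)}

lemma count3 (hF : F ⊆ (Finset.range n).powersetCard r)
    (G : Finset (Finset ℕ)) (hG : G ⊆ F) (p q w : ℕ)
    (hpq : p ≠ q) (hpw : p ≠ w) (hqw : q ≠ w)
    (h : ∀ A ∈ G, p ∈ A ∧ q ∈ A ∧ w ∈ A) :
    G.card ≤ (n - 3).choose (r - 3) := by
  have hS : ({p, q, w} : Finset ℕ).card = 3 := by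
    rw [Finset.card_insert_of_notMem (by simp [hpq, hpw]),
      Finset.card_insert_of_notMem (by simp [hqw]), Finset.card_singleton]
  have := count_master hF G hG {p, q, w} ∅ (by simp)
    (fun A hA => ⟨by
      intro t ht
      simp only [Finset.mem_insert, Finset.mem_singleton] at ht
      rcases ht with rfl | rfl | rfl
      exacts [(h A hA).1, (h A hA).2.1, (h A hA).2.2], by simp⟩)
  simpa [hS] using this

lemma count2avoid (hF : F ⊆ (Finset.range n).powersetCard r)
    (G : Finset (Finset ℕ)) (hG : G ⊆ F) (p q x : ℕ)
    (hpq : p ≠ q) (hxp : x ≠ p) (hxq : x ≠ q) (hx : x ∈ Finset.range n)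
    (h : ∀ A ∈ G, p ∈ A ∧ q ∈ A ∧ x ∉ A) :
    G.card ≤ (n - 3).choose (r - 2) := by
  have hS : ({p, q} : Finset ℕ).card = 2 := by
    rw [Finset.card_insert_of_notMem (by simp [hpq]), Finset.card_singleton]
  have := count_master hF G hG {p, q} {x} (by simp [Finset.mem_range.1 hx])
    (fun A hA => ⟨by
      intro t ht
      simp only [Finset.mem_insert, Finset.mem_singleton] at ht
      rcases ht with rfl | rfl
      exacts [(h A hA).1, (h A hA).2.1], by
      intro t ht
      simp only [Finset.mem_singleton] at ht
      subst ht
      exact (h A hA).2.2⟩)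
  simpa [hS] using this

lemma cover_sum (G : Finset (Finset ℕ)) (B : Finset ℕ)
    (h : ∀ A ∈ G, ∃ p ∈ B, p ∈ A) :
    G.card ≤ ∑ p ∈ B, (G.filter fun A => p ∈ A).card := by
  calc G.card ≤ (B.biUnion fun p => G.filter fun A => p ∈ A).card := by
        apply Finset.card_le_card
        intro A hA
        rcases h A hA with ⟨p, hp, hpA⟩
        exact Finset.mem_biUnion.2 ⟨p, hp, Finset.mem_filter.2 ⟨hA, hpA⟩⟩
    _ ≤ ∑ p ∈ B, (G.filter fun A => p ∈ A).card := Finset.card_biUnion_le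

/-- covering + per-element bound -/
lemma cover_bound (hF : F ⊆ (Finset.range n).powersetCard r)
    (G : Finset (Finset ℕ)) (B : Finset ℕ) (hBcard : B.card ≤ r)
    (h : ∀ A ∈ G, ∃ p ∈ B, p ∈ A)
    (hper : ∀ p ∈ B, (G.filter fun A => p ∈ A).card ≤ (n - 3).choose (r - 3)) :
    G.card ≤ r * (n - 3).choose (r - 3) := by
  calc G.card ≤ ∑ p ∈ B, (G.filter fun A => p ∈ A).card := cover_sum G B h
    _ ≤ B.card * (n - 3).choose (r - 3) := Finset.sum_le_card_nsmul _ _ _ hper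
    _ ≤ r * (n - 3).choose (r - 3) := Nat.mul_le_mul_right _ hBcard


/-- Dichotomy: if `Y` has no common element outside `T`, then any family `G`
    cross-intersecting with `Y` (intersections outside `T`), whose members all
    contain a fixed element `g0`, is small. -/
lemma dich (hF : F ⊆ (Finset.range n).powersetCard r)
    (Y G : Finset (Finset ℕ)) (hG : G ⊆ F)
    (hYne : Y.Nonempty) (T : Finset ℕ) (g0 : ℕ) (hg0T : g0 ∈ T)
    (hYF : ∀ A ∈ Y, A.card ≤ r)
    (hg0 : ∀ B ∈ G, g0 ∈ B)
    (hcross : ∀ B ∈ G, ∀ A ∈ Y, ∃ t, t ∈ A ∧ t ∈ B ∧ t ∉ T)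
    (hnc : ∀ u, u ∉ T → ∃ A ∈ Y, u ∉ A) :
    G.card ≤ r * (r * (n - 3).choose (r - 3)) := by
  obtain ⟨A₁, hA₁⟩ := hYne
  calc G.card ≤ ∑ p ∈ A₁ \ T, (G.filter fun B => p ∈ B).card := by
        apply cover_sum
        intro B hB
        obtain ⟨t, ht1, ht2, ht3⟩ := hcross B hB A₁ hA₁
        exact ⟨t, Finset.mem_sdiff.2 ⟨ht1, ht3⟩, ht2⟩
    _ ≤ (A₁ \ T).card * (r * (n - 3).choose (r - 3)) := by
        apply Finset.sum_le_card_nsmul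
        intro p hp
        rcases Finset.mem_sdiff.1 hp with ⟨hpA₁, hpT⟩
        -- second level
        obtain ⟨A₂, hA₂, hpA₂⟩ := hnc p hpT
        calc (G.filter fun B => p ∈ B).card
            ≤ ∑ q ∈ A₂ \ T, ((G.filter fun B => p ∈ B).filter fun B => q ∈ B).card := by
              apply cover_sum
              intro B hB
              rcases Finset.mem_filter.1 hB with ⟨hBG, _⟩
              obtain ⟨t, ht1, ht2, ht3⟩ := hcross B hBG A₂ hA₂
              exact ⟨t, Finset.mem_sdiff.2 ⟨ht1, ht3⟩, ht2⟩
          _ ≤ (A₂ \ T).card * (n - 3).choose (r - 3) := by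
              apply Finset.sum_le_card_nsmul
              intro q hq
              rcases Finset.mem_sdiff.1 hq with ⟨hqA₂, hqT⟩
              have hqp : q ≠ p := fun h => hpA₂ (h ▸ hqA₂)
              apply count3 hF _ (fun B hB => hG (Finset.mem_filter.1 (Finset.mem_filter.1 hB).1).1) g0 p q
              · intro h; exact hpT (h ▸ hg0T)
              · intro h; exact hqT (h ▸ hg0T)
              · exact hqp.symm
              · intro B hB
                rcases Finset.mem_filter.1 hB with ⟨hB1, hqB⟩
                rcases Finset.mem_filter.1 hB1 with ⟨hBG, hpB⟩
                exact ⟨hg0 B hBG, hpB, hqB⟩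
          _ ≤ r * (n - 3).choose (r - 3) := by
              apply Nat.mul_le_mul_right
              exact le_trans (Finset.card_le_card (Finset.sdiff_subset)) (hYF A₂ hA₂)
    _ ≤ r * (r * (n - 3).choose (r - 3)) := by
        apply Nat.mul_le_mul_right
        exact le_trans (Finset.card_le_card (Finset.sdiff_subset)) (hYF A₁ hA₁)

/-- if no pair covers `D` (and `D` intersecting), `D` is small -/
lemma tau3_bound (hF : F ⊆ (Finset.range n).powersetCard r)
    (D : Finset (Finset ℕ)) (hD : D ⊆ F)
    (hDcard : ∀ A ∈ D, A.card ≤ r)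
    (hint : ∀ A ∈ D, ∀ B ∈ D, ∃ t, t ∈ A ∧ t ∈ B)
    (hnc : ∀ y z : ℕ, ∃ B ∈ D, y ∉ B ∧ z ∉ B) :
    D.card ≤ r * (r * (r * (n - 3).choose (r - 3))) := by
  rcases D.eq_empty_or_nonempty with rfl | ⟨B₁, hB₁⟩
  · simp
  calc D.card ≤ ∑ p ∈ B₁, (D.filter fun A => p ∈ A).card := by
        apply cover_sum
        intro A hA
        obtain ⟨t, ht1, ht2⟩ := hint A hA B₁ hB₁
        exact ⟨t, ht2, ht1⟩
    _ ≤ B₁.card * (r * (r * (n - 3).choose (r - 3))) := by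
        apply Finset.sum_le_card_nsmul
        intro p _
        obtain ⟨B₂, hB₂, hpB₂, -⟩ := hnc p p
        calc (D.filter fun A => p ∈ A).card
            ≤ ∑ q ∈ B₂, ((D.filter fun A => p ∈ A).filter fun A => q ∈ A).card := by
              apply cover_sum
              intro A hA
              obtain ⟨t, ht1, ht2⟩ := hint A (Finset.mem_filter.1 hA).1 B₂ hB₂
              exact ⟨t, ht2, ht1⟩
          _ ≤ B₂.card * (r * (n - 3).choose (r - 3)) := by
              apply Finset.sum_le_card_nsmul
              intro q hqB₂
              have hqp : q ≠ p := fun h => hpB₂ (h ▸ hqB₂)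
              obtain ⟨B₃, hB₃, hpB₃, hqB₃⟩ := hnc p q
              calc ((D.filter fun A => p ∈ A).filter fun A => q ∈ A).card
                  ≤ ∑ w ∈ B₃, (((D.filter fun A => p ∈ A).filter fun A => q ∈ A).filter
                      fun A => w ∈ A).card := by
                    apply cover_sum
                    intro A hA
                    obtain ⟨t, ht1, ht2⟩ := hint A
                      (Finset.mem_filter.1 (Finset.mem_filter.1 hA).1).1 B₃ hB₃
                    exact ⟨t, ht2, ht1⟩
                _ ≤ B₃.card * (n - 3).choose (r - 3) := by
                    apply Finset.sum_le_card_nsmul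
                    intro w hwB₃
                    have hwp : w ≠ p := fun h => hpB₃ (h ▸ hwB₃)
                    have hwq : w ≠ q := fun h => hqB₃ (h ▸ hwB₃)
                    apply count3 hF _ ?_ p q w hqp.symm hwp.symm hwq.symm
                    · intro A hA
                      rcases Finset.mem_filter.1 hA with ⟨hA1, hwA⟩
                      rcases Finset.mem_filter.1 hA1 with ⟨hA2, hqA⟩
                      rcases Finset.mem_filter.1 hA2 with ⟨hAD, hpA⟩
                      exact ⟨hpA, hqA, hwA⟩
                    · intro A hA
                      rcases Finset.mem_filter.1 hA with ⟨hA1, _⟩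
                      rcases Finset.mem_filter.1 hA1 with ⟨hA2, _⟩
                      exact hD (Finset.mem_filter.1 hA2).1
                _ ≤ r * (n - 3).choose (r - 3) :=
                    Nat.mul_le_mul_right _ (hDcard B₃ hB₃)
          _ ≤ r * (r * (n - 3).choose (r - 3)) :=
              Nat.mul_le_mul_right _ (hDcard B₂ hB₂)
    _ ≤ r * (r * (r * (n - 3).choose (r - 3))) :=
        Nat.mul_le_mul_right _ (hDcard B₁ hB₁)


lemma eps_bound (r n : ℕ) (hr : 3 ≤ r) (ε : ℝ) (hε : 0 < ε)
    (hn : r + 3 + ⌈32 * (r : ℝ) ^ 4 / ε⌉₊ ≤ n) :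
    ((8 * r ^ 3 * ((n - 3).choose (r - 3) + 1) : ℕ) : ℝ) ≤ ε * ((n - 3).choose (r - 2)) := by
  have hrn : r + 3 ≤ n := by omega
  have hβ1 : 1 ≤ (n - 3).choose (r - 3) := Nat.choose_pos (by omega)
  have hid : (n - 3).choose (r - 2) * (r - 2) = (n - 3).choose (r - 3) * (n - r) := by
    have h1 := Nat.choose_succ_right_eq (n - 3) (r - 3)
    have e1 : r - 3 + 1 = r - 2 := by omega
    have e2 : n - 3 - (r - 3) = n - r := by omega
    rw [e1, e2] at h1
    exact h1
  set β : ℝ := ((n - 3).choose (r - 3) : ℝ) with hβdef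
  set b : ℝ := ((n - 3).choose (r - 2) : ℝ) with hbdef
  have hβR : (1 : ℝ) ≤ β := by rw [hβdef]; exact_mod_cast hβ1
  have hrR : (3 : ℝ) ≤ (r : ℝ) := by exact_mod_cast hr
  have hidR : b * ((r : ℝ) - 2) = β * ((n : ℝ) - r) := by
    have := congrArg (fun k : ℕ => (k : ℝ)) hid
    push_cast [Nat.cast_sub (show 2 ≤ r by omega), Nat.cast_sub (show r ≤ n by omega)] at this
    convert this using 2 <;> push_cast <;> ring
  have hceil : 32 * (r : ℝ) ^ 4 / ε ≤ (⌈32 * (r : ℝ) ^ 4 / ε⌉₊ : ℝ) := Nat.le_ceil _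
  have hnR : (r : ℝ) + 3 + (⌈32 * (r : ℝ) ^ 4 / ε⌉₊ : ℝ) ≤ (n : ℝ) := by exact_mod_cast hn
  have hnr : 32 * (r : ℝ) ^ 4 / ε ≤ (n : ℝ) - r := by linarith
  have hen : 32 * (r : ℝ) ^ 4 ≤ ε * ((n : ℝ) - r) := by
    rw [div_le_iff₀ hε] at hnr
    linarith [hnr]
  have hr2 : (0 : ℝ) < (r : ℝ) - 2 := by linarith
  have key : (8 * (r : ℝ) ^ 3 * (β + 1)) * ((r : ℝ) - 2) ≤ (ε * b) * ((r : ℝ) - 2) := by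
    have e3 : (ε * b) * ((r : ℝ) - 2) = β * (ε * ((n : ℝ) - r)) := by
      rw [mul_assoc, hidR]; ring
    rw [e3]
    have h16 : (8 * (r : ℝ) ^ 3 * (β + 1)) * ((r : ℝ) - 2) ≤ 32 * (r : ℝ) ^ 4 * β := by
      have expand : 32 * (r:ℝ)^4 * β - (8 * (r:ℝ)^3 * (β + 1)) * ((r:ℝ) - 2)
          = 8 * (r:ℝ)^3 * (3*(r:ℝ)*β + 2*β - (r:ℝ) + 2) := by ring
      have h1 : (r:ℝ) ≤ 3 * (r:ℝ) * β := by nlinarith [hβR, hrR]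
      have h2 : (0:ℝ) ≤ 8 * (r:ℝ)^3 := by positivity
      nlinarith [mul_nonneg h2 (by linarith : (0:ℝ) ≤ 3*(r:ℝ)*β + 2*β - (r:ℝ) + 2)]
    have h32 : 32 * (r : ℝ) ^ 4 * β ≤ β * (ε * ((n : ℝ) - r)) := by
      have := mul_le_mul_of_nonneg_left hen (by linarith : (0:ℝ) ≤ β)
      linarith [this]
    linarith
  have := le_of_mul_le_mul_right key hr2
  push_cast
  linarith [this]


lemma filter_split {α : Type*} [DecidableEq α] (s : Finset α) (p q : α → Prop)
    [DecidablePred p] [DecidablePred q] :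
    (s.filter p).card
      = (s.filter fun a => p a ∧ q a).card + (s.filter fun a => p a ∧ ¬ q a).card := by
  rw [← Finset.filter_filter, ← Finset.filter_filter,
    Finset.card_filter_add_card_filter_not]

lemma card_filter_congr {α : Type*} [DecidableEq α] (s : Finset α) (p q : α → Prop)
    [DecidablePred p] [DecidablePred q] (h : ∀ a ∈ s, p a ↔ q a) :
    (s.filter p).card = (s.filter q).card := by
  congr 1
  ext a
  simp only [Finset.mem_filter]
  exact ⟨fun ⟨h1, h2⟩ => ⟨h1, (h a h1).1 h2⟩, fun ⟨h1, h2⟩ => ⟨h1, (h a h1).2 h2⟩⟩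

/-- if deg w ≤ deg x then the (w,not x) class is at most the (x,not w) class -/
lemma class_ineq (F : Finset (Finset ℕ)) (x w : ℕ)
    (h : (F.filter fun E => w ∈ E).card ≤ (F.filter fun E => x ∈ E).card) :
    (F.filter fun A => w ∈ A ∧ x ∉ A).card ≤ (F.filter fun A => x ∈ A ∧ w ∉ A).card := by
  have h1 := filter_split F (fun A => w ∈ A) (fun A => x ∈ A)
  have h2 := filter_split F (fun A => x ∈ A) (fun A => w ∈ A)
  have h3 : (F.filter fun A => w ∈ A ∧ x ∈ A).card = (F.filter fun A => x ∈ A ∧ w ∈ A).card :=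
    card_filter_congr F _ _ (fun a _ => and_comm)
  omega

end Aux11

set_option maxHeartbeats 4000000 in
open Finset in
theorem stmt11 (r : ℕ) (hr : 3 ≤ r) (C : ℝ) (hC1 : 1 ≤ C) (hC2 : C < 3 / 2) :
    ∃ N : ℕ, ∀ n ≥ N, ∀ F ⊆ (Finset.range n).powersetCard r, FamIntersecting F →
      (F.card : ℝ) - C * maxDeg F ≤ (3 - 2 * C) * Nat.choose (n - 3) (r - 2) := by
  have hε : (0:ℝ) < 3 - 2 * C := by linarith
  refine ⟨r + 3 + ⌈32 * (r : ℝ) ^ 4 / (3 - 2 * C)⌉₊, ?_⟩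
  intro n hn F hF hInt
  have hMb := Aux11.eps_bound r n hr (3 - 2 * C) hε hn
  have hRHS0 : (0:ℝ) ≤ (3 - 2 * C) * ((n - 3).choose (r - 2) : ℝ) :=
    mul_nonneg hε.le (Nat.cast_nonneg _)
  -- members of F
  have hmem : ∀ A ∈ F, A ⊆ Finset.range n ∧ A.card = r :=
    fun A hA => Finset.mem_powersetCard.1 (hF hA)
  rcases Finset.eq_empty_or_nonempty F with rfl | hFne
  · simpa [maxDeg] using hRHS0
  obtain ⟨A₀, hA₀⟩ := hFne
  -- the max-degree vertex x
  have hbne : (F.biUnion id).Nonempty := by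
    obtain ⟨t, ht⟩ := Finset.card_pos.1 (by rw [(hmem A₀ hA₀).2]; omega : 0 < A₀.card)
    exact ⟨t, Finset.mem_biUnion.2 ⟨A₀, hA₀, ht⟩⟩
  obtain ⟨x, hxmem, hxeq⟩ := Finset.exists_mem_eq_sup (F.biUnion id) hbne
    (fun x => (F.filter fun E => x ∈ E).card)
  have hxeq' : maxDeg F = (F.filter fun E => x ∈ E).card := hxeq
  have hdegmax : ∀ w : ℕ, (F.filter fun E => w ∈ E).card ≤ (F.filter fun E => x ∈ E).card :=
    fun w => le_trans (Aux11.deg_le_maxDeg F w) (le_of_eq hxeq)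
  have hxrange : x ∈ Finset.range n := by
    obtain ⟨A, hA, hxA⟩ := Finset.mem_biUnion.1 hxmem
    exact (hmem A hA).1 hxA
  set D := F.filter (fun A => x ∉ A) with hDdef
  have hDF : D ⊆ F := Finset.filter_subset _ _
  have hsplitD : (F.filter fun A => x ∈ A).card + D.card = F.card :=
    Finset.card_filter_add_card_filter_not (p := fun A => x ∈ A)
  -- reduction: enough to bound D.card
  have hred : ∀ k : ℕ, D.card ≤ k → ((k:ℝ) ≤ (3 - 2 * C) * ((n - 3).choose (r - 2) : ℝ)) →
      (F.card : ℝ) - C * maxDeg F ≤ (3 - 2 * C) * ((n - 3).choose (r - 2) : ℝ) := by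
    intro k hk hkb
    have e2 : ((maxDeg F : ℝ)) = ((F.filter fun E => x ∈ E).card : ℝ) := by
      exact_mod_cast congrArg Nat.cast hxeq'
    have e1 : ((F.card : ℕ) : ℝ) = ((F.filter fun E => x ∈ E).card : ℝ) + (D.card : ℝ) := by
      exact_mod_cast congrArg Nat.cast hsplitD.symm
    have hDk : (D.card : ℝ) ≤ (k : ℝ) := Nat.cast_le.2 hk
    have hX0 : (0:ℝ) ≤ ((F.filter fun E => x ∈ E).card : ℝ) := Nat.cast_nonneg _
    have hCm : (0:ℝ) ≤ (C - 1) * ((F.filter fun E => x ∈ E).card : ℝ) :=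
      mul_nonneg (by linarith) hX0
    rw [e2, e1]
    linarith
  have hsmall : ∀ k : ℕ, D.card ≤ k →
      (k ≤ 8 * r^3 * ((n-3).choose (r-3) + 1)) →
      (F.card : ℝ) - C * maxDeg F ≤ (3 - 2 * C) * ((n - 3).choose (r - 2) : ℝ) :=
    fun k h1 h2 => hred k h1 (le_trans (Nat.cast_le.2 h2) hMb)
  have hM8 : ∀ k : ℕ, k ≤ 8 * r^3 * (n-3).choose (r-3) →
      k ≤ 8 * r^3 * ((n-3).choose (r-3) + 1) :=
    fun k hk => le_trans hk (Nat.mul_le_mul_left _ (by omega))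
  have hr13 : r ≤ r^3 := by
    calc r = r^1 := (pow_one r).symm
      _ ≤ r^3 := Nat.pow_le_pow_right (by omega) (by omega)
  have hr23 : r^2 ≤ r^3 := Nat.pow_le_pow_right (by omega) (by omega)
  have hbig : ∀ c : ℕ, c ≤ r^3 → c ≤ 8 * r^3 :=
    fun c hc => le_trans hc (Nat.le_mul_of_pos_left _ (by norm_num))
  have h2r2 : 2*r ≤ r^2 := by
    calc 2*r ≤ r*r := Nat.mul_le_mul_right r (by omega)
      _ = r^2 := by ring
  have h3r2 : 3*r ≤ r^2 := by
    calc 3*r ≤ r*r := Nat.mul_le_mul_right r (by omega)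
      _ = r^2 := by ring
  have hc22 : 2*r ≤ r^3 := le_trans h2r2 hr23
  have hc33 : 3*r ≤ r^3 := le_trans h3r2 hr23
  have hc21 : 2*r+1 ≤ r^3 := le_trans (by omega) hc33
  have hc32 : 3*r^2 ≤ r^3 := by
    calc 3*r^2 ≤ r*r^2 := Nat.mul_le_mul_right _ hr
      _ = r^3 := by ring
  have hfin : ∀ m c : ℕ, D.card ≤ m → m ≤ c * (n-3).choose (r-3) → c ≤ 8 * r^3 →
      (F.card : ℝ) - C * maxDeg F ≤ (3 - 2 * C) * ((n - 3).choose (r - 2) : ℝ) :=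
    fun m c h1 h2 h3 => hsmall m h1 (hM8 m (le_trans h2 (Nat.mul_le_mul_right _ h3)))
  -- trivially done if D is empty
  rcases Finset.eq_empty_or_nonempty D with hDe | hDne
  · exact hred 0 (by rw [hDe]; simp) (by simpa using hRHS0)
  obtain ⟨B₀', hB₀'⟩ := hDne
  by_cases h1 : ∃ y, ∀ B ∈ D, y ∈ B
  · -- τ(D) = 1 : cover {x, y}
    obtain ⟨y, hy⟩ := h1
    have hB₀F : B₀' ∈ F := hDF hB₀'
    have hxB₀ : x ∉ B₀' := (Finset.mem_filter.1 hB₀').2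
    have hyB₀ : y ∈ B₀' := hy B₀' hB₀'
    have hyx : y ≠ x := fun h => hxB₀ (h ▸ hyB₀)
    set Xcl := F.filter (fun A => x ∈ A ∧ y ∉ A) with hXdef
    have hXsub : Xcl ⊆ F := Finset.filter_subset _ _
    have hDeq : F.filter (fun A => y ∈ A ∧ x ∉ A) = D := by
      ext A
      simp only [Finset.mem_filter, hDdef]
      exact ⟨fun ⟨ha, hb⟩ => ⟨ha, hb.2⟩,
        fun ⟨ha, hb⟩ => ⟨ha, hy A (Finset.mem_filter.2 ⟨ha, hb⟩), hb⟩⟩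
    have hDX : D.card ≤ Xcl.card := by
      have := Aux11.class_ineq F x y (hdegmax y)
      rwa [hDeq] at this
    have hXne : Xcl.Nonempty :=
      Finset.card_pos.1 (lt_of_lt_of_le (Finset.card_pos.2 ⟨B₀', hB₀'⟩) hDX)
    by_cases hu : ∃ u, u ≠ x ∧ ∀ A ∈ Xcl, u ∈ A
    · obtain ⟨u, hux, hu⟩ := hu
      by_cases hv : ∃ v, v ≠ y ∧ ∀ B ∈ D, v ∈ B
      · obtain ⟨v, hvy, hv⟩ := hv
        have hvB₀ : v ∈ B₀' := hv B₀' hB₀'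
        have hvx : v ≠ x := fun h => hxB₀ (h ▸ hvB₀)
        by_cases hAv : ∀ A ∈ Xcl, v ∈ A
        · -- tight case: both classes are stars at v
          have hdisj : Disjoint Xcl D := by
            rw [Finset.disjoint_left]
            intro A hA1 hA2
            exact (Finset.mem_filter.1 hA2).2 (Finset.mem_filter.1 hA1).2.1
          have hdegv : Xcl.card + D.card ≤ (F.filter fun E => x ∈ E).card := by
            calc Xcl.card + D.card = (Xcl ∪ D).card :=
                  (Finset.card_union_of_disjoint hdisj).symm
              _ ≤ (F.filter fun E => v ∈ E).card := by
                  apply Finset.card_le_card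
                  intro A hA
                  rcases Finset.mem_union.1 hA with h | h
                  · exact Finset.mem_filter.2 ⟨hXsub h, hAv A h⟩
                  · exact Finset.mem_filter.2 ⟨hDF h, hv A h⟩
              _ ≤ _ := hdegmax v
          have hDb : D.card ≤ (n-3).choose (r-2) :=
            Aux11.count2avoid hF D hDF y v x hvy.symm hyx.symm hvx.symm hxrange
              (fun B hB => ⟨hy B hB, hv B hB, (Finset.mem_filter.1 hB).2⟩)
          have e2 : ((maxDeg F : ℝ)) = ((F.filter fun E => x ∈ E).card : ℝ) := by
            exact_mod_cast congrArg Nat.cast hxeq'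
          have e1 : ((F.card : ℕ) : ℝ)
              = ((F.filter fun E => x ∈ E).card : ℝ) + (D.card : ℝ) := by
            exact_mod_cast congrArg Nat.cast hsplitD.symm
          have hXDn : 2 * D.card ≤ (F.filter fun E => x ∈ E).card := by omega
          have hXD : 2 * (D.card : ℝ) ≤ ((F.filter fun E => x ∈ E).card : ℝ) := by
            exact_mod_cast Nat.cast_le.2 hXDn
          have hDbR : (D.card : ℝ) ≤ ((n-3).choose (r-2) : ℝ) := Nat.cast_le.2 hDb
          rw [e2, e1]
          nlinarith [mul_nonneg hε.le (sub_nonneg.2 hDbR),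
            mul_nonneg (by linarith : (0:ℝ) ≤ C - 1) (sub_nonneg.2 hXD)]
        · -- some A₁ in the x-class misses v : D is tiny
          push_neg at hAv
          obtain ⟨A₁, hA₁, hvA₁⟩ := hAv
          have hA₁F : A₁ ∈ F := hXsub hA₁
          have hyA₁ : y ∉ A₁ := (Finset.mem_filter.1 hA₁).2.2
          have hDrb : D.card ≤ r * (n-3).choose (r-3) := by
            apply Aux11.cover_bound hF D A₁ (le_of_eq (hmem A₁ hA₁F).2)
            · intro B hB
              obtain ⟨t, ht⟩ := hInt A₁ hA₁F B (hDF hB)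
              exact ⟨t, (Finset.mem_inter.1 ht).1, (Finset.mem_inter.1 ht).2⟩
            · intro p hpA₁
              by_cases hpx : p = x
              · have hemp : D.filter (fun A => p ∈ A) = ∅ := by
                  rw [Finset.filter_eq_empty_iff]
                  intro B hB
                  rw [hpx]
                  exact (Finset.mem_filter.1 hB).2
                simp [hemp]
              · have hpy : p ≠ y := fun h => hyA₁ (h ▸ hpA₁)
                have hpv : p ≠ v := fun h => hvA₁ (h ▸ hpA₁)
                apply Aux11.count3 hF _ (fun B hB => hDF (Finset.mem_filter.1 hB).1) y v p
                  hvy.symm hpy.symm hpv.symm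
                intro B hB
                rcases Finset.mem_filter.1 hB with ⟨hBD, hpB⟩
                exact ⟨hy B hBD, hv B hBD, hpB⟩
          exact hfin _ r hDrb le_rfl (hbig r hr13)
      · -- the diversity class D has no common second element
        push_neg at hv
        have hb := Aux11.dich hF D Xcl hXsub ⟨B₀', hB₀'⟩ {x, y} x (by simp)
          (fun A hA => le_of_eq (hmem A (hDF hA)).2)
          (fun B hB => (Finset.mem_filter.1 hB).2.1)
          (fun B hB A hA => by
            obtain ⟨t, ht⟩ := hInt A (hDF hA) B (hXsub hB)
            refine ⟨t, (Finset.mem_inter.1 ht).1, (Finset.mem_inter.1 ht).2, ?_⟩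
            simp only [Finset.mem_insert, Finset.mem_singleton]
            rintro (rfl | rfl)
            · exact (Finset.mem_filter.1 hA).2 (Finset.mem_inter.1 ht).1
            · exact (Finset.mem_filter.1 hB).2.2 (Finset.mem_inter.1 ht).2)
          (fun w hw => hv w (by
            simp only [Finset.mem_insert, Finset.mem_singleton] at hw
            exact fun h => hw (Or.inr h)))
        exact hfin _ (r^2) (le_trans hDX (by calc Xcl.card ≤ r * (r * (n-3).choose (r-3)) := hb
          _ = r^2 * (n-3).choose (r-3) := by ring)) le_rfl (hbig (r^2) hr23)
    · -- the x-class has no common element besides x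
      push_neg at hu
      have hb := Aux11.dich hF Xcl D hDF hXne {x, y} y (by simp)
        (fun A hA => le_of_eq (hmem A (hXsub hA)).2)
        (fun B hB => hy B hB)
        (fun B hB A hA => by
          obtain ⟨t, ht⟩ := hInt A (hXsub hA) B (hDF hB)
          refine ⟨t, (Finset.mem_inter.1 ht).1, (Finset.mem_inter.1 ht).2, ?_⟩
          simp only [Finset.mem_insert, Finset.mem_singleton]
          rintro (rfl | rfl)
          · exact (Finset.mem_filter.1 hB).2 (Finset.mem_inter.1 ht).2
          · exact (Finset.mem_filter.1 hA).2.2 (Finset.mem_inter.1 ht).1)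
        (fun w hw => hu w (by
          simp only [Finset.mem_insert, Finset.mem_singleton] at hw
          exact fun h => hw (Or.inl h)))
      exact hfin _ (r^2) (by calc D.card ≤ r * (r * (n-3).choose (r-3)) := hb
        _ = r^2 * (n-3).choose (r-3) := by ring) le_rfl (hbig (r^2) hr23)

  · by_cases h2 : ∃ y z, ∀ B ∈ D, y ∈ B ∨ z ∈ B
    · -- τ(D) = 2 : cover {x, y, z}
      push_neg at h1
      obtain ⟨y, z, hyz⟩ := h2
      obtain ⟨By, hBy, hzBy⟩ := h1 z
      obtain ⟨Bz, hBz, hyBz⟩ := h1 y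
      have hByF : By ∈ F := hDF hBy
      have hBzF : Bz ∈ F := hDF hBz
      have hxBy : x ∉ By := (Finset.mem_filter.1 hBy).2
      have hxBz : x ∉ Bz := (Finset.mem_filter.1 hBz).2
      have hyBy : y ∈ By := (hyz By hBy).resolve_right hzBy
      have hzBz : z ∈ Bz := (hyz Bz hBz).resolve_left hyBz
      have hyzne : y ≠ z := fun h => hzBy (h ▸ hyBy)
      have hyx : y ≠ x := fun h => hxBy (h ▸ hyBy)
      have hzx : z ≠ x := fun h => hxBz (h ▸ hzBz)
      set Ycl := F.filter (fun A => y ∈ A ∧ x ∉ A ∧ z ∉ A) with hYdef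
      set Zcl := F.filter (fun A => z ∈ A ∧ x ∉ A ∧ y ∉ A) with hZdef
      set YZcl := F.filter (fun A => y ∈ A ∧ x ∉ A ∧ z ∈ A) with hYZdef
      set Xcl := F.filter (fun A => x ∈ A ∧ y ∉ A ∧ z ∉ A) with hXdef
      set XYcl := F.filter (fun A => x ∈ A ∧ y ∈ A ∧ z ∉ A) with hXYdef
      set XZcl := F.filter (fun A => x ∈ A ∧ z ∈ A ∧ y ∉ A) with hXZdef
      set XYZcl := F.filter (fun A => x ∈ A ∧ y ∈ A ∧ z ∈ A) with hXYZdef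
      have hYsub : Ycl ⊆ F := Finset.filter_subset _ _
      have hZsub : Zcl ⊆ F := Finset.filter_subset _ _
      have hYZsub : YZcl ⊆ F := Finset.filter_subset _ _
      have hXsub : Xcl ⊆ F := Finset.filter_subset _ _
      have hXYsub : XYcl ⊆ F := Finset.filter_subset _ _
      have hXZsub : XZcl ⊆ F := Finset.filter_subset _ _
      have hXYZsub : XYZcl ⊆ F := Finset.filter_subset _ _
      have hBy_mem : By ∈ Ycl := Finset.mem_filter.2 ⟨hByF, hyBy, hxBy, hzBy⟩
      have hBz_mem : Bz ∈ Zcl := Finset.mem_filter.2 ⟨hBzF, hzBz, hxBz, hyBz⟩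
      -- splitting identities
      have sY := Aux11.filter_split F (fun A => y ∈ A ∧ x ∉ A) (fun A => z ∈ A)
      have sYa : (F.filter fun A => (y ∈ A ∧ x ∉ A) ∧ z ∈ A).card = YZcl.card :=
        Aux11.card_filter_congr F _ _ (fun A _ => by tauto)
      have sYb : (F.filter fun A => (y ∈ A ∧ x ∉ A) ∧ ¬ z ∈ A).card = Ycl.card :=
        Aux11.card_filter_congr F _ _ (fun A _ => by tauto)
      have sX := Aux11.filter_split F (fun A => x ∈ A ∧ y ∉ A) (fun A => z ∈ A)
      have sXa : (F.filter fun A => (x ∈ A ∧ y ∉ A) ∧ z ∈ A).card = XZcl.card :=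
        Aux11.card_filter_congr F _ _ (fun A _ => by tauto)
      have sXb : (F.filter fun A => (x ∈ A ∧ y ∉ A) ∧ ¬ z ∈ A).card = Xcl.card :=
        Aux11.card_filter_congr F _ _ (fun A _ => by tauto)
      have sZ := Aux11.filter_split F (fun A => z ∈ A ∧ x ∉ A) (fun A => y ∈ A)
      have sZa : (F.filter fun A => (z ∈ A ∧ x ∉ A) ∧ y ∈ A).card = YZcl.card :=
        Aux11.card_filter_congr F _ _ (fun A _ => by tauto)
      have sZb : (F.filter fun A => (z ∈ A ∧ x ∉ A) ∧ ¬ y ∈ A).card = Zcl.card :=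
        Aux11.card_filter_congr F _ _ (fun A _ => by tauto)
      have sW := Aux11.filter_split F (fun A => x ∈ A ∧ z ∉ A) (fun A => y ∈ A)
      have sWa : (F.filter fun A => (x ∈ A ∧ z ∉ A) ∧ y ∈ A).card = XYcl.card :=
        Aux11.card_filter_congr F _ _ (fun A _ => by tauto)
      have sWb : (F.filter fun A => (x ∈ A ∧ z ∉ A) ∧ ¬ y ∈ A).card = Xcl.card :=
        Aux11.card_filter_congr F _ _ (fun A _ => by tauto)
      have ciY := Aux11.class_ineq F x y (hdegmax y)
      have ciZ := Aux11.class_ineq F x z (hdegmax z)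
      have hC1 : Ycl.card + YZcl.card ≤ Xcl.card + XZcl.card := by omega
      have hC2 : Zcl.card + YZcl.card ≤ Xcl.card + XYcl.card := by omega
      -- degree of x expansions
      have tx1 := Aux11.filter_split F (fun E => x ∈ E) (fun A => y ∈ A)
      have tx1a := Aux11.filter_split F (fun A => x ∈ A ∧ y ∈ A) (fun A => z ∈ A)
      have tx1b : (F.filter fun A => (x ∈ A ∧ y ∈ A) ∧ z ∈ A).card = XYZcl.card :=
        Aux11.card_filter_congr F _ _ (fun A _ => by tauto)
      have tx1c : (F.filter fun A => (x ∈ A ∧ y ∈ A) ∧ ¬ z ∈ A).card = XYcl.card :=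
        Aux11.card_filter_congr F _ _ (fun A _ => by tauto)
      have tx2 := Aux11.filter_split F (fun E => x ∈ E) (fun A => z ∈ A)
      have tx2a := Aux11.filter_split F (fun A => x ∈ A ∧ z ∈ A) (fun A => y ∈ A)
      have tx2b : (F.filter fun A => (x ∈ A ∧ z ∈ A) ∧ y ∈ A).card = XYZcl.card :=
        Aux11.card_filter_congr F _ _ (fun A _ => by tauto)
      have tx2c : (F.filter fun A => (x ∈ A ∧ z ∈ A) ∧ ¬ y ∈ A).card = XZcl.card :=
        Aux11.card_filter_congr F _ _ (fun A _ => by tauto)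
      have hdegxy : (F.filter fun E => x ∈ E).card
          = XYcl.card + XYZcl.card + (Xcl.card + XZcl.card) := by omega
      have hdegxz : (F.filter fun E => x ∈ E).card
          = XZcl.card + XYZcl.card + (Xcl.card + XYcl.card) := by omega
      -- D is inside the union of the three x-free classes
      have hDle : D.card ≤ Ycl.card + YZcl.card + Zcl.card := by
        have hsub : D ⊆ (Ycl ∪ YZcl) ∪ Zcl := by
          intro B hB
          have hBF : B ∈ F := hDF hB
          have hxB : x ∉ B := (Finset.mem_filter.1 hB).2
          by_cases hyB : y ∈ B
          · by_cases hzB : z ∈ B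
            · exact Finset.mem_union_left _
                (Finset.mem_union_right _ (Finset.mem_filter.2 ⟨hBF, hyB, hxB, hzB⟩))
            · exact Finset.mem_union_left _
                (Finset.mem_union_left _ (Finset.mem_filter.2 ⟨hBF, hyB, hxB, hzB⟩))
          · have hzB : z ∈ B := (hyz B hB).resolve_left hyB
            exact Finset.mem_union_right _ (Finset.mem_filter.2 ⟨hBF, hzB, hxB, hyB⟩)
        calc D.card ≤ ((Ycl ∪ YZcl) ∪ Zcl).card := Finset.card_le_card hsub
          _ ≤ (Ycl ∪ YZcl).card + Zcl.card := Finset.card_union_le _ _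
          _ ≤ Ycl.card + YZcl.card + Zcl.card := by
              have := Finset.card_union_le Ycl YZcl; omega
      -- generic cover bound
      have hcover3 : ∀ (G : Finset (Finset ℕ)), G ⊆ F → ∀ (g1 g2 : ℕ), g1 ≠ g2 →
          (∀ A ∈ G, g1 ∈ A ∧ g2 ∈ A) → ∀ B₀ ∈ F, g1 ∉ B₀ → g2 ∉ B₀ →
          G.card ≤ r * (n-3).choose (r-3) := by
        intro G hGF g1 g2 h12 hg B₀ hB₀F hg1 hg2
        apply Aux11.cover_bound hF G B₀ (le_of_eq (hmem B₀ hB₀F).2)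
        · intro A hA
          obtain ⟨t, ht⟩ := hInt B₀ hB₀F A (hGF hA)
          exact ⟨t, (Finset.mem_inter.1 ht).1, (Finset.mem_inter.1 ht).2⟩
        · intro p hp
          have hp1 : p ≠ g1 := fun h => hg1 (h ▸ hp)
          have hp2 : p ≠ g2 := fun h => hg2 (h ▸ hp)
          apply Aux11.count3 hF _ (fun A hA => hGF (Finset.mem_filter.1 hA).1) g1 g2 p
            h12 hp1.symm hp2.symm
          intro A hA
          rcases Finset.mem_filter.1 hA with ⟨hAG, hpA⟩
          exact ⟨(hg A hAG).1, (hg A hAG).2, hpA⟩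
      -- cross-intersection point avoiding {x,y,z}
      have hmk : ∀ (B A : Finset ℕ), B ∈ F → A ∈ F → (x ∉ A ∨ x ∉ B) → (y ∉ A ∨ y ∉ B) →
          (z ∉ A ∨ z ∉ B) → ∃ t, t ∈ A ∧ t ∈ B ∧ t ∉ ({x, y, z} : Finset ℕ) := by
        intro B A hBF hAF hx1 hy1 hz1
        obtain ⟨t, ht⟩ := hInt A hAF B hBF
        have htA := (Finset.mem_inter.1 ht).1
        have htB := (Finset.mem_inter.1 ht).2
        refine ⟨t, htA, htB, ?_⟩
        simp only [Finset.mem_insert, Finset.mem_singleton]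
        rintro (rfl | rfl | rfl)
        · rcases hx1 with h | h
          exacts [h htA, h htB]
        · rcases hy1 with h | h
          exacts [h htA, h htB]
        · rcases hz1 with h | h
          exacts [h htA, h htB]
      have S_xz : XZcl.card ≤ r * (n-3).choose (r-3) :=
        hcover3 XZcl hXZsub x z hzx.symm
          (fun A hA => ⟨(Finset.mem_filter.1 hA).2.1, (Finset.mem_filter.1 hA).2.2.1⟩)
          By hByF hxBy hzBy
      have S_xy : XYcl.card ≤ r * (n-3).choose (r-3) :=
        hcover3 XYcl hXYsub x y hyx.symm
          (fun A hA => ⟨(Finset.mem_filter.1 hA).2.1, (Finset.mem_filter.1 hA).2.2.1⟩)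
          Bz hBzF hxBz hyBz
      have S_xyz : XYZcl.card ≤ (n-3).choose (r-3) :=
        Aux11.count3 hF XYZcl hXYZsub x y z hyx.symm hzx.symm hyzne
          (fun A hA => ⟨(Finset.mem_filter.1 hA).2.1, (Finset.mem_filter.1 hA).2.2.1,
            (Finset.mem_filter.1 hA).2.2.2⟩)
      rcases Finset.eq_empty_or_nonempty Xcl with hXe | ⟨A₀x, hA₀x⟩
      · -- no set meets the cover only in x
        have hx0 : Xcl.card = 0 := by rw [hXe]; rfl
        exact hfin _ (2*r) hDle (by linarith) (hbig _ hc22)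
      · have hxA₀x : x ∈ A₀x := (Finset.mem_filter.1 hA₀x).2.1
        have hyA₀x : y ∉ A₀x := (Finset.mem_filter.1 hA₀x).2.2.1
        have hzA₀x : z ∉ A₀x := (Finset.mem_filter.1 hA₀x).2.2.2
        have S_yz : YZcl.card ≤ r * (n-3).choose (r-3) :=
          hcover3 YZcl hYZsub y z hyzne
            (fun A hA => ⟨(Finset.mem_filter.1 hA).2.1, (Finset.mem_filter.1 hA).2.2.2⟩)
            A₀x (hXsub hA₀x) hyA₀x hzA₀x
        by_cases hcu : ∃ u, u ∉ ({x, y, z} : Finset ℕ) ∧ ∀ A ∈ Ycl, u ∈ A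
        · obtain ⟨u, huT, hucom⟩ := hcu
          have hux : u ≠ x := fun h => huT (by simp [h])
          have huy : u ≠ y := fun h => huT (by simp [h])
          have huz : u ≠ z := fun h => huT (by simp [h])
          by_cases hcv : ∃ v, v ∉ ({x, y, z} : Finset ℕ) ∧ ∀ B ∈ Zcl, v ∈ B
          · obtain ⟨v, hvT, hvcom⟩ := hcv
            have hvx : v ≠ x := fun h => hvT (by simp [h])
            have hvy : v ≠ y := fun h => hvT (by simp [h])
            have hvz : v ≠ z := fun h => hvT (by simp [h])
            -- disjointness facts
            have dXY : Disjoint Xcl Ycl := by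
              rw [Finset.disjoint_left]
              intro A h1' h2'
              exact (Finset.mem_filter.1 h2').2.2.1 (Finset.mem_filter.1 h1').2.1
            have dU2Z : Disjoint (Xcl ∪ Ycl) Zcl := by
              rw [Finset.disjoint_left]
              intro A h1' h2'
              rcases Finset.mem_union.1 h1' with h | h
              · exact (Finset.mem_filter.1 h2').2.2.1 (Finset.mem_filter.1 h).2.1
              · exact (Finset.mem_filter.1 h2').2.2.2 (Finset.mem_filter.1 h).2.1
            by_cases hall : (∀ B ∈ Xcl, u ∈ B) ∧ (∀ B ∈ Zcl, u ∈ B) ∧ (∀ B ∈ XZcl, u ∈ B)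
            · obtain ⟨hall1, hall2, hall3⟩ := hall
              have dU3 : Disjoint ((Xcl ∪ Ycl) ∪ Zcl) XZcl := by
                rw [Finset.disjoint_left]
                intro A h1' h2'
                rcases Finset.mem_union.1 h1' with h | h
                · rcases Finset.mem_union.1 h with h' | h'
                  · exact (Finset.mem_filter.1 h').2.2.2 (Finset.mem_filter.1 h2').2.2.1
                  · exact (Finset.mem_filter.1 h').2.2.1 (Finset.mem_filter.1 h2').2.1
                · exact (Finset.mem_filter.1 h).2.2.1 (Finset.mem_filter.1 h2').2.1
              have hdegu : Xcl.card + Ycl.card + Zcl.card + XZcl.card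
                  ≤ (F.filter fun E => x ∈ E).card := by
                calc Xcl.card + Ycl.card + Zcl.card + XZcl.card
                    = (((Xcl ∪ Ycl) ∪ Zcl) ∪ XZcl).card := by
                      rw [Finset.card_union_of_disjoint dU3,
                        Finset.card_union_of_disjoint dU2Z,
                        Finset.card_union_of_disjoint dXY]
                  _ ≤ (F.filter fun E => u ∈ E).card := by
                      apply Finset.card_le_card
                      intro A hA
                      rcases Finset.mem_union.1 hA with h | h
                      · rcases Finset.mem_union.1 h with h' | h'
                        · rcases Finset.mem_union.1 h' with h'' | h''
                          · exact Finset.mem_filter.2 ⟨hXsub h'', hall1 A h''⟩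
                          · exact Finset.mem_filter.2 ⟨hYsub h'', hucom A h''⟩
                        · exact Finset.mem_filter.2 ⟨hZsub h', hall2 A h'⟩
                      · exact Finset.mem_filter.2 ⟨hXZsub h, hall3 A h⟩
                  _ ≤ _ := hdegmax u
              exact hfin _ (2*r+1) hDle (by linarith) (hbig _ hc21)
            · -- some set in an x-class misses u : Ycl is small
              have hexB : ∃ B₀ ∈ F, y ∉ B₀ ∧ u ∉ B₀ := by
                have h3 : ¬(∀ B ∈ Xcl, u ∈ B) ∨ ¬(∀ B ∈ Zcl, u ∈ B) ∨
                    ¬(∀ B ∈ XZcl, u ∈ B) := by tauto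
                rcases h3 with h | h | h
                · push_neg at h
                  obtain ⟨B₀, hB₀, huB₀⟩ := h
                  exact ⟨B₀, hXsub hB₀, (Finset.mem_filter.1 hB₀).2.2.1, huB₀⟩
                · push_neg at h
                  obtain ⟨B₀, hB₀, huB₀⟩ := h
                  exact ⟨B₀, hZsub hB₀, (Finset.mem_filter.1 hB₀).2.2.2, huB₀⟩
                · push_neg at h
                  obtain ⟨B₀, hB₀, huB₀⟩ := h
                  exact ⟨B₀, hXZsub hB₀, (Finset.mem_filter.1 hB₀).2.2.2, huB₀⟩
              obtain ⟨B₀, hB₀F, hyB₀, huB₀⟩ := hexB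
              have S_y : Ycl.card ≤ r * (n-3).choose (r-3) :=
                hcover3 Ycl hYsub y u huy.symm
                  (fun A hA => ⟨(Finset.mem_filter.1 hA).2.1, hucom A hA⟩)
                  B₀ hB₀F hyB₀ huB₀
              by_cases hall2 : (∀ B ∈ Xcl, v ∈ B) ∧ (∀ B ∈ Ycl, v ∈ B) ∧ (∀ B ∈ XYcl, v ∈ B)
              · obtain ⟨hall1', hall2', hall3'⟩ := hall2
                have dU3' : Disjoint ((Xcl ∪ Ycl) ∪ Zcl) XYcl := by
                  rw [Finset.disjoint_left]
                  intro A h1' h2'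
                  rcases Finset.mem_union.1 h1' with h | h
                  · rcases Finset.mem_union.1 h with h' | h'
                    · exact (Finset.mem_filter.1 h').2.2.1 (Finset.mem_filter.1 h2').2.2.1
                    · exact (Finset.mem_filter.1 h').2.2.1 (Finset.mem_filter.1 h2').2.1
                  · exact (Finset.mem_filter.1 h).2.2.1 (Finset.mem_filter.1 h2').2.1
                have hdegv : Xcl.card + Ycl.card + Zcl.card + XYcl.card
                    ≤ (F.filter fun E => x ∈ E).card := by
                  calc Xcl.card + Ycl.card + Zcl.card + XYcl.card
                      = (((Xcl ∪ Ycl) ∪ Zcl) ∪ XYcl).card := by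
                        rw [Finset.card_union_of_disjoint dU3',
                          Finset.card_union_of_disjoint dU2Z,
                          Finset.card_union_of_disjoint dXY]
                    _ ≤ (F.filter fun E => v ∈ E).card := by
                        apply Finset.card_le_card
                        intro A hA
                        rcases Finset.mem_union.1 hA with h | h
                        · rcases Finset.mem_union.1 h with h' | h'
                          · rcases Finset.mem_union.1 h' with h'' | h''
                            · exact Finset.mem_filter.2 ⟨hXsub h'', hall1' A h''⟩
                            · exact Finset.mem_filter.2 ⟨hYsub h'', hall2' A h''⟩
                          · exact Finset.mem_filter.2 ⟨hZsub h', hvcom A h'⟩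
                        · exact Finset.mem_filter.2 ⟨hXYsub h, hall3' A h⟩
                    _ ≤ _ := hdegmax v
                exact hfin _ (2*r+1) hDle (by linarith) (hbig _ hc21)
              · have hexB' : ∃ B₁ ∈ F, z ∉ B₁ ∧ v ∉ B₁ := by
                  have h3 : ¬(∀ B ∈ Xcl, v ∈ B) ∨ ¬(∀ B ∈ Ycl, v ∈ B) ∨
                      ¬(∀ B ∈ XYcl, v ∈ B) := by tauto
                  rcases h3 with h | h | h
                  · push_neg at h
                    obtain ⟨B₁, hB₁, hvB₁⟩ := h
                    exact ⟨B₁, hXsub hB₁, (Finset.mem_filter.1 hB₁).2.2.2, hvB₁⟩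
                  · push_neg at h
                    obtain ⟨B₁, hB₁, hvB₁⟩ := h
                    exact ⟨B₁, hYsub hB₁, (Finset.mem_filter.1 hB₁).2.2.2, hvB₁⟩
                  · push_neg at h
                    obtain ⟨B₁, hB₁, hvB₁⟩ := h
                    exact ⟨B₁, hXYsub hB₁, (Finset.mem_filter.1 hB₁).2.2.2, hvB₁⟩
                obtain ⟨B₁, hB₁F, hzB₁, hvB₁⟩ := hexB'
                have S_z : Zcl.card ≤ r * (n-3).choose (r-3) :=
                  hcover3 Zcl hZsub z v hvz.symm
                    (fun A hA => ⟨(Finset.mem_filter.1 hA).2.1, hvcom A hA⟩)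
                    B₁ hB₁F hzB₁ hvB₁
                exact hfin _ (3*r) hDle (by linarith) (hbig _ hc33)
          · -- Zcl has no common element outside {x,y,z}
            push_neg at hcv
            have dY := Aux11.dich hF Zcl Ycl hYsub ⟨Bz, hBz_mem⟩ {x, y, z} y (by simp)
              (fun A hA => le_of_eq (hmem A (hZsub hA)).2)
              (fun B hB => (Finset.mem_filter.1 hB).2.1)
              (fun B hB A hA => hmk B A (hYsub hB) (hZsub hA)
                (Or.inl (Finset.mem_filter.1 hA).2.2.1)
                (Or.inl (Finset.mem_filter.1 hA).2.2.2)
                (Or.inr (Finset.mem_filter.1 hB).2.2.2))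
              hcv
            have dX := Aux11.dich hF Zcl Xcl hXsub ⟨Bz, hBz_mem⟩ {x, y, z} x (by simp)
              (fun A hA => le_of_eq (hmem A (hZsub hA)).2)
              (fun B hB => (Finset.mem_filter.1 hB).2.1)
              (fun B hB A hA => hmk B A (hXsub hB) (hZsub hA)
                (Or.inl (Finset.mem_filter.1 hA).2.2.1)
                (Or.inl (Finset.mem_filter.1 hA).2.2.2)
                (Or.inr (Finset.mem_filter.1 hB).2.2.2))
              hcv
            have dXY2 := Aux11.dich hF Zcl XYcl hXYsub ⟨Bz, hBz_mem⟩ {x, y, z} x (by simp)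
              (fun A hA => le_of_eq (hmem A (hZsub hA)).2)
              (fun B hB => (Finset.mem_filter.1 hB).2.1)
              (fun B hB A hA => hmk B A (hXYsub hB) (hZsub hA)
                (Or.inl (Finset.mem_filter.1 hA).2.2.1)
                (Or.inl (Finset.mem_filter.1 hA).2.2.2)
                (Or.inr (Finset.mem_filter.1 hB).2.2.2))
              hcv
            have hcomb : Ycl.card + YZcl.card + Zcl.card
                ≤ 3*r^2 * (n-3).choose (r-3) := by
              have e1 : r * (r * (n-3).choose (r-3)) = r^2 * (n-3).choose (r-3) := by ring
              rw [e1] at dY dX dXY2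
              linarith
            exact hfin _ (3*r^2) hDle hcomb (hbig _ hc32)
        · -- Ycl has no common element outside {x,y,z}
          push_neg at hcu
          have dZ := Aux11.dich hF Ycl Zcl hZsub ⟨By, hBy_mem⟩ {x, y, z} z (by simp)
            (fun A hA => le_of_eq (hmem A (hYsub hA)).2)
            (fun B hB => (Finset.mem_filter.1 hB).2.1)
            (fun B hB A hA => hmk B A (hZsub hB) (hYsub hA)
              (Or.inl (Finset.mem_filter.1 hA).2.2.1)
              (Or.inr (Finset.mem_filter.1 hB).2.2.2)
              (Or.inl (Finset.mem_filter.1 hA).2.2.2))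
            hcu
          have dX := Aux11.dich hF Ycl Xcl hXsub ⟨By, hBy_mem⟩ {x, y, z} x (by simp)
            (fun A hA => le_of_eq (hmem A (hYsub hA)).2)
            (fun B hB => (Finset.mem_filter.1 hB).2.1)
            (fun B hB A hA => hmk B A (hXsub hB) (hYsub hA)
              (Or.inl (Finset.mem_filter.1 hA).2.2.1)
              (Or.inr (Finset.mem_filter.1 hB).2.2.1)
              (Or.inl (Finset.mem_filter.1 hA).2.2.2))
            hcu
          have dXZ2 := Aux11.dich hF Ycl XZcl hXZsub ⟨By, hBy_mem⟩ {x, y, z} x (by simp)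
            (fun A hA => le_of_eq (hmem A (hYsub hA)).2)
            (fun B hB => (Finset.mem_filter.1 hB).2.1)
            (fun B hB A hA => hmk B A (hXZsub hB) (hYsub hA)
              (Or.inl (Finset.mem_filter.1 hA).2.2.1)
              (Or.inr (Finset.mem_filter.1 hB).2.2.2)
              (Or.inl (Finset.mem_filter.1 hA).2.2.2))
            hcu
          have hcomb : Ycl.card + YZcl.card + Zcl.card
              ≤ 3*r^2 * (n-3).choose (r-3) := by
            have e1 : r * (r * (n-3).choose (r-3)) = r^2 * (n-3).choose (r-3) := by ring
            rw [e1] at dZ dX dXZ2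
            linarith
          exact hfin _ (3*r^2) hDle hcomb (hbig _ hc32)

    · -- τ(D) ≥ 3
      push_neg at h2
      have hb := Aux11.tau3_bound hF D hDF (fun A hA => le_of_eq (hmem A (hDF hA)).2)
        (fun A hA B hB => by
          obtain ⟨t, ht⟩ := hInt A (hDF hA) B (hDF hB)
          exact ⟨t, Finset.mem_inter.1 ht |>.1, Finset.mem_inter.1 ht |>.2⟩)
        (fun y z => by
          obtain ⟨B, hB, hyz⟩ := h2 y z
          exact ⟨B, hB, hyz⟩)
      refine hsmall _ hb (hM8 _ ?_)
      calc r * (r * (r * (n-3).choose (r-3))) = r^3 * (n-3).choose (r-3) := by ring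
        _ ≤ 8*r^3 * (n-3).choose (r-3) :=
            Nat.mul_le_mul_right _ (Nat.le_mul_of_pos_left _ (by norm_num))
end

section
/- Fix r ≥ 3 and let q < r be a positive integer with C ≥ (q² + q + 1)/(q + 1). Then every intersecting family F ⊆ binom([n], r) satisfies d_C(F) ≤ r^{r+1}·binom(n - q - 1, r - q - 1) (in particular d_C(F) = O(n^{r-q-1})). -/
open Finset

lemma filter_card_le_maxDeg (F : Finset (Finset ℕ)) (x : ℕ) :
    (F.filter fun E => x ∈ E).card ≤
      (F.biUnion id).sup fun y => (F.filter fun E => y ∈ E).card := by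
  classical
  rcases (F.filter fun E => x ∈ E).eq_empty_or_nonempty with h | h
  · simp [h]
  · obtain ⟨A, hA⟩ := h
    simp only [mem_filter] at hA
    exact le_sup (f := fun y => (F.filter fun E => y ∈ E).card)
      (mem_biUnion.2 ⟨A, hA.1, hA.2⟩)

lemma aux_bound (r q n : ℕ) (F0 : Finset (Finset ℕ))
    (hF0 : F0 ⊆ (Finset.range n).powersetCard r)
    (hint : ∀ A ∈ F0, ∀ B ∈ F0, (A ∩ B).Nonempty)
    (H : ∀ T : Finset ℕ, T.card ≤ q → ∃ B ∈ F0, B ∩ T = ∅) :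
    ∀ k (S : Finset ℕ), S.card + k = q + 1 →
      (F0.filter fun A => S ⊆ A).card ≤ r ^ k * Nat.choose (n - (q+1)) (r - (q+1)) := by
  classical
  intro k
  induction k with
  | zero =>
    intro S hS
    simp only [Nat.add_zero] at hS
    rcases (F0.filter fun A => S ⊆ A).eq_empty_or_nonempty with h | ⟨A0, hA0⟩
    · simp [h]
    · simp only [mem_filter] at hA0
      have hA0r := hF0 hA0.1
      rw [mem_powersetCard] at hA0r
      have hSn : S ⊆ Finset.range n := hA0.2.trans hA0r.1
      have hcard : ((Finset.range n) \ S).card = n - (q+1) := by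
        rw [card_sdiff_of_subset hSn, card_range, hS]
      calc (F0.filter fun A => S ⊆ A).card
          ≤ (((Finset.range n) \ S).powersetCard (r - (q+1))).card := by
            apply Finset.card_le_card_of_injOn (fun A => A \ S)
            · intro A hA
              simp only [mem_coe, mem_filter] at hA
              have hAr := hF0 hA.1
              rw [mem_powersetCard] at hAr
              simp only [mem_coe, mem_powersetCard]
              constructor
              · exact sdiff_subset_sdiff hAr.1 le_rfl
              · rw [card_sdiff_of_subset hA.2, hAr.2, hS]
            · intro A hA B hB hAB
              simp only [coe_filter, Set.mem_setOf_eq] at hA hB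
              have : A \ S ∪ S = B \ S ∪ S := congrArg (fun t => t ∪ S) hAB
              rwa [sdiff_union_of_subset hA.2, sdiff_union_of_subset hB.2] at this
        _ = r ^ 0 * Nat.choose (n - (q+1)) (r - (q+1)) := by
            rw [card_powersetCard, hcard]; ring
  | succ k ih =>
    intro S hS
    have hSq : S.card ≤ q := by omega
    obtain ⟨B, hB, hBS⟩ := H S hSq
    have hBr := hF0 hB
    rw [mem_powersetCard] at hBr
    have hsub : (F0.filter fun A => S ⊆ A) ⊆
        B.biUnion fun x => F0.filter fun A => insert x S ⊆ A := by
      intro A hA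
      simp only [mem_filter] at hA
      obtain ⟨x, hx⟩ := hint A hA.1 B hB
      rw [mem_inter] at hx
      exact mem_biUnion.2 ⟨x, hx.2, mem_filter.2 ⟨hA.1, insert_subset hx.1 hA.2⟩⟩
    calc (F0.filter fun A => S ⊆ A).card
        ≤ ∑ x ∈ B, (F0.filter fun A => insert x S ⊆ A).card :=
          (card_le_card hsub).trans card_biUnion_le
      _ ≤ ∑ _x ∈ B, r ^ k * Nat.choose (n - (q+1)) (r - (q+1)) := by
          apply Finset.sum_le_sum
          intro x hx
          apply ih
          have hxS : x ∉ S := by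
            intro hxs
            have : x ∈ B ∩ S := mem_inter.2 ⟨hx, hxs⟩
            rw [hBS] at this
            exact absurd this (notMem_empty x)
          rw [card_insert_of_notMem hxS]; omega
      _ = B.card * (r ^ k * Nat.choose (n - (q+1)) (r - (q+1))) := by
          rw [sum_const, smul_eq_mul]
      _ = r ^ (k+1) * Nat.choose (n - (q+1)) (r - (q+1)) := by
          rw [hBr.2]; ring

theorem stmt14 (r q : ℕ) (hr : 3 ≤ r) (hq : 1 ≤ q) (hqr : q < r) (C : ℝ)
    (hC : ((q : ℝ) ^ 2 + q + 1) / (q + 1) ≤ C) :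
    ∀ n : ℕ, ∀ F ⊆ (Finset.range n).powersetCard r, FamIntersecting F →
      (F.card : ℝ) - C * maxDeg F
        ≤ (r : ℝ) ^ (r + 1) * Nat.choose (n - q - 1) (r - q - 1) := by
  classical
  intro n F hF hint
  have hqC : (q : ℝ) ≤ C := by
    refine le_trans ?_ hC
    rw [le_div_iff₀ (by positivity)]
    nlinarith [sq_nonneg (q : ℝ)]
  have hC0 : (0 : ℝ) ≤ C := le_trans (by positivity) hqC
  by_cases hT : ∃ T : Finset ℕ, T.card ≤ q ∧ ∀ A ∈ F, (A ∩ T).Nonempty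
  · -- small transversal : LHS ≤ 0
    obtain ⟨T, hTq, hTrans⟩ := hT
    have hsub : F ⊆ T.biUnion fun x => F.filter fun E => x ∈ E := by
      intro A hA
      obtain ⟨x, hx⟩ := hTrans A hA
      rw [mem_inter] at hx
      exact mem_biUnion.2 ⟨x, hx.2, mem_filter.2 ⟨hA, hx.1⟩⟩
    have h1 : F.card ≤ q * maxDeg F := by
      calc F.card ≤ ∑ x ∈ T, (F.filter fun E => x ∈ E).card :=
            (card_le_card hsub).trans card_biUnion_le
        _ ≤ ∑ _x ∈ T, maxDeg F :=
            Finset.sum_le_sum fun x _ => filter_card_le_maxDeg F x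
        _ = T.card * maxDeg F := by rw [sum_const, smul_eq_mul]
        _ ≤ q * maxDeg F := Nat.mul_le_mul_right _ hTq
    have h1' : (F.card : ℝ) ≤ (q : ℝ) * maxDeg F := by exact_mod_cast h1
    have h2 : (q : ℝ) * maxDeg F ≤ C * maxDeg F :=
      mul_le_mul_of_nonneg_right hqC (Nat.cast_nonneg _)
    have h3 : (0 : ℝ) ≤ (r : ℝ) ^ (r + 1) * Nat.choose (n - q - 1) (r - q - 1) := by
      positivity
    linarith
  · -- no small transversal : F itself is small
    push_neg at hT
    have H : ∀ T : Finset ℕ, T.card ≤ q → ∃ B ∈ F, B ∩ T = ∅ := by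
      intro T hTq
      obtain ⟨B, hB, hB2⟩ := hT T hTq
      exact ⟨B, hB, hB2⟩
    have key := aux_bound r q n F hF hint H (q + 1) ∅ (by simp)
    rw [Finset.filter_true_of_mem (fun A _ => empty_subset A)] at key
    have key2 : F.card ≤ r ^ (r + 1) * Nat.choose (n - (q+1)) (r - (q+1)) :=
      key.trans (Nat.mul_le_mul_right _ (Nat.pow_le_pow_right (by omega) (by omega)))
    have hnn : n - (q + 1) = n - q - 1 := (Nat.sub_sub n q 1).symm
    have hrr : r - (q + 1) = r - q - 1 := (Nat.sub_sub r q 1).symm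
    rw [hnn, hrr] at key2
    have key3 : (F.card : ℝ) ≤ (r : ℝ) ^ (r + 1) * Nat.choose (n - q - 1) (r - q - 1) := by
      exact_mod_cast key2
    have h4 : (0 : ℝ) ≤ C * maxDeg F := mul_nonneg hC0 (Nat.cast_nonneg _)
    linarith
end
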